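/- arXiv:1209.6006 — 2 statements merged into one kernel-verified Lean document; each statement's English description precedes it below -/
import Mathlib

section
/- Let k ≥ 4. The number of pairs (α^(1), α^(2)) of vectors in F_2^{k+1} such that the associated 2-fold persymmetric 4×k matrix has rank 4 equals 2^{2k+2} − 3·2^{k+4} + 128 = 2^2·(2^k − 2^3)(2^k − 2^2). -/
/-- The `n`-fold persymmetric `2n × k` matrix over `F₂` associated to an `n`-tuple
`α` of vectors in `F₂^{k+1}`: its `(2l-1)`-th row (1-indexed) is
`(α^(l)_1, …, α^(l)_k)` and its `(2l)`-th row is `(α^(l)_2, …, α^(l)_{k+1})`. -/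
def persymMatrix (n k : ℕ) (α : Fin n → (Fin (k + 1) → ZMod 2)) :
    Matrix (Fin (2 * n)) (Fin k) (ZMod 2) :=
  Matrix.of fun r j =>
    α ⟨r.val / 2, by have := r.isLt; omega⟩ ⟨j.val + r.val % 2, by have := j.isLt; omega⟩

/-- `Gamma n k i` is the number of `n`-tuples `α ∈ (F₂^{k+1})^n` whose associated
`n`-fold persymmetric `2n × k` matrix has rank `i`. -/
noncomputable def Gamma (n k i : ℕ) : ℕ :=
  Nat.card {α : Fin n → (Fin (k + 1) → ZMod 2) // (persymMatrix n k α).rank = i}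

open Finset

namespace PS
variable {k : ℕ}

abbrev Vk (k : ℕ) := Fin (k + 1) → ZMod 2

def ev (a : Vk k) (j : ℕ) : ZMod 2 := if h : j < k + 1 then a ⟨j, h⟩ else 0

lemma ev_lt (a : Vk k) {j : ℕ} (h : j < k + 1) : ev a j = a ⟨j, h⟩ := dif_pos h

lemma ev_ext {a b : Vk k} (h : ∀ j < k + 1, ev a j = ev b j) : a = b := by
  funext i
  have := h i.val i.isLt
  rwa [ev_lt a i.isLt, ev_lt b i.isLt] at this

def mk (k : ℕ) (f : ℕ → ZMod 2) : Vk k := fun i => f i.val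

lemma ev_mk (f : ℕ → ZMod 2) {j : ℕ} (h : j < k + 1) : ev (mk k f) j = f j := by
  rw [ev_lt _ h]; rfl

def GA (a : Vk k) : Prop :=
  ∀ c₁ c₂ : ZMod 2, (∀ j < k, c₁ * ev a j + c₂ * ev a (j + 1) = 0) → c₁ = 0 ∧ c₂ = 0

instance (a : Vk k) : Decidable (GA a) := by unfold GA; infer_instance

def P1 (a b : Vk k) : Prop := ∃ c₁ c₂ : ZMod 2, ∀ j < k, ev b j = c₁ * ev a j + c₂ * ev a (j + 1)
def P2 (a b : Vk k) : Prop :=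
  ∃ c₁ c₂ : ZMod 2, ∀ j < k, ev b (j + 1) = c₁ * ev a j + c₂ * ev a (j + 1)
def P3 (a b : Vk k) : Prop :=
  ∃ c₁ c₂ : ZMod 2, ∀ j < k, ev b j + ev b (j + 1) = c₁ * ev a j + c₂ * ev a (j + 1)

instance (a b : Vk k) : Decidable (P1 a b) := by unfold P1; infer_instance
instance (a b : Vk k) : Decidable (P2 a b) := by unfold P2; infer_instance
instance (a b : Vk k) : Decidable (P3 a b) := by unfold P3; infer_instance

def Sat (a : Vk k) (p q r : ZMod 2) : Prop :=
  ∀ j < k - 1, p * ev a j + q * ev a (j + 1) + r * ev a (j + 2) = 0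

instance (a : Vk k) (p q r : ZMod 2) : Decidable (Sat a p q r) := by unfold Sat; infer_instance

lemma zmod2_cases (x : ZMod 2) : x = 0 ∨ x = 1 := by revert x; decide

lemma zmod2_eq_of_add_eq_zero {x y : ZMod 2} (h : x + y = 0) : x = y := by
  revert x y; decide

lemma card_Vk : Fintype.card (Vk k) = 2 ^ (k + 1) := by
  simp [Fintype.card_fun]

/-- uniqueness of representations in the plane spanned by the two rows of `a` -/
lemma GA_unique {a : Vk k} (ha : GA a) {c₁ c₂ d₁ d₂ : ZMod 2}
    (h : ∀ j < k, c₁ * ev a j + c₂ * ev a (j + 1) = d₁ * ev a j + d₂ * ev a (j + 1)) :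
    c₁ = d₁ ∧ c₂ = d₂ := by
  have key : ∀ x y c₁ c₂ d₁ d₂ : ZMod 2,
      c₁ * x + c₂ * y = d₁ * x + d₂ * y → (c₁ + d₁) * x + (c₂ + d₂) * y = 0 := by decide
  obtain ⟨h1, h2⟩ := ha (c₁ + d₁) (c₂ + d₂) fun j hj => key _ _ _ _ _ _ (h j hj)
  exact ⟨zmod2_eq_of_add_eq_zero h1, zmod2_eq_of_add_eq_zero h2⟩

/-! ### cardinality of the three "bad b" sets -/

def cons1 (a : Vk k) (c₁ c₂ z : ZMod 2) : Vk k :=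
  mk k fun j => if j < k then c₁ * ev a j + c₂ * ev a (j + 1) else z

lemma ev_cons1_lt (a : Vk k) (c₁ c₂ z : ZMod 2) {j : ℕ} (h : j < k) :
    ev (cons1 a c₁ c₂ z) j = c₁ * ev a j + c₂ * ev a (j + 1) := by
  rw [cons1, ev_mk _ (by omega), if_pos h]

lemma ev_cons1_last (a : Vk k) (c₁ c₂ z : ZMod 2) :
    ev (cons1 a c₁ c₂ z) k = z := by
  rw [cons1, ev_mk _ (by omega), if_neg (by omega)]

lemma cardP1 {a : Vk k} (ha : GA a) : (univ.filter (fun b => P1 a b)).card = 8 := by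
  have hbij : ((univ : Finset ((ZMod 2 × ZMod 2) × ZMod 2))).card
      = (univ.filter (fun b => P1 a b)).card := by
    apply Finset.card_bij (fun x _ => cons1 a x.1.1 x.1.2 x.2)
    · intro x _
      simp only [mem_filter, mem_univ, true_and]
      exact ⟨x.1.1, x.1.2, fun j hj => ev_cons1_lt a _ _ _ hj⟩
    · intro x _ y _ hxy
      have hz : x.2 = y.2 := by
        have := congrArg (fun v => ev v k) hxy
        simpa [ev_cons1_last] using this
      have hc := GA_unique ha (c₁ := x.1.1) (c₂ := x.1.2) (d₁ := y.1.1) (d₂ := y.1.2)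
        (fun j hj => by
          have := congrArg (fun v => ev v j) hxy
          simpa [ev_cons1_lt a _ _ _ hj] using this)
      exact Prod.ext (Prod.ext hc.1 hc.2) hz
    · intro b hb
      simp only [mem_filter, mem_univ, true_and] at hb
      obtain ⟨c₁, c₂, hc⟩ := hb
      refine ⟨((c₁, c₂), ev b k), mem_univ _, ?_⟩
      apply ev_ext
      intro j hj
      rcases Nat.lt_or_ge j k with h | h
      · rw [ev_cons1_lt a _ _ _ h, hc j h]
      · have : j = k := by omega
        rw [this, ev_cons1_last]
  rw [← hbij]
  simp [Finset.card_univ]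

def cons2 (a : Vk k) (c₁ c₂ z : ZMod 2) : Vk k :=
  mk k fun j => if j = 0 then z else c₁ * ev a (j - 1) + c₂ * ev a j

lemma ev_cons2_succ (a : Vk k) (c₁ c₂ z : ZMod 2) {j : ℕ} (h : j < k) :
    ev (cons2 a c₁ c₂ z) (j + 1) = c₁ * ev a j + c₂ * ev a (j + 1) := by
  rw [cons2, ev_mk _ (by omega), if_neg (by omega)]
  simp

lemma ev_cons2_zero (a : Vk k) (c₁ c₂ z : ZMod 2) :
    ev (cons2 a c₁ c₂ z) 0 = z := by
  rw [cons2, ev_mk _ (by omega), if_pos rfl]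

lemma cardP2 {a : Vk k} (ha : GA a) : (univ.filter (fun b => P2 a b)).card = 8 := by
  have hbij : ((univ : Finset ((ZMod 2 × ZMod 2) × ZMod 2))).card
      = (univ.filter (fun b => P2 a b)).card := by
    apply Finset.card_bij (fun x _ => cons2 a x.1.1 x.1.2 x.2)
    · intro x _
      simp only [mem_filter, mem_univ, true_and]
      exact ⟨x.1.1, x.1.2, fun j hj => ev_cons2_succ a _ _ _ hj⟩
    · intro x _ y _ hxy
      have hz : x.2 = y.2 := by
        have := congrArg (fun v => ev v 0) hxy
        simpa [ev_cons2_zero] using this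
      have hc := GA_unique ha (c₁ := x.1.1) (c₂ := x.1.2) (d₁ := y.1.1) (d₂ := y.1.2)
        (fun j hj => by
          have := congrArg (fun v => ev v (j + 1)) hxy
          simpa [ev_cons2_succ a _ _ _ hj] using this)
      exact Prod.ext (Prod.ext hc.1 hc.2) hz
    · intro b hb
      simp only [mem_filter, mem_univ, true_and] at hb
      obtain ⟨c₁, c₂, hc⟩ := hb
      refine ⟨((c₁, c₂), ev b 0), mem_univ _, ?_⟩
      apply ev_ext
      intro j hj
      match j with
      | 0 => rw [ev_cons2_zero]
      | (i + 1) =>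
        have hi : i < k := by omega
        rw [ev_cons2_succ a _ _ _ hi, hc i hi]
  rw [← hbij]
  simp [Finset.card_univ]

def cons3 (a : Vk k) (c₁ c₂ z : ZMod 2) : Vk k :=
  mk k fun j => z + ∑ l ∈ Finset.range j, (c₁ * ev a l + c₂ * ev a (l + 1))

lemma ev_cons3_zero (a : Vk k) (c₁ c₂ z : ZMod 2) : ev (cons3 a c₁ c₂ z) 0 = z := by
  rw [cons3, ev_mk _ (by omega)]
  simp

lemma ev_cons3_succ (a : Vk k) (c₁ c₂ z : ZMod 2) {j : ℕ} (h : j < k) :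
    ev (cons3 a c₁ c₂ z) (j + 1)
      = ev (cons3 a c₁ c₂ z) j + (c₁ * ev a j + c₂ * ev a (j + 1)) := by
  rw [cons3, ev_mk _ (by omega), ev_mk _ (by omega), Finset.sum_range_succ]
  ring

lemma zmod2_cancel : ∀ x y : ZMod 2, x + (x + y) = y := by decide

lemma zmod2_move : ∀ x y t : ZMod 2, x + y = t → y = x + t := by decide

lemma ev_cons3_rel (a : Vk k) (c₁ c₂ z : ZMod 2) {j : ℕ} (h : j < k) :
    ev (cons3 a c₁ c₂ z) j + ev (cons3 a c₁ c₂ z) (j + 1)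
      = c₁ * ev a j + c₂ * ev a (j + 1) := by
  rw [ev_cons3_succ a _ _ _ h, zmod2_cancel]

lemma cardP3 {a : Vk k} (ha : GA a) : (univ.filter (fun b => P3 a b)).card = 8 := by
  have hbij : ((univ : Finset ((ZMod 2 × ZMod 2) × ZMod 2))).card
      = (univ.filter (fun b => P3 a b)).card := by
    apply Finset.card_bij (fun x _ => cons3 a x.1.1 x.1.2 x.2)
    · intro x _
      simp only [mem_filter, mem_univ, true_and]
      exact ⟨x.1.1, x.1.2, fun j hj => ev_cons3_rel a _ _ _ hj⟩
    · intro x _ y _ hxy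
      have hz : x.2 = y.2 := by
        have := congrArg (fun v => ev v 0) hxy
        simpa [ev_cons3_zero] using this
      have hc := GA_unique ha (c₁ := x.1.1) (c₂ := x.1.2) (d₁ := y.1.1) (d₂ := y.1.2)
        (fun j hj => by
          have := congrArg (fun v => ev v j + ev v (j + 1)) hxy
          simpa [ev_cons3_rel a _ _ _ hj] using this)
      exact Prod.ext (Prod.ext hc.1 hc.2) hz
    · intro b hb
      simp only [mem_filter, mem_univ, true_and] at hb
      obtain ⟨c₁, c₂, hc⟩ := hb
      refine ⟨((c₁, c₂), ev b 0), mem_univ _, ?_⟩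
      apply ev_ext
      have key : ∀ j < k + 1, ev (cons3 a c₁ c₂ (ev b 0)) j = ev b j := by
        intro j
        induction j with
        | zero => intro _; rw [ev_cons3_zero]
        | succ i ih =>
          intro hik
          have hi : i < k := by omega
          rw [ev_cons3_succ a _ _ _ hi, ih (by omega),
            zmod2_move _ _ _ (hc i hi)]
      exact key
  rw [← hbij]
  simp [Finset.card_univ]


/-! ### the intersection count -/

def consT (a : Vk k) (p q r c₁ : ZMod 2) : Vk k :=
  mk k fun j => if j < k then c₁ * ev a j + r * ev a (j + 1)
    else p * ev a (k - 1) + (q + c₁) * ev a k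

lemma ev_consT_lt (a : Vk k) (p q r c₁ : ZMod 2) {j : ℕ} (h : j < k) :
    ev (consT a p q r c₁) j = c₁ * ev a j + r * ev a (j + 1) := by
  rw [consT, ev_mk _ (by omega), if_pos h]

lemma ev_consT_last (a : Vk k) (p q r c₁ : ZMod 2) :
    ev (consT a p q r c₁) k = p * ev a (k - 1) + (q + c₁) * ev a k := by
  rw [consT, ev_mk _ (by omega), if_neg (by omega)]

lemma consT_row2 (hk : 4 ≤ k) {a : Vk k} {p q r : ZMod 2} (hs : Sat a p q r) (c₁ : ZMod 2) :
    ∀ j < k, ev (consT a p q r c₁) (j + 1) = p * ev a j + (q + c₁) * ev a (j + 1) := by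
  have key : ∀ p q r c₁ x y z : ZMod 2, p * x + q * y + r * z = 0 →
      c₁ * y + r * z = p * x + (q + c₁) * y := by decide
  intro j hj
  rcases Nat.lt_or_ge (j + 1) k with h | h
  · rw [ev_consT_lt a _ _ _ _ h]
    exact key _ _ _ _ _ _ _ (hs j (by omega))
  · have hjk : j = k - 1 := by omega
    subst hjk
    have hk1 : k - 1 + 1 = k := by omega
    rw [hk1, ev_consT_last]

def sCount (a : Vk k) : ℕ :=
  (univ.filter fun σ : ZMod 2 × ZMod 2 × ZMod 2 => Sat a σ.1 σ.2.1 σ.2.2).card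

lemma cardT (hk : 4 ≤ k) {a : Vk k} (ha : GA a) :
    (univ.filter (fun b => P1 a b ∧ P2 a b)).card = 2 * sCount a := by
  have hbij : (((univ.filter fun σ : ZMod 2 × ZMod 2 × ZMod 2 => Sat a σ.1 σ.2.1 σ.2.2)
        ×ˢ (univ : Finset (ZMod 2))).card)
      = (univ.filter (fun b => P1 a b ∧ P2 a b)).card := by
    apply Finset.card_bij (fun x _ => consT a x.1.1 x.1.2.1 x.1.2.2 x.2)
    · intro x hx
      simp only [Finset.mem_product, mem_filter, mem_univ, true_and, and_true] at hx ⊢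
      constructor
      · exact ⟨x.2, x.1.2.2, fun j hj => ev_consT_lt a _ _ _ _ hj⟩
      · exact ⟨x.1.1, x.1.2.1 + x.2, consT_row2 hk hx x.2⟩
    · intro x hx y hy hxy
      simp only [Finset.mem_product, mem_filter, mem_univ, true_and, and_true] at hx hy
      have h1 := GA_unique ha (c₁ := x.2) (c₂ := x.1.2.2) (d₁ := y.2) (d₂ := y.1.2.2)
        (fun j hj => by
          have := congrArg (fun v => ev v j) hxy
          simpa [ev_consT_lt a _ _ _ _ hj] using this)
      have h2 := GA_unique ha (c₁ := x.1.1) (c₂ := x.1.2.1 + x.2)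
        (d₁ := y.1.1) (d₂ := y.1.2.1 + y.2)
        (fun j hj => by
          have := congrArg (fun v => ev v (j + 1)) hxy
          rwa [consT_row2 hk hx x.2 j hj, consT_row2 hk hy y.2 j hj] at this)
      have hq : x.1.2.1 = y.1.2.1 := by
        have := h2.2
        rw [h1.1] at this
        exact add_right_cancel this
      obtain ⟨⟨xp, xq, xr⟩, xc⟩ := x
      obtain ⟨⟨yp, yq, yr⟩, yc⟩ := y
      simp_all
    · intro b hb
      simp only [mem_filter, mem_univ, true_and] at hb
      obtain ⟨⟨c₁, c₂, h1⟩, ⟨d₁, d₂, h2⟩⟩ := hb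
      have hsat : Sat a d₁ (d₂ + c₁) c₂ := by
        have key : ∀ d₁ d₂ c₁ c₂ x y z u : ZMod 2, u = d₁ * x + d₂ * y →
            u = c₁ * y + c₂ * z → d₁ * x + (d₂ + c₁) * y + c₂ * z = 0 := by decide
        intro j hj
        exact key _ _ _ _ _ _ _ _ (h2 j (by omega)) (h1 (j + 1) (by omega))
      refine ⟨((d₁, d₂ + c₁, c₂), c₁), ?_, ?_⟩
      · simp only [Finset.mem_product, mem_filter, mem_univ, true_and, and_true]
        exact hsat
      · apply ev_ext
        intro j hj
        rcases Nat.lt_or_ge j k with h | h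
        · rw [ev_consT_lt a _ _ _ _ h, h1 j h]
        · have hjk : j = k := by omega
          have hk1 : k - 1 + 1 = k := by omega
          have hd2 : d₂ + c₁ + c₁ = d₂ := by
            have : ∀ d₂ c₁ : ZMod 2, d₂ + c₁ + c₁ = d₂ := by decide
            exact this _ _
          have h2' := h2 (k - 1) (by omega)
          rw [hk1] at h2'
          rw [hjk, ev_consT_last, hd2, ← h2']
  rw [← hbij, Finset.card_product, sCount]
  simp [mul_comm]


/-! ### union and the per-`a` count -/

lemma P1_P2_imp_P3 {a b : Vk k} (h1 : P1 a b) (h2 : P2 a b) : P3 a b := by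
  obtain ⟨c₁, c₂, hc⟩ := h1
  obtain ⟨d₁, d₂, hd⟩ := h2
  have key : ∀ c₁ c₂ d₁ d₂ x y u v : ZMod 2, u = c₁ * x + c₂ * y → v = d₁ * x + d₂ * y →
      u + v = (c₁ + d₁) * x + (c₂ + d₂) * y := by decide
  exact ⟨c₁ + d₁, c₂ + d₂, fun j hj => key _ _ _ _ _ _ _ _ (hc j hj) (hd j hj)⟩

lemma P1_P3_imp_P2 {a b : Vk k} (h1 : P1 a b) (h3 : P3 a b) : P2 a b := by
  obtain ⟨c₁, c₂, hc⟩ := h1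
  obtain ⟨d₁, d₂, hd⟩ := h3
  have key : ∀ c₁ c₂ d₁ d₂ x y u v : ZMod 2, u = c₁ * x + c₂ * y → u + v = d₁ * x + d₂ * y →
      v = (c₁ + d₁) * x + (c₂ + d₂) * y := by decide
  exact ⟨c₁ + d₁, c₂ + d₂, fun j hj => key _ _ _ _ _ _ _ _ (hc j hj) (hd j hj)⟩

lemma P2_P3_imp_P1 {a b : Vk k} (h2 : P2 a b) (h3 : P3 a b) : P1 a b := by
  obtain ⟨c₁, c₂, hc⟩ := h2
  obtain ⟨d₁, d₂, hd⟩ := h3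
  have key : ∀ c₁ c₂ d₁ d₂ x y u v : ZMod 2, v = c₁ * x + c₂ * y → u + v = d₁ * x + d₂ * y →
      u = (c₁ + d₁) * x + (c₂ + d₂) * y := by decide
  exact ⟨c₁ + d₁, c₂ + d₂, fun j hj => key _ _ _ _ _ _ _ _ (hc j hj) (hd j hj)⟩

def Q (a b : Vk k) : Prop :=
  ∀ c₁ c₂ c₃ c₄ : ZMod 2,
    (∀ j < k, c₁ * ev a j + c₂ * ev a (j + 1) + c₃ * ev b j + c₄ * ev b (j + 1) = 0) →
    c₁ = 0 ∧ c₂ = 0 ∧ c₃ = 0 ∧ c₄ = 0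

instance (a b : Vk k) : Decidable (Q a b) := by unfold Q; infer_instance

lemma notQ_iff {a b : Vk k} (ha : GA a) : ¬ Q a b ↔ (P1 a b ∨ P2 a b ∨ P3 a b) := by
  constructor
  · intro hQ
    simp only [Q, not_forall] at hQ
    obtain ⟨c₁, c₂, c₃, c₄, hrel, hne⟩ := hQ
    rcases zmod2_cases c₃ with h3 | h3 <;> rcases zmod2_cases c₄ with h4 | h4 <;>
        subst h3 <;> subst h4
    · exfalso
      have key : ∀ c₁ c₂ x y u v : ZMod 2,
          c₁ * x + c₂ * y + 0 * u + 0 * v = 0 → c₁ * x + c₂ * y = 0 := by decide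
      obtain ⟨e1, e2⟩ := ha c₁ c₂ fun j hj => key _ _ _ _ _ _ (hrel j hj)
      exact hne ⟨e1, e2, rfl, rfl⟩
    · refine Or.inr (Or.inl ⟨c₁, c₂, fun j hj => ?_⟩)
      have key : ∀ c₁ c₂ x y u v : ZMod 2,
          c₁ * x + c₂ * y + 0 * u + 1 * v = 0 → v = c₁ * x + c₂ * y := by decide
      exact key _ _ _ _ _ _ (hrel j hj)
    · refine Or.inl ⟨c₁, c₂, fun j hj => ?_⟩
      have key : ∀ c₁ c₂ x y u v : ZMod 2,
          c₁ * x + c₂ * y + 1 * u + 0 * v = 0 → u = c₁ * x + c₂ * y := by decide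
      exact key _ _ _ _ _ _ (hrel j hj)
    · refine Or.inr (Or.inr ⟨c₁, c₂, fun j hj => ?_⟩)
      have key : ∀ c₁ c₂ x y u v : ZMod 2,
          c₁ * x + c₂ * y + 1 * u + 1 * v = 0 → u + v = c₁ * x + c₂ * y := by decide
      exact key _ _ _ _ _ _ (hrel j hj)
  · intro h hQ
    have hone : (1 : ZMod 2) ≠ 0 := by decide
    rcases h with ⟨c₁, c₂, hc⟩ | ⟨c₁, c₂, hc⟩ | ⟨c₁, c₂, hc⟩
    · have key : ∀ c₁ c₂ x y u v : ZMod 2, u = c₁ * x + c₂ * y →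
          c₁ * x + c₂ * y + 1 * u + 0 * v = 0 := by decide
      exact hone (hQ c₁ c₂ 1 0 fun j hj => key _ _ _ _ _ _ (hc j hj)).2.2.1
    · have key : ∀ c₁ c₂ x y u v : ZMod 2, v = c₁ * x + c₂ * y →
          c₁ * x + c₂ * y + 0 * u + 1 * v = 0 := by decide
      exact hone (hQ c₁ c₂ 0 1 fun j hj => key _ _ _ _ _ _ (hc j hj)).2.2.2
    · have key : ∀ c₁ c₂ x y u v : ZMod 2, u + v = c₁ * x + c₂ * y →
          c₁ * x + c₂ * y + 1 * u + 1 * v = 0 := by decide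
      exact hone (hQ c₁ c₂ 1 1 fun j hj => key _ _ _ _ _ _ (hc j hj)).2.2.1

lemma count_b (hk : 4 ≤ k) {a : Vk k} (ha : GA a) :
    (univ.filter (fun b => Q a b)).card + 24 = 2 ^ (k + 1) + 4 * sCount a := by
  classical
  set F1 := univ.filter (fun b => P1 a b) with hF1
  set F2 := univ.filter (fun b => P2 a b) with hF2
  set F3 := univ.filter (fun b => P3 a b) with hF3
  have hunion : univ.filter (fun b => ¬ Q a b) = F1 ∪ F2 ∪ F3 := by
    ext b
    simp only [hF1, hF2, hF3, mem_union, mem_filter, mem_univ, true_and]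
    rw [notQ_iff ha, or_assoc]
  have hinter : (F1 ∪ F2) ∩ F3 = F1 ∩ F2 := by
    ext b
    simp only [hF1, hF2, hF3, mem_union, mem_inter, mem_filter, mem_univ, true_and]
    constructor
    · rintro ⟨h12, h3⟩
      rcases h12 with h1 | h2
      · exact ⟨h1, P1_P3_imp_P2 h1 h3⟩
      · exact ⟨P2_P3_imp_P1 h2 h3, h2⟩
    · rintro ⟨h1, h2⟩
      exact ⟨Or.inl h1, P1_P2_imp_P3 h1 h2⟩
  have h12 : (F1 ∪ F2).card + (F1 ∩ F2).card = F1.card + F2.card :=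
    Finset.card_union_add_card_inter _ _
  have h123 : (F1 ∪ F2 ∪ F3).card + ((F1 ∪ F2) ∩ F3).card = (F1 ∪ F2).card + F3.card :=
    Finset.card_union_add_card_inter _ _
  have hT : (F1 ∩ F2).card = 2 * sCount a := by
    rw [← cardT hk ha]
    congr 1
    ext b
    simp [hF1, hF2]
  have hc1 : F1.card = 8 := cardP1 ha
  have hc2 : F2.card = 8 := cardP2 ha
  have hc3 : F3.card = 8 := cardP3 ha
  have hsplit : (univ.filter (fun b => Q a b)).card
      + (univ.filter (fun b => ¬ Q a b)).card = 2 ^ (k + 1) := by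
    rw [Finset.card_filter_add_card_filter_not, ← card_Vk, Finset.card_univ]
  rw [hunion] at hsplit
  rw [hinter] at h123
  omega


/-! ### counting the good `a` -/

lemma ne_of_ev {a b : Vk k} (j : ℕ) (h : ev a j ≠ ev b j) : a ≠ b :=
  fun e => h (by rw [e])

def vzero (k : ℕ) : Vk k := mk k fun _ => 0
def ve0 (k : ℕ) : Vk k := mk k fun j => if j = 0 then 1 else 0
def veK (k : ℕ) : Vk k := mk k fun j => if j = k then 1 else 0
def vones (k : ℕ) : Vk k := mk k fun _ => 1

lemma ev_vzero (j : ℕ) (h : j < k + 1) : ev (vzero k) j = 0 := by rw [vzero, ev_mk _ h]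
lemma ev_ve0 (j : ℕ) (h : j < k + 1) : ev (ve0 k) j = if j = 0 then 1 else 0 := by
  rw [ve0, ev_mk _ h]
lemma ev_veK (j : ℕ) (h : j < k + 1) : ev (veK k) j = if j = k then 1 else 0 := by
  rw [veK, ev_mk _ h]
lemma ev_vones (j : ℕ) (h : j < k + 1) : ev (vones k) j = 1 := by rw [vones, ev_mk _ h]

lemma GA_of_witnesses {a : Vk k}
    (h1 : ∃ j, j < k ∧ ev a j ≠ 0) (h2 : ∃ j, j < k ∧ ev a (j + 1) ≠ 0)
    (h3 : ∃ j, j < k ∧ ev a j ≠ ev a (j + 1)) : GA a := by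
  intro c₁ c₂ hrel
  rcases zmod2_cases c₁ with e1 | e1 <;> rcases zmod2_cases c₂ with e2 | e2 <;>
    subst e1 <;> subst e2
  · exact ⟨rfl, rfl⟩
  · obtain ⟨j, hj, hne⟩ := h2
    exact absurd (by simpa using hrel j hj) hne
  · obtain ⟨j, hj, hne⟩ := h1
    exact absurd (by simpa using hrel j hj) hne
  · obtain ⟨j, hj, hne⟩ := h3
    have := hrel j hj
    simp only [one_mul] at this
    exact absurd (zmod2_eq_of_add_eq_zero this) hne

lemma eq_const_below {a : Vk k} {m : ℕ} (h : ∀ j < m, ev a j = ev a (j + 1)) :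
    ∀ i ≤ m, ev a i = ev a 0 := by
  intro i
  induction i with
  | zero => intro _; rfl
  | succ n ih =>
    intro hn
    rw [← h n (by omega), ih (by omega)]

lemma notGA_iff (hk : 4 ≤ k) (a : Vk k) :
    ¬ GA a ↔ (a = vzero k ∨ a = ve0 k ∨ a = veK k ∨ a = vones k) := by
  constructor
  · intro hGA
    simp only [GA, not_forall] at hGA
    obtain ⟨c₁, c₂, hrel, hne⟩ := hGA
    rcases zmod2_cases c₁ with e1 | e1 <;> rcases zmod2_cases c₂ with e2 | e2 <;>
      subst e1 <;> subst e2
    · exact absurd ⟨rfl, rfl⟩ hne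
    · -- row two of `a` vanishes : a = vzero or ve0
      have hz : ∀ j < k, ev a (j + 1) = 0 := by
        intro j hj; simpa using hrel j hj
      have hz' : ∀ j, 1 ≤ j → j < k + 1 → ev a j = 0 := by
        intro j h1 h2
        have := hz (j - 1) (by omega)
        rwa [Nat.sub_add_cancel h1] at this
      rcases zmod2_cases (ev a 0) with h0 | h0
      · refine Or.inl (ev_ext fun j hj => ?_)
        rw [vzero, ev_mk _ hj]
        rcases Nat.eq_zero_or_pos j with rfl | hp
        · exact h0
        · exact hz' j hp hj
      · refine Or.inr (Or.inl (ev_ext fun j hj => ?_))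
        rw [ve0, ev_mk _ hj]
        rcases Nat.eq_zero_or_pos j with rfl | hp
        · simpa using h0
        · rw [if_neg (by omega)]; exact hz' j hp hj
    · -- row one of `a` vanishes : a = vzero or veK
      have hz : ∀ j < k, ev a j = 0 := by
        intro j hj; simpa using hrel j hj
      rcases zmod2_cases (ev a k) with h0 | h0
      · refine Or.inl (ev_ext fun j hj => ?_)
        rw [vzero, ev_mk _ hj]
        rcases Nat.lt_or_ge j k with hp | hp
        · exact hz j hp
        · have : j = k := by omega
          rw [this]; exact h0
      · refine Or.inr (Or.inr (Or.inl (ev_ext fun j hj => ?_)))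
        rw [veK, ev_mk _ hj]
        rcases Nat.lt_or_ge j k with hp | hp
        · rw [if_neg (by omega)]; exact hz j hp
        · have : j = k := by omega
          rw [this, if_pos rfl]; exact h0
    · -- a is constant : a = vzero or vones
      have hcst : ∀ j < k, ev a j = ev a (j + 1) := by
        intro j hj
        have := hrel j hj
        simp only [one_mul] at this
        exact zmod2_eq_of_add_eq_zero this
      have hconst := eq_const_below hcst
      rcases zmod2_cases (ev a 0) with h0 | h0
      · refine Or.inl (ev_ext fun j hj => ?_)
        rw [vzero, ev_mk _ hj, hconst j (by omega), h0]
      · refine Or.inr (Or.inr (Or.inr (ev_ext fun j hj => ?_)))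
        rw [vones, ev_mk _ hj, hconst j (by omega), h0]
  · intro h hGA
    have hone : (1 : ZMod 2) ≠ 0 := by decide
    rcases h with rfl | rfl | rfl | rfl
    · exact hone (hGA 1 0 (fun j hj => by
        rw [ev_vzero j (by omega)]; simp)).1
    · refine hone (hGA 0 1 (fun j hj => ?_)).2
      rw [ev_ve0 (j + 1) (by omega), if_neg (by omega)]
      simp
    · refine hone (hGA 1 0 (fun j hj => ?_)).1
      rw [ev_veK j (by omega), if_neg (by omega)]
      simp
    · refine hone (hGA 1 1 (fun j hj => ?_)).1
      rw [ev_vones j (by omega), ev_vones (j + 1) (by omega)]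
      decide

lemma cardGA (hk : 4 ≤ k) :
    ((univ : Finset (Vk k)).filter GA).card + 4 = 2 ^ (k + 1) := by
  have hbad : (univ : Finset (Vk k)).filter (fun a => ¬ GA a)
      = {vzero k, ve0 k, veK k, vones k} := by
    ext a
    simp only [mem_filter, mem_univ, true_and, mem_insert, mem_singleton]
    rw [notGA_iff hk]
  have hone : (1 : ZMod 2) ≠ 0 := by decide
  have d1 : vzero k ≠ ve0 k := ne_of_ev 0 (by
    rw [ev_vzero 0 (by omega), ev_ve0 0 (by omega)]; simpa using hone.symm)
  have d2 : vzero k ≠ veK k := ne_of_ev k (by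
    rw [ev_vzero k (by omega), ev_veK k (by omega)]; simpa using hone.symm)
  have d3 : vzero k ≠ vones k := ne_of_ev 0 (by
    rw [ev_vzero 0 (by omega), ev_vones 0 (by omega)]; exact hone.symm)
  have d4 : ve0 k ≠ veK k := ne_of_ev 0 (by
    rw [ev_ve0 0 (by omega), ev_veK 0 (by omega), if_pos rfl, if_neg (by omega)]; exact hone)
  have d5 : ve0 k ≠ vones k := ne_of_ev 1 (by
    rw [ev_ve0 1 (by omega), ev_vones 1 (by omega), if_neg (by omega)]; exact hone.symm)
  have d6 : veK k ≠ vones k := ne_of_ev 0 (by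
    rw [ev_veK 0 (by omega), ev_vones 0 (by omega), if_neg (by omega)]; exact hone.symm)
  have hbadcard : ((univ : Finset (Vk k)).filter (fun a => ¬ GA a)).card = 4 := by
    rw [hbad]
    rw [Finset.card_insert_of_notMem (by simp [d1, d2, d3]),
      Finset.card_insert_of_notMem (by simp [d4, d5]),
      Finset.card_insert_of_notMem (by simp [d6]), Finset.card_singleton]
  have := Finset.card_filter_add_card_filter_not
    (s := (univ : Finset (Vk k))) (p := GA)
  rw [Finset.card_univ, card_Vk] at this
  omega


/-! ### counting solutions of the seven recurrences among good `a` -/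

lemma count_helper {p q r : ZMod 2} {W : ZMod 2 → ZMod 2 → Vk k} {i₁ i₂ : ℕ}
    (hA : ∀ a : Vk k, Sat a p q r → a = W (ev a i₁) (ev a i₂))
    (hB : ∀ x y, Sat (W x y) p q r)
    (hEv1 : ∀ x y, ev (W x y) i₁ = x) (hEv2 : ∀ x y, ev (W x y) i₂ = y)
    {S : Finset (ZMod 2 × ZMod 2)}
    (hG : ∀ x y, GA (W x y) ↔ (x, y) ∈ S) :
    (univ.filter fun a : Vk k => GA a ∧ Sat a p q r).card = S.card := by
  classical
  have himg : (univ.filter fun a : Vk k => GA a ∧ Sat a p q r)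
      = S.image (fun xy : ZMod 2 × ZMod 2 => W xy.1 xy.2) := by
    ext a
    simp only [mem_filter, mem_univ, true_and, mem_image, Prod.exists]
    constructor
    · rintro ⟨hGA, hS⟩
      refine ⟨ev a i₁, ev a i₂, ?_, (hA a hS).symm⟩
      exact (hG _ _).1 (by rw [← hA a hS]; exact hGA)
    · rintro ⟨x, y, hxy, rfl⟩
      exact ⟨(hG x y).2 hxy, hB x y⟩
  rw [himg, Finset.card_image_of_injOn]
  intro u _ v _ huv
  have e1 := congrArg (fun w => ev w i₁) huv
  have e2 := congrArg (fun w => ev w i₂) huv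
  simp only [hEv1, hEv2] at e1 e2
  exact Prod.ext e1 e2

def W100 (k : ℕ) (x y : ZMod 2) : Vk k :=
  mk k fun j => if j = k - 1 then x else if j = k then y else 0

lemma ev_W100 (x y : ZMod 2) {j : ℕ} (h : j < k + 1) :
    ev (W100 k x y) j = if j = k - 1 then x else if j = k then y else 0 := by
  rw [W100, ev_mk _ h]

lemma cnt100 (hk : 4 ≤ k) :
    (univ.filter fun a : Vk k => GA a ∧ Sat a 1 0 0).card = 2 := by
  have hone : (1 : ZMod 2) ≠ 0 := by decide
  have key : ∀ x y z : ZMod 2, 1 * x + 0 * y + 0 * z = 0 → x = 0 := by decide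
  have hA : ∀ a : Vk k, Sat a 1 0 0 → a = W100 k (ev a (k - 1)) (ev a k) := by
    intro a hs
    apply ev_ext
    intro j hj
    rw [ev_W100 _ _ hj]
    rcases Nat.lt_or_ge j (k - 1) with h | h
    · rw [if_neg (by omega), if_neg (by omega)]
      exact key _ _ _ (hs j h)
    · rcases Nat.lt_or_ge j k with h' | h'
      · rw [show j = k - 1 from by omega, if_pos rfl]
      · rw [show j = k from by omega, if_neg (by omega), if_pos rfl]
  have hB : ∀ x y, Sat (W100 k x y) 1 0 0 := by
    intro x y j hj
    rw [ev_W100 _ _ (by omega), if_neg (by omega), if_neg (by omega)]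
    simp
  have hEv1 : ∀ x y, ev (W100 k x y) (k - 1) = x := by
    intro x y; rw [ev_W100 _ _ (by omega), if_pos rfl]
  have hEv2 : ∀ x y, ev (W100 k x y) k = y := by
    intro x y; rw [ev_W100 _ _ (by omega), if_neg (by omega), if_pos rfl]
  have hG : ∀ x y, GA (W100 k x y) ↔ (x, y) ∈ ({(1, 0), (1, 1)} : Finset (ZMod 2 × ZMod 2)) := by
    intro x y
    rcases zmod2_cases x with h | h <;> subst h <;> rcases zmod2_cases y with h | h <;> subst h
    · refine iff_of_false ?_ (by decide)
      rw [notGA_iff hk]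
      exact Or.inl (ev_ext fun j hj => by
        rw [ev_W100 _ _ hj, ev_vzero _ hj]
        split_ifs <;> rfl)
    · refine iff_of_false ?_ (by decide)
      rw [notGA_iff hk]
      refine Or.inr (Or.inr (Or.inl (ev_ext fun j hj => ?_)))
      rw [ev_W100 _ _ hj, ev_veK _ hj]
      rcases Nat.lt_or_ge j (k - 1) with h | h
      · rw [if_neg (by omega), if_neg (by omega)]
      · rcases Nat.lt_or_ge j k with h' | h'
        · rw [show j = k - 1 from by omega, if_pos rfl, if_neg (by omega)]
        · rw [show j = k from by omega, if_neg (by omega), if_pos rfl]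
    · refine iff_of_true ?_ (by decide)
      apply GA_of_witnesses
      · exact ⟨k - 1, by omega, by rw [hEv1]; exact hone⟩
      · refine ⟨k - 2, by omega, ?_⟩
        rw [show k - 2 + 1 = k - 1 from by omega, hEv1]
        exact hone
      · refine ⟨k - 2, by omega, ?_⟩
        rw [show k - 2 + 1 = k - 1 from by omega, hEv1,
          ev_W100 _ _ (by omega : k - 2 < k + 1), if_neg (by omega), if_neg (by omega)]
        exact hone.symm
    · refine iff_of_true ?_ (by decide)
      apply GA_of_witnesses
      · exact ⟨k - 1, by omega, by rw [hEv1]; exact hone⟩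
      · refine ⟨k - 2, by omega, ?_⟩
        rw [show k - 2 + 1 = k - 1 from by omega, hEv1]
        exact hone
      · refine ⟨k - 2, by omega, ?_⟩
        rw [show k - 2 + 1 = k - 1 from by omega, hEv1,
          ev_W100 _ _ (by omega : k - 2 < k + 1), if_neg (by omega), if_neg (by omega)]
        exact hone.symm
  rw [count_helper hA hB hEv1 hEv2 hG]
  decide


def W010 (k : ℕ) (x y : ZMod 2) : Vk k :=
  mk k fun j => if j = 0 then x else if j = k then y else 0

lemma ev_W010 (x y : ZMod 2) {j : ℕ} (h : j < k + 1) :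
    ev (W010 k x y) j = if j = 0 then x else if j = k then y else 0 := by
  rw [W010, ev_mk _ h]

lemma cnt010 (hk : 4 ≤ k) :
    (univ.filter fun a : Vk k => GA a ∧ Sat a 0 1 0).card = 1 := by
  have hone : (1 : ZMod 2) ≠ 0 := by decide
  have key : ∀ x y z : ZMod 2, 0 * x + 1 * y + 0 * z = 0 → y = 0 := by decide
  have hA : ∀ a : Vk k, Sat a 0 1 0 → a = W010 k (ev a 0) (ev a k) := by
    intro a hs
    apply ev_ext
    intro j hj
    rw [ev_W010 _ _ hj]
    rcases Nat.eq_zero_or_pos j with rfl | hp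
    · rw [if_pos rfl]
    rcases Nat.lt_or_ge j k with h' | h'
    · rw [if_neg (by omega), if_neg (by omega)]
      have := key _ _ _ (hs (j - 1) (by omega))
      rwa [show j - 1 + 1 = j from by omega] at this
    · rw [show j = k from by omega, if_neg (by omega), if_pos rfl]
  have hB : ∀ x y, Sat (W010 k x y) 0 1 0 := by
    intro x y j hj
    rw [ev_W010 _ _ (by omega : j + 1 < k + 1), if_neg (by omega), if_neg (by omega)]
    simp
  have hEv1 : ∀ x y, ev (W010 k x y) 0 = x := by
    intro x y; rw [ev_W010 _ _ (by omega), if_pos rfl]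
  have hEv2 : ∀ x y, ev (W010 k x y) k = y := by
    intro x y; rw [ev_W010 _ _ (by omega), if_neg (by omega), if_pos rfl]
  have hG : ∀ x y, GA (W010 k x y) ↔ (x, y) ∈ ({(1, 1)} : Finset (ZMod 2 × ZMod 2)) := by
    intro x y
    rcases zmod2_cases x with h | h <;> subst h <;> rcases zmod2_cases y with h | h <;> subst h
    · refine iff_of_false ?_ (by decide)
      rw [notGA_iff hk]
      exact Or.inl (ev_ext fun j hj => by
        rw [ev_W010 _ _ hj, ev_vzero _ hj]; split_ifs <;> rfl)
    · refine iff_of_false ?_ (by decide)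
      rw [notGA_iff hk]
      refine Or.inr (Or.inr (Or.inl (ev_ext fun j hj => ?_)))
      rw [ev_W010 _ _ hj, ev_veK _ hj]
      rcases Nat.eq_zero_or_pos j with rfl | hp
      · rw [if_pos rfl, if_neg (by omega)]
      · rw [if_neg (by omega)]
    · refine iff_of_false ?_ (by decide)
      rw [notGA_iff hk]
      refine Or.inr (Or.inl (ev_ext fun j hj => ?_))
      rw [ev_W010 _ _ hj, ev_ve0 _ hj]
      rcases Nat.eq_zero_or_pos j with rfl | hp
      · rw [if_pos rfl, if_pos rfl]
      · have h0 : ¬ j = 0 := by omega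
        rw [if_neg h0, if_neg h0]
        split_ifs <;> rfl
    · refine iff_of_true ?_ (by decide)
      apply GA_of_witnesses
      · exact ⟨0, by omega, by rw [hEv1]; exact hone⟩
      · refine ⟨k - 1, by omega, ?_⟩
        rw [show k - 1 + 1 = k from by omega, hEv2]
        exact hone
      · refine ⟨0, by omega, ?_⟩
        rw [hEv1, ev_W010 _ _ (by omega : 1 < k + 1), if_neg (by omega), if_neg (by omega)]
        exact hone
  rw [count_helper hA hB hEv1 hEv2 hG]
  decide

def W001 (k : ℕ) (x y : ZMod 2) : Vk k :=
  mk k fun j => if j = 0 then x else if j = 1 then y else 0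

lemma ev_W001 (x y : ZMod 2) {j : ℕ} (h : j < k + 1) :
    ev (W001 k x y) j = if j = 0 then x else if j = 1 then y else 0 := by
  rw [W001, ev_mk _ h]

lemma cnt001 (hk : 4 ≤ k) :
    (univ.filter fun a : Vk k => GA a ∧ Sat a 0 0 1).card = 2 := by
  have hone : (1 : ZMod 2) ≠ 0 := by decide
  have key : ∀ x y z : ZMod 2, 0 * x + 0 * y + 1 * z = 0 → z = 0 := by decide
  have hA : ∀ a : Vk k, Sat a 0 0 1 → a = W001 k (ev a 0) (ev a 1) := by
    intro a hs
    apply ev_ext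
    intro j hj
    rw [ev_W001 _ _ hj]
    rcases Nat.eq_zero_or_pos j with rfl | hp
    · rw [if_pos rfl]
    rcases Nat.lt_or_ge j 2 with h' | h'
    · rw [show j = 1 from by omega, if_neg (by omega), if_pos rfl]
    · rw [if_neg (by omega), if_neg (by omega)]
      have := key _ _ _ (hs (j - 2) (by omega))
      rwa [show j - 2 + 2 = j from by omega] at this
  have hB : ∀ x y, Sat (W001 k x y) 0 0 1 := by
    intro x y j hj
    rw [ev_W001 _ _ (by omega : j + 2 < k + 1), if_neg (by omega), if_neg (by omega)]
    simp
  have hEv1 : ∀ x y, ev (W001 k x y) 0 = x := by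
    intro x y; rw [ev_W001 _ _ (by omega), if_pos rfl]
  have hEv2 : ∀ x y, ev (W001 k x y) 1 = y := by
    intro x y; rw [ev_W001 _ _ (by omega), if_neg (by omega), if_pos rfl]
  have hG : ∀ x y, GA (W001 k x y)
      ↔ (x, y) ∈ ({(0, 1), (1, 1)} : Finset (ZMod 2 × ZMod 2)) := by
    intro x y
    rcases zmod2_cases x with h | h <;> subst h <;> rcases zmod2_cases y with h | h <;> subst h
    · refine iff_of_false ?_ (by decide)
      rw [notGA_iff hk]
      exact Or.inl (ev_ext fun j hj => by
        rw [ev_W001 _ _ hj, ev_vzero _ hj]; split_ifs <;> rfl)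
    · refine iff_of_true ?_ (by decide)
      apply GA_of_witnesses
      · exact ⟨1, by omega, by rw [hEv2]; exact hone⟩
      · exact ⟨0, by omega, by rw [hEv2]; exact hone⟩
      · refine ⟨0, by omega, ?_⟩
        rw [hEv1, hEv2]
        exact hone.symm
    · refine iff_of_false ?_ (by decide)
      rw [notGA_iff hk]
      refine Or.inr (Or.inl (ev_ext fun j hj => ?_))
      rw [ev_W001 _ _ hj, ev_ve0 _ hj]
      rcases Nat.eq_zero_or_pos j with rfl | hp
      · rw [if_pos rfl, if_pos rfl]
      · have h0 : ¬ j = 0 := by omega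
        rw [if_neg h0, if_neg h0]
        split_ifs <;> rfl
    · refine iff_of_true ?_ (by decide)
      apply GA_of_witnesses
      · exact ⟨0, by omega, by rw [hEv1]; exact hone⟩
      · exact ⟨0, by omega, by rw [hEv2]; exact hone⟩
      · refine ⟨1, by omega, ?_⟩
        rw [hEv2, ev_W001 _ _ (by omega : 2 < k + 1), if_neg (by omega), if_neg (by omega)]
        exact hone
  rw [count_helper hA hB hEv1 hEv2 hG]
  decide

def W110 (k : ℕ) (x y : ZMod 2) : Vk k :=
  mk k fun j => if j = k then y else x

lemma ev_W110 (x y : ZMod 2) {j : ℕ} (h : j < k + 1) :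
    ev (W110 k x y) j = if j = k then y else x := by
  rw [W110, ev_mk _ h]

lemma cnt110 (hk : 4 ≤ k) :
    (univ.filter fun a : Vk k => GA a ∧ Sat a 1 1 0).card = 1 := by
  have hone : (1 : ZMod 2) ≠ 0 := by decide
  have key : ∀ x y z : ZMod 2, 1 * x + 1 * y + 0 * z = 0 → x = y := by decide
  have hA : ∀ a : Vk k, Sat a 1 1 0 → a = W110 k (ev a 0) (ev a k) := by
    intro a hs
    have hconst := eq_const_below (m := k - 1) fun j hj => key _ _ _ (hs j hj)
    apply ev_ext
    intro j hj
    rw [ev_W110 _ _ hj]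
    rcases Nat.lt_or_ge j k with h' | h'
    · rw [if_neg (by omega)]
      exact hconst j (by omega)
    · rw [show j = k from by omega, if_pos rfl]
  have hB : ∀ x y, Sat (W110 k x y) 1 1 0 := by
    intro x y j hj
    rw [ev_W110 _ _ (by omega : j < k + 1), ev_W110 _ _ (by omega : j + 1 < k + 1),
      if_neg (by omega), if_neg (by omega)]
    exact (by decide : ∀ x z : ZMod 2, 1 * x + 1 * x + 0 * z = 0) x _
  have hEv1 : ∀ x y, ev (W110 k x y) 0 = x := by
    intro x y; rw [ev_W110 _ _ (by omega), if_neg (by omega)]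
  have hEv2 : ∀ x y, ev (W110 k x y) k = y := by
    intro x y; rw [ev_W110 _ _ (by omega), if_pos rfl]
  have hG : ∀ x y, GA (W110 k x y) ↔ (x, y) ∈ ({(1, 0)} : Finset (ZMod 2 × ZMod 2)) := by
    intro x y
    rcases zmod2_cases x with h | h <;> subst h <;> rcases zmod2_cases y with h | h <;> subst h
    · refine iff_of_false ?_ (by decide)
      rw [notGA_iff hk]
      exact Or.inl (ev_ext fun j hj => by
        rw [ev_W110 _ _ hj, ev_vzero _ hj]; split_ifs <;> rfl)
    · refine iff_of_false ?_ (by decide)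
      rw [notGA_iff hk]
      exact Or.inr (Or.inr (Or.inl (ev_ext fun j hj => by
        rw [ev_W110 _ _ hj, ev_veK _ hj])))
    · refine iff_of_true ?_ (by decide)
      apply GA_of_witnesses
      · exact ⟨0, by omega, by rw [hEv1]; exact hone⟩
      · refine ⟨0, by omega, ?_⟩
        rw [ev_W110 _ _ (by omega : 1 < k + 1), if_neg (by omega)]
        exact hone
      · refine ⟨k - 1, by omega, ?_⟩
        rw [show k - 1 + 1 = k from by omega, hEv2,
          ev_W110 _ _ (by omega : k - 1 < k + 1), if_neg (by omega)]
        exact hone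
    · refine iff_of_false ?_ (by decide)
      rw [notGA_iff hk]
      exact Or.inr (Or.inr (Or.inr (ev_ext fun j hj => by
        rw [ev_W110 _ _ hj, ev_vones _ hj]; split_ifs <;> rfl)))
  rw [count_helper hA hB hEv1 hEv2 hG]
  decide

lemma eq_const_between {a : Vk k} {m : ℕ} (h : ∀ j, 1 ≤ j → j < m → ev a j = ev a (j + 1)) :
    ∀ i, 1 ≤ i → i ≤ m → ev a i = ev a 1 := by
  intro i
  induction i with
  | zero => omega
  | succ n ih =>
    intro _ hn
    rcases Nat.eq_zero_or_pos n with rfl | hp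
    · rfl
    · rw [← h n hp (by omega)]
      exact ih hp (by omega)

def W011 (k : ℕ) (x y : ZMod 2) : Vk k :=
  mk k fun j => if j = 0 then x else y

lemma ev_W011 (x y : ZMod 2) {j : ℕ} (h : j < k + 1) :
    ev (W011 k x y) j = if j = 0 then x else y := by
  rw [W011, ev_mk _ h]

lemma cnt011 (hk : 4 ≤ k) :
    (univ.filter fun a : Vk k => GA a ∧ Sat a 0 1 1).card = 1 := by
  have hone : (1 : ZMod 2) ≠ 0 := by decide
  have key : ∀ x y z : ZMod 2, 0 * x + 1 * y + 1 * z = 0 → y = z := by decide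
  have hA : ∀ a : Vk k, Sat a 0 1 1 → a = W011 k (ev a 0) (ev a 1) := by
    intro a hs
    have hstep : ∀ j, 1 ≤ j → j < k → ev a j = ev a (j + 1) := by
      intro j h1 h2
      have := key _ _ _ (hs (j - 1) (by omega))
      rwa [show j - 1 + 1 = j from by omega, show j - 1 + 2 = j + 1 from by omega] at this
    have hconst := eq_const_between (m := k) hstep
    apply ev_ext
    intro j hj
    rw [ev_W011 _ _ hj]
    rcases Nat.eq_zero_or_pos j with rfl | hp
    · rw [if_pos rfl]
    · rw [if_neg (by omega)]
      exact hconst j hp (by omega)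
  have hB : ∀ x y, Sat (W011 k x y) 0 1 1 := by
    intro x y j hj
    rw [ev_W011 _ _ (by omega : j + 1 < k + 1), ev_W011 _ _ (by omega : j + 2 < k + 1),
      if_neg (by omega), if_neg (by omega)]
    exact (by decide : ∀ x y : ZMod 2, 0 * x + 1 * y + 1 * y = 0) _ y
  have hEv1 : ∀ x y, ev (W011 k x y) 0 = x := by
    intro x y; rw [ev_W011 _ _ (by omega), if_pos rfl]
  have hEv2 : ∀ x y, ev (W011 k x y) 1 = y := by
    intro x y; rw [ev_W011 _ _ (by omega), if_neg (by omega)]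
  have hG : ∀ x y, GA (W011 k x y) ↔ (x, y) ∈ ({(0, 1)} : Finset (ZMod 2 × ZMod 2)) := by
    intro x y
    rcases zmod2_cases x with h | h <;> subst h <;> rcases zmod2_cases y with h | h <;> subst h
    · refine iff_of_false ?_ (by decide)
      rw [notGA_iff hk]
      exact Or.inl (ev_ext fun j hj => by
        rw [ev_W011 _ _ hj, ev_vzero _ hj]; split_ifs <;> rfl)
    · refine iff_of_true ?_ (by decide)
      apply GA_of_witnesses
      · refine ⟨1, by omega, by rw [hEv2]; exact hone⟩
      · exact ⟨0, by omega, by rw [hEv2]; exact hone⟩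
      · exact ⟨0, by omega, by rw [hEv1, hEv2]; exact hone.symm⟩
    · refine iff_of_false ?_ (by decide)
      rw [notGA_iff hk]
      refine Or.inr (Or.inl (ev_ext fun j hj => by
        rw [ev_W011 _ _ hj, ev_ve0 _ hj]))
    · refine iff_of_false ?_ (by decide)
      rw [notGA_iff hk]
      exact Or.inr (Or.inr (Or.inr (ev_ext fun j hj => by
        rw [ev_W011 _ _ hj, ev_vones _ hj]; split_ifs <;> rfl)))
  rw [count_helper hA hB hEv1 hEv2 hG]
  decide


def W101 (k : ℕ) (x y : ZMod 2) : Vk k :=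
  mk k fun j => if j % 2 = 0 then x else y

lemma ev_W101 (x y : ZMod 2) {j : ℕ} (h : j < k + 1) :
    ev (W101 k x y) j = if j % 2 = 0 then x else y := by
  rw [W101, ev_mk _ h]

lemma per2 {a : Vk k} (h : ∀ j < k - 1, ev a j = ev a (j + 2)) :
    ∀ i ≤ k, ev a i = (if i % 2 = 0 then ev a 0 else ev a 1) := by
  intro i
  induction i using Nat.strong_induction_on with
  | _ i ih =>
    intro hik
    by_cases hsmall : i ≤ 1
    · interval_cases i <;> simp
    · have h1 := h (i - 2) (by omega)
      rw [show i - 2 + 2 = i from by omega] at h1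
      rw [← h1, ih (i - 2) (by omega) (by omega), show (i - 2) % 2 = i % 2 from by omega]

lemma cnt101 (hk : 4 ≤ k) :
    (univ.filter fun a : Vk k => GA a ∧ Sat a 1 0 1).card = 2 := by
  have hone : (1 : ZMod 2) ≠ 0 := by decide
  have key : ∀ x y z : ZMod 2, 1 * x + 0 * y + 1 * z = 0 → x = z := by decide
  have hA : ∀ a : Vk k, Sat a 1 0 1 → a = W101 k (ev a 0) (ev a 1) := by
    intro a hs
    apply ev_ext
    intro j hj
    rw [ev_W101 _ _ hj]
    exact per2 (fun i hi => key _ _ _ (hs i hi)) j (by omega)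
  have hB : ∀ x y, Sat (W101 k x y) 1 0 1 := by
    intro x y j hj
    rw [ev_W101 _ _ (by omega : j < k + 1), ev_W101 _ _ (by omega : j + 2 < k + 1),
      show (j + 2) % 2 = j % 2 from by omega]
    exact (by decide : ∀ t s : ZMod 2, 1 * t + 0 * s + 1 * t = 0) _ _
  have hEv1 : ∀ x y, ev (W101 k x y) 0 = x := by
    intro x y; rw [ev_W101 _ _ (by omega), if_pos (by omega)]
  have hEv2 : ∀ x y, ev (W101 k x y) 1 = y := by
    intro x y; rw [ev_W101 _ _ (by omega), if_neg (by omega)]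
  have hG : ∀ x y, GA (W101 k x y)
      ↔ (x, y) ∈ ({(0, 1), (1, 0)} : Finset (ZMod 2 × ZMod 2)) := by
    intro x y
    rcases zmod2_cases x with h | h <;> subst h <;> rcases zmod2_cases y with h | h <;> subst h
    · refine iff_of_false ?_ (by decide)
      rw [notGA_iff hk]
      exact Or.inl (ev_ext fun j hj => by
        rw [ev_W101 _ _ hj, ev_vzero _ hj]; split_ifs <;> rfl)
    · refine iff_of_true ?_ (by decide)
      apply GA_of_witnesses
      · exact ⟨1, by omega, by rw [hEv2]; exact hone⟩
      · exact ⟨0, by omega, by rw [hEv2]; exact hone⟩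
      · exact ⟨0, by omega, by rw [hEv1, hEv2]; exact hone.symm⟩
    · refine iff_of_true ?_ (by decide)
      apply GA_of_witnesses
      · exact ⟨0, by omega, by rw [hEv1]; exact hone⟩
      · refine ⟨1, by omega, ?_⟩
        rw [ev_W101 _ _ (by omega : 2 < k + 1), if_pos (by omega)]
        exact hone
      · exact ⟨0, by omega, by rw [hEv1, hEv2]; exact hone⟩
    · refine iff_of_false ?_ (by decide)
      rw [notGA_iff hk]
      exact Or.inr (Or.inr (Or.inr (ev_ext fun j hj => by
        rw [ev_W101 _ _ hj, ev_vones _ hj]; split_ifs <;> rfl)))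
  rw [count_helper hA hB hEv1 hEv2 hG]
  decide

def W111 (k : ℕ) (x y : ZMod 2) : Vk k :=
  mk k fun j => if j % 3 = 0 then x else if j % 3 = 1 then y else x + y

lemma ev_W111 (x y : ZMod 2) {j : ℕ} (h : j < k + 1) :
    ev (W111 k x y) j = if j % 3 = 0 then x else if j % 3 = 1 then y else x + y := by
  rw [W111, ev_mk _ h]

lemma per3 {a : Vk k} (h : ∀ j < k - 1, ev a (j + 2) = ev a j + ev a (j + 1)) :
    ∀ i ≤ k, ev a i
      = (if i % 3 = 0 then ev a 0 else if i % 3 = 1 then ev a 1 else ev a 0 + ev a 1) := by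
  intro i
  induction i using Nat.strong_induction_on with
  | _ i ih =>
    intro hik
    by_cases hsmall : i ≤ 1
    · interval_cases i <;> simp
    · have h1 := h (i - 2) (by omega)
      rw [show i - 2 + 2 = i from by omega, show i - 2 + 1 = i - 1 from by omega] at h1
      rw [h1, ih (i - 2) (by omega) (by omega), ih (i - 1) (by omega) (by omega)]
      have h3 : i % 3 = 0 ∨ i % 3 = 1 ∨ i % 3 = 2 := by omega
      rcases h3 with h3 | h3 | h3
      · rw [show (i - 2) % 3 = 1 from by omega, show (i - 1) % 3 = 2 from by omega, h3]
        norm_num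
        exact (by decide : ∀ u v : ZMod 2, v + (u + v) = u) _ _
      · rw [show (i - 2) % 3 = 2 from by omega, show (i - 1) % 3 = 0 from by omega, h3]
        norm_num
        exact (by decide : ∀ u v : ZMod 2, u + v + u = v) _ _
      · rw [show (i - 2) % 3 = 0 from by omega, show (i - 1) % 3 = 1 from by omega, h3]
        norm_num


lemma cnt111 (hk : 4 ≤ k) :
    (univ.filter fun a : Vk k => GA a ∧ Sat a 1 1 1).card = 3 := by
  have hone : (1 : ZMod 2) ≠ 0 := by decide
  have key : ∀ x y z : ZMod 2, 1 * x + 1 * y + 1 * z = 0 → z = x + y := by decide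
  have hA : ∀ a : Vk k, Sat a 1 1 1 → a = W111 k (ev a 0) (ev a 1) := by
    intro a hs
    apply ev_ext
    intro j hj
    rw [ev_W111 _ _ hj]
    exact per3 (fun i hi => key _ _ _ (hs i hi)) j (by omega)
  have hB : ∀ x y, Sat (W111 k x y) 1 1 1 := by
    intro x y j hj
    rw [ev_W111 _ _ (by omega : j < k + 1), ev_W111 _ _ (by omega : j + 1 < k + 1),
      ev_W111 _ _ (by omega : j + 2 < k + 1)]
    have h3 : j % 3 = 0 ∨ j % 3 = 1 ∨ j % 3 = 2 := by omega
    rcases h3 with h3 | h3 | h3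
    · rw [h3, show (j + 1) % 3 = 1 from by omega, show (j + 2) % 3 = 2 from by omega]
      norm_num
      exact (by decide : ∀ x y : ZMod 2, x + y + (x + y) = 0) _ _
    · rw [h3, show (j + 1) % 3 = 2 from by omega, show (j + 2) % 3 = 0 from by omega]
      norm_num
      exact (by decide : ∀ x y : ZMod 2, y + (x + y) + x = 0) _ _
    · rw [h3, show (j + 1) % 3 = 0 from by omega, show (j + 2) % 3 = 1 from by omega]
      norm_num
      exact (by decide : ∀ x y : ZMod 2, x + y + x + y = 0) _ _
  have hEv1 : ∀ x y, ev (W111 k x y) 0 = x := by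
    intro x y; rw [ev_W111 _ _ (by omega), if_pos (by omega)]
  have hEv2 : ∀ x y, ev (W111 k x y) 1 = y := by
    intro x y; rw [ev_W111 _ _ (by omega), if_neg (by omega), if_pos (by omega)]
  have hEv3 : ∀ x y, ev (W111 k x y) 2 = x + y := by
    intro x y
    rw [ev_W111 _ _ (by omega : 2 < k + 1), if_neg (by omega), if_neg (by omega)]
  have hG : ∀ x y, GA (W111 k x y)
      ↔ (x, y) ∈ ({(0, 1), (1, 0), (1, 1)} : Finset (ZMod 2 × ZMod 2)) := by
    intro x y
    rcases zmod2_cases x with h | h <;> subst h <;> rcases zmod2_cases y with h | h <;> subst h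
    · refine iff_of_false ?_ (by decide)
      rw [notGA_iff hk]
      refine Or.inl (ev_ext fun j hj => by
        rw [ev_W111 _ _ hj, ev_vzero _ hj]; split_ifs <;> decide)
    · refine iff_of_true ?_ (by decide)
      apply GA_of_witnesses
      · exact ⟨1, by omega, by rw [hEv2]; exact hone⟩
      · exact ⟨0, by omega, by rw [hEv2]; exact hone⟩
      · exact ⟨0, by omega, by rw [hEv1, hEv2]; exact hone.symm⟩
    · refine iff_of_true ?_ (by decide)
      apply GA_of_witnesses
      · exact ⟨0, by omega, by rw [hEv1]; exact hone⟩
      · exact ⟨1, by omega, by rw [hEv3]; decide⟩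
      · exact ⟨0, by omega, by rw [hEv1, hEv2]; exact hone⟩
    · refine iff_of_true ?_ (by decide)
      apply GA_of_witnesses
      · exact ⟨0, by omega, by rw [hEv1]; exact hone⟩
      · exact ⟨0, by omega, by rw [hEv2]; exact hone⟩
      · exact ⟨1, by omega, by rw [hEv2, hEv3]; decide⟩
  rw [count_helper hA hB hEv1 hEv2 hG]
  decide


/-! ### from matrix rank to the explicit condition `Q` -/

lemma rank_iff (α : Fin 2 → Vk k) :
    (persymMatrix 2 k α).rank = 4 ↔ Q (α 0) (α 1) := by
  classical
  let M : Matrix (Fin 4) (Fin k) (ZMod 2) := persymMatrix 2 k α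
  have hrank : (persymMatrix 2 k α).rank = M.rank := rfl
  have hLI : M.rank = 4 ↔ LinearIndependent (ZMod 2) M.row := by
    rw [M.rank_eq_finrank_span_row, linearIndependent_iff_card_eq_finrank_span]
    simp [Set.finrank, eq_comm]
  have e0 : ∀ j : Fin k, M 0 j = ev (α 0) j.val := by
    intro j; rw [ev_lt _ (by omega)]; rfl
  have e1 : ∀ j : Fin k, M 1 j = ev (α 0) (j.val + 1) := by
    intro j; rw [ev_lt _ (by omega)]; rfl
  have e2 : ∀ j : Fin k, M 2 j = ev (α 1) j.val := by
    intro j; rw [ev_lt _ (by omega)]; rfl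
  have e3 : ∀ j : Fin k, M 3 j = ev (α 1) (j.val + 1) := by
    intro j; rw [ev_lt _ (by omega)]; rfl
  have hsum : ∀ (g : Fin 4 → ZMod 2) (j : Fin k), (∑ i, g i • M.row i) j =
      g 0 * ev (α 0) j.val + g 1 * ev (α 0) (j.val + 1) + g 2 * ev (α 1) j.val
        + g 3 * ev (α 1) (j.val + 1) := by
    intro g j
    rw [Finset.sum_apply, Fin.sum_univ_four]
    simp [Matrix.row, e0 j, e1 j, e2 j, e3 j]
  rw [hrank, hLI, Fintype.linearIndependent_iff]
  constructor
  · intro H c₁ c₂ c₃ c₄ hrel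
    have h := H ![c₁, c₂, c₃, c₄] ?_
    · exact ⟨h 0, h 1, h 2, h 3⟩
    · funext j
      rw [hsum]
      have := hrel j.val j.isLt
      simpa using this
  · intro HQ g hg
    have hr : ∀ j < k, g 0 * ev (α 0) j + g 1 * ev (α 0) (j + 1) + g 2 * ev (α 1) j
        + g 3 * ev (α 1) (j + 1) = 0 := by
      intro j hj
      have := congrFun hg ⟨j, hj⟩
      rw [hsum] at this
      simpa using this
    obtain ⟨h1, h2, h3, h4⟩ := HQ (g 0) (g 1) (g 2) (g 3) hr
    intro i
    fin_cases i
    exacts [h1, h2, h3, h4]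

lemma gamma_eq : Gamma 2 k 4 = ∑ a : Vk k, (univ.filter (fun b => Q a b)).card := by
  classical
  rw [Gamma, Nat.card_eq_fintype_card]
  have e1 : {α : Fin 2 → Vk k // (persymMatrix 2 k α).rank = 4}
      ≃ Σ a : Vk k, {b : Vk k // Q a b} :=
    (Equiv.subtypeEquiv (piFinTwoEquiv fun _ => Vk k) (fun α => by rw [rank_iff]; rfl)).trans
      (Equiv.subtypeProdEquivSigmaSubtype Q)
  rw [Fintype.card_congr e1, Fintype.card_sigma]
  exact Finset.sum_congr rfl fun a _ => Fintype.card_subtype _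

/-! ### assembling the count -/

lemma Q_imp_GA {a b : Vk k} (h : Q a b) : GA a := by
  intro c₁ c₂ hrel
  have key : ∀ c₁ c₂ x y u v : ZMod 2, c₁ * x + c₂ * y = 0 →
      c₁ * x + c₂ * y + 0 * u + 0 * v = 0 := by decide
  obtain ⟨h1, h2, _, _⟩ := h c₁ c₂ 0 0 fun j hj => key _ _ _ _ _ _ (hrel j hj)
  exact ⟨h1, h2⟩

lemma sat000 (a : Vk k) : Sat a 0 0 0 := by
  intro j hj
  simp

lemma cnt000 : (univ.filter fun a : Vk k => GA a ∧ Sat a 0 0 0).card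
    = ((univ : Finset (Vk k)).filter GA).card := by
  congr 1
  ext a
  simp [sat000]

lemma sum_sCount (hk : 4 ≤ k) :
    ∑ a ∈ (univ : Finset (Vk k)).filter GA, sCount a
      = ((univ : Finset (Vk k)).filter GA).card + 12 := by
  classical
  have hswap : ∑ a ∈ (univ : Finset (Vk k)).filter GA, sCount a
      = ∑ σ : ZMod 2 × ZMod 2 × ZMod 2,
          (univ.filter fun a : Vk k => GA a ∧ Sat a σ.1 σ.2.1 σ.2.2).card := by
    unfold sCount
    calc ∑ a ∈ (univ : Finset (Vk k)).filter GA,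
          ((univ : Finset (ZMod 2 × ZMod 2 × ZMod 2)).filter
            fun σ => Sat a σ.1 σ.2.1 σ.2.2).card
        = ∑ a ∈ (univ : Finset (Vk k)).filter GA,
            ∑ σ : ZMod 2 × ZMod 2 × ZMod 2, if Sat a σ.1 σ.2.1 σ.2.2 then 1 else 0 :=
          Finset.sum_congr rfl fun a _ => Finset.card_filter _ _
      _ = ∑ σ : ZMod 2 × ZMod 2 × ZMod 2,
            ∑ a ∈ (univ : Finset (Vk k)).filter GA,
              if Sat a σ.1 σ.2.1 σ.2.2 then 1 else 0 := Finset.sum_comm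
      _ = ∑ σ : ZMod 2 × ZMod 2 × ZMod 2,
            (((univ : Finset (Vk k)).filter GA).filter
              fun a => Sat a σ.1 σ.2.1 σ.2.2).card :=
          Finset.sum_congr rfl fun σ _ => (Finset.card_filter _ _).symm
      _ = ∑ σ : ZMod 2 × ZMod 2 × ZMod 2,
            (univ.filter fun a : Vk k => GA a ∧ Sat a σ.1 σ.2.1 σ.2.2).card := by
          simp [Finset.filter_filter]
  rw [hswap]
  have huniv : (univ : Finset (ZMod 2 × ZMod 2 × ZMod 2))
      = {(0,0,0), (0,0,1), (0,1,0), (0,1,1), (1,0,0), (1,0,1), (1,1,0), (1,1,1)} := by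
    decide
  rw [huniv, Finset.sum_insert (by decide), Finset.sum_insert (by decide),
    Finset.sum_insert (by decide), Finset.sum_insert (by decide),
    Finset.sum_insert (by decide), Finset.sum_insert (by decide),
    Finset.sum_insert (by decide), Finset.sum_singleton]
  rw [cnt000, cnt001 hk, cnt010 hk, cnt011 hk, cnt100 hk, cnt101 hk, cnt110 hk, cnt111 hk]
  omega

lemma gamma_val (hk : 4 ≤ k) :
    (Gamma 2 k 4 : ℤ) = 2 ^ (2 * k + 2) - 3 * 2 ^ (k + 4) + 128 := by
  classical
  set G := (univ : Finset (Vk k)).filter GA with hG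
  have hsplit : Gamma 2 k 4 = ∑ a ∈ G, (univ.filter (fun b => Q a b)).card := by
    rw [gamma_eq, ← Finset.sum_filter_add_sum_filter_not univ (GA (k := k))
      (fun a => (univ.filter (fun b => Q a b)).card)]
    have hzero : ∑ a ∈ univ.filter (fun a : Vk k => ¬ GA a),
        (univ.filter (fun b => Q a b)).card = 0 := by
      apply Finset.sum_eq_zero
      intro a ha
      rw [Finset.card_eq_zero, Finset.filter_eq_empty_iff]
      intro b _
      exact fun hQ => (mem_filter.1 ha).2 (Q_imp_GA hQ)
    rw [hzero, add_zero]
  have hsum1 : (∑ a ∈ G, (univ.filter (fun b => Q a b)).card) + 24 * G.card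
      = 2 ^ (k + 1) * G.card + 4 * (G.card + 12) := by
    calc (∑ a ∈ G, (univ.filter (fun b => Q a b)).card) + 24 * G.card
        = ∑ a ∈ G, ((univ.filter (fun b => Q a b)).card + 24) := by
          rw [Finset.sum_add_distrib, Finset.sum_const, smul_eq_mul, mul_comm]
      _ = ∑ a ∈ G, (2 ^ (k + 1) + 4 * sCount a) := by
          refine Finset.sum_congr rfl fun a ha => ?_
          exact count_b hk (mem_filter.1 ha).2
      _ = 2 ^ (k + 1) * G.card + 4 * (G.card + 12) := by
          rw [Finset.sum_add_distrib, Finset.sum_const, smul_eq_mul, mul_comm,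
            ← Finset.mul_sum, sum_sCount hk]
  have hg := cardGA hk
  rw [← hG] at hg
  have hΓ : Gamma 2 k 4 + 24 * G.card = 2 ^ (k + 1) * G.card + 4 * (G.card + 12) := by
    rw [hsplit]; exact hsum1
  have hΓℤ : (Gamma 2 k 4 : ℤ) + 24 * (G.card : ℤ)
      = 2 ^ (k + 1) * (G.card : ℤ) + 4 * ((G.card : ℤ) + 12) := by
    exact_mod_cast hΓ
  have hgℤ : (G.card : ℤ) + 4 = 2 ^ (k + 1) := by exact_mod_cast hg
  have hp1 : (2 : ℤ) ^ (2 * k + 2) = 2 ^ (k + 1) * 2 ^ (k + 1) := by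
    rw [← pow_add]; ring_nf
  have hp2 : (2 : ℤ) ^ (k + 4) = 2 ^ (k + 1) * 8 := by
    rw [show k + 4 = (k + 1) + 3 from by omega, pow_add]; ring
  rw [hp1, hp2]
  linear_combination hΓℤ + ((2 : ℤ) ^ (k + 1) - 20) * hgℤ

end PS

theorem stmt4 (k : ℕ) (hk : 4 ≤ k) :
    (Gamma 2 k 4 : ℤ) = 2 ^ (2 * k + 2) - 3 * 2 ^ (k + 4) + 128 ∧
      (2 ^ (2 * k + 2) - 3 * 2 ^ (k + 4) + 128 : ℤ) =
        2 ^ 2 * (2 ^ k - 2 ^ 3) * (2 ^ k - 2 ^ 2) := by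
  constructor
  · exact PS.gamma_val hk
  · have hp1 : (2 : ℤ) ^ (2 * k + 2) = 4 * ((2 : ℤ) ^ k * (2 : ℤ) ^ k) := by
      rw [show 2 * k + 2 = k + (k + 2) from by ring, pow_add, pow_add]; ring
    have hp2 : (2 : ℤ) ^ (k + 4) = 16 * (2 : ℤ) ^ k := by
      rw [pow_add]; ring
    rw [hp1, hp2]; ring
end

section
/- Let n ≥ 4 and k = 10. The number of n-tuples (α^(1),…,α^(n)) of vectors in F_2^{11} such that the associated n-fold persymmetric 2n×10 matrix has rank 8 equals 511·2^{8n} + 171955·2^{7n} − 897890·2^{6n} − 38376240·2^{5n} + 323250144·2^{4n} + 271514880·2^{3n} − 436135·2^{14}·2^{2n} + 242795·2^{16}·2^n − 4445·2^{21}. -/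
open Submodule Set Module

set_option synthInstance.maxHeartbeats 1000000
set_option maxHeartbeats 1000000

namespace Pers

variable {n : ℕ}

abbrev F2 := ZMod 2
abbrev V (n : ℕ) := Fin n → F2

/-- pairs of consecutive entries -/
def pr {m : ℕ} (u : Fin (m + 1) → V n) : Fin m → (V n × V n) :=
  fun i => (u i.castSucc, u i.succ)

noncomputable def P {m : ℕ} (u : Fin (m + 1) → V n) : Submodule F2 (V n × V n) :=
  span F2 (Set.range (pr u))

noncomputable def Sc {m : ℕ} (u : Fin (m + 1) → V n) : ℕ :=
  finrank F2 (span F2 (Set.range u))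

noncomputable def Sz {m : ℕ} (u : Fin (m + 1) → V n) : ℕ :=
  finrank F2 (Submodule.comap (LinearMap.inl F2 (V n) (V n)) (P u))

def SbP {m : ℕ} (u : Fin (m + 1) → V n) : Prop :=
  u 0 ∈ span F2 (Set.range fun i : Fin m => u i.succ)

open Classical in
noncomputable def Sb {m : ℕ} (u : Fin (m + 1) → V n) : Bool := decide (SbP u)

lemma Sb_iff {m : ℕ} (u : Fin (m + 1) → V n) : Sb u = true ↔ SbP u := by
  simp [Sb]

/-- the weight function -/
noncomputable def W (n : ℕ) : ℕ → ℕ → ℕ → Bool → ℤ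
  | 0, c, z, b => if (if b then c + z else c + z - 1) = 8 then 1 else 0
  | (r+1), c, z, true =>
      2 ^ z * W n r c z true + (2 ^ c - 2 ^ z) * W n r c (z + 1) true
        + ((2:ℤ) ^ n - 2 ^ c) * W n r (c + 1) (z + 1) false
  | (r+1), c, z, false =>
      2 ^ c * W n r c z true + ((2:ℤ) ^ n - 2 ^ c) * W n r (c + 1) z false

lemma pr_cons {m : ℕ} (x : V n) (u : Fin (m + 1) → V n) :
    pr (Fin.cons x u) = Fin.cons (x, u 0) (pr u) := by
  funext i
  refine Fin.cases ?_ (fun j => ?_) i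
  · rfl
  · simp only [pr, Fin.cons_succ, ← Fin.succ_castSucc]

lemma P_cons {m : ℕ} (x : V n) (u : Fin (m + 1) → V n) :
    P (Fin.cons x u) = span F2 {(x, u 0)} ⊔ P u := by
  rw [P, pr_cons, Fin.range_cons, span_insert]; rfl

lemma range_comp_fst {m : ℕ} (u : Fin (m + 1) → V n) :
    Submodule.map (LinearMap.fst F2 (V n) (V n)) (P u)
      = span F2 (Set.range fun i : Fin m => u i.castSucc) := by
  rw [P, Submodule.map_span]
  congr 1
  rw [← Set.range_comp]
  rfl

lemma range_comp_snd {m : ℕ} (u : Fin (m + 1) → V n) :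
    Submodule.map (LinearMap.snd F2 (V n) (V n)) (P u)
      = span F2 (Set.range fun i : Fin m => u i.succ) := by
  rw [P, Submodule.map_span]
  congr 1
  rw [← Set.range_comp]
  rfl

lemma castSucc_range_le {m : ℕ} (u : Fin (m + 1) → V n) :
    span F2 (Set.range fun i : Fin m => u i.castSucc) ≤ span F2 (Set.range u) :=
  span_mono (by rintro _ ⟨i, rfl⟩; exact ⟨i.castSucc, rfl⟩)

lemma succ_range_le {m : ℕ} (u : Fin (m + 1) → V n) :
    span F2 (Set.range fun i : Fin m => u i.succ) ≤ span F2 (Set.range u) :=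
  span_mono (by rintro _ ⟨i, rfl⟩; exact ⟨i.succ, rfl⟩)

lemma Sb_iff_mem_map_snd {m : ℕ} (u : Fin (m + 1) → V n) :
    SbP u ↔ u 0 ∈ Submodule.map (LinearMap.snd F2 (V n) (V n)) (P u) := by
  rw [range_comp_snd]; rfl

/-- slice membership implies membership in the span -/
lemma slice_mem_span {m : ℕ} (u : Fin (m + 1) → V n) {x : V n}
    (h : (x, u 0) ∈ P u) : x ∈ span F2 (Set.range u) := by
  have : x ∈ Submodule.map (LinearMap.fst F2 (V n) (V n)) (P u) := ⟨(x, u 0), h, rfl⟩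
  rw [range_comp_fst] at this
  exact castSucc_range_le u this

/-- dimension bump: x ∉ W → finrank (span{x} ⊔ W) = finrank W + 1 -/
lemma finrank_span_sup {M : Type*} [AddCommGroup M] [Module F2 M] [FiniteDimensional F2 M]
    (Wm : Submodule F2 M) {x : M} (hx : x ∉ Wm) :
    finrank F2 ↥(span F2 {x} ⊔ Wm) = finrank F2 Wm + 1 := by
  have hx0 : x ≠ 0 := fun h => hx (h ▸ Wm.zero_mem)
  have hinf : span F2 {x} ⊓ Wm = ⊥ := by
    rw [eq_bot_iff]
    rintro y ⟨hy1, hy2⟩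
    obtain ⟨c, rfl⟩ := Submodule.mem_span_singleton.mp hy1
    rcases (by decide : ∀ c : F2, c = 0 ∨ c = 1) c with rfl | rfl
    · simp
    · rw [one_smul] at hy2; exact absurd hy2 hx
  have := Submodule.finrank_sup_add_finrank_inf_eq (span F2 {x}) Wm
  rw [hinf, finrank_bot, finrank_span_singleton hx0] at this
  omega



lemma f2_cases (c : F2) : c = 0 ∨ c = 1 := by revert c; decide

lemma add_self_f2 {M : Type*} [AddCommGroup M] [Module F2 M] (a : M) : a + a = 0 := by
  rw [← two_smul F2 a, show (2 : F2) = 0 by decide, zero_smul]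

lemma P_cons_of_mem {m : ℕ} {x : V n} {u : Fin (m + 1) → V n} (h : (x, u 0) ∈ P u) :
    P (Fin.cons x u) = P u := by
  rw [P_cons, sup_eq_right.mpr]
  rwa [span_singleton_le_iff_mem]

/-- if head not in span of rest, the slice is empty -/
lemma slice_empty {m : ℕ} {u : Fin (m + 1) → V n} (hb : ¬ SbP u) (x : V n) :
    (x, u 0) ∉ P u := fun h =>
  hb ((Sb_iff_mem_map_snd u).mpr ⟨(x, u 0), h, rfl⟩)

lemma comap_inl_cons_of_not_sb {m : ℕ} {u : Fin (m + 1) → V n} (hb : ¬ SbP u) (x : V n) :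
    Submodule.comap (LinearMap.inl F2 (V n) (V n)) (P (Fin.cons x u))
      = Submodule.comap (LinearMap.inl F2 (V n) (V n)) (P u) := by
  rw [P_cons]
  ext y
  simp only [mem_comap, LinearMap.inl_apply]
  constructor
  · intro hy
    rcases Submodule.mem_sup.mp hy with ⟨a, ha, b, hbm, hab⟩
    rcases Submodule.mem_span_singleton.mp ha with ⟨c, rfl⟩
    rcases f2_cases c with rfl | rfl
    · rw [zero_smul, zero_add] at hab; rwa [hab] at hbm
    · exfalso
      rw [one_smul] at hab
      have h1 : (x, u 0) + ((x, u 0) + b) = (x, u 0) + (y, 0) := by rw [hab]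
      rw [← add_assoc, add_self_f2, zero_add] at h1
      have hb2 : b = (x + y, u 0) := by rw [h1, Prod.mk_add_mk, add_zero]
      exact hb ((Sb_iff_mem_map_snd u).mpr ⟨b, hbm, by rw [hb2]; rfl⟩)
  · intro hy
    exact Submodule.mem_sup_right hy

lemma comap_inl_cons_of_sb {m : ℕ} {u : Fin (m + 1) → V n} {y₀ : V n}
    (hy₀ : (y₀, u 0) ∈ P u) (x : V n) :
    Submodule.comap (LinearMap.inl F2 (V n) (V n)) (P (Fin.cons x u))
      = span F2 {x + y₀} ⊔ Submodule.comap (LinearMap.inl F2 (V n) (V n)) (P u) := by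
  rw [P_cons]
  ext y
  simp only [mem_comap, LinearMap.inl_apply]
  constructor
  · intro hy
    rcases Submodule.mem_sup.mp hy with ⟨a, ha, b, hbm, hab⟩
    rcases Submodule.mem_span_singleton.mp ha with ⟨c, rfl⟩
    rcases f2_cases c with rfl | rfl
    · rw [zero_smul, zero_add] at hab
      exact Submodule.mem_sup_right (by rwa [hab] at hbm)
    · rw [one_smul] at hab
      have h1 : (x, u 0) + ((x, u 0) + b) = (x, u 0) + (y, 0) := by rw [hab]
      rw [← add_assoc, add_self_f2, zero_add] at h1
      have hb2 : b = (x + y, u 0) := by rw [h1, Prod.mk_add_mk, add_zero]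
      -- b + (y₀, u 0) = (x + y + y₀, 0) ∈ P u
      have hsum : ((x + y) + y₀, (0 : V n)) ∈ P u := by
        have := Submodule.add_mem _ hbm hy₀
        rwa [hb2, Prod.mk_add_mk, add_self_f2] at this
      -- y = (x + y₀) + ((x + y) + y₀)
      have hyeq : y = (x + y₀) + ((x + y) + y₀) := by
        rw [show (x + y₀) + ((x + y) + y₀) = (x + x) + (y₀ + y₀) + y by abel,
          add_self_f2, add_self_f2, zero_add, zero_add]
      rw [hyeq]
      exact Submodule.add_mem _
        (Submodule.mem_sup_left (Submodule.mem_span_singleton_self _))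
        (Submodule.mem_sup_right hsum)
  · intro hy
    rcases Submodule.mem_sup.mp hy with ⟨a, ha, b, hbm, hab⟩
    rcases Submodule.mem_span_singleton.mp ha with ⟨c, rfl⟩
    rw [← hab]
    rcases f2_cases c with rfl | rfl
    · rw [zero_smul, zero_add]
      exact Submodule.mem_sup_right hbm
    · rw [one_smul]
      -- (x + y₀ + b, 0) = (x, u 0) + (y₀, u 0) + (b, 0)
      have : ((x + y₀) + b, (0:V n)) = (x, u 0) + ((y₀, u 0) + (b, (0:V n))) := by
        rw [Prod.mk_add_mk, Prod.mk_add_mk, ← add_assoc]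
        congr 1
        rw [← add_assoc, add_self_f2, zero_add]
      rw [this]
      have hbP : ((b, (0 : V n)) : V n × V n) ∈ P u := hbm
      exact Submodule.add_mem _
        (Submodule.mem_sup_left (Submodule.mem_span_singleton_self _))
        (Submodule.mem_sup_right (Submodule.add_mem _ hy₀ hbP))

lemma not_slice_witness {m : ℕ} {u : Fin (m + 1) → V n} {y₀ x : V n}
    (hy₀ : (y₀, u 0) ∈ P u) (hx : (x, u 0) ∉ P u) :
    x + y₀ ∉ Submodule.comap (LinearMap.inl F2 (V n) (V n)) (P u) := by
  intro h
  apply hx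
  have := Submodule.add_mem _ (show ((x + y₀, (0:V n)) : V n × V n) ∈ P u from h) hy₀
  rwa [Prod.mk_add_mk, zero_add, add_assoc, add_self_f2, add_zero] at this


lemma Sc_cons_of_mem {m : ℕ} {x : V n} {u : Fin (m + 1) → V n}
    (hx : x ∈ span F2 (Set.range u)) : Sc (Fin.cons x u) = Sc u := by
  unfold Sc; rw [Fin.range_cons, span_insert_eq_span hx]

lemma Sc_cons_of_not_mem {m : ℕ} {x : V n} {u : Fin (m + 1) → V n}
    (hx : x ∉ span F2 (Set.range u)) : Sc (Fin.cons x u) = Sc u + 1 := by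
  unfold Sc; rw [Fin.range_cons, span_insert, finrank_span_sup _ hx]

lemma SbP_cons_iff {m : ℕ} (x : V n) (u : Fin (m + 1) → V n) :
    SbP (Fin.cons x u) ↔ x ∈ span F2 (Set.range u) := by
  unfold SbP
  simp only [Fin.cons_zero, Fin.cons_succ]

lemma Sb_cons_true {m : ℕ} {x : V n} {u : Fin (m + 1) → V n}
    (hx : x ∈ span F2 (Set.range u)) : Sb (Fin.cons x u) = true :=
  (Sb_iff _).mpr ((SbP_cons_iff x u).mpr hx)

lemma Sb_cons_false {m : ℕ} {x : V n} {u : Fin (m + 1) → V n}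
    (hx : x ∉ span F2 (Set.range u)) : Sb (Fin.cons x u) = false := by
  rw [← Bool.not_eq_true, Sb_iff]
  exact fun h => hx ((SbP_cons_iff x u).mp h)

lemma Sz_cons_of_mem {m : ℕ} {x : V n} {u : Fin (m + 1) → V n}
    (h : (x, u 0) ∈ P u) : Sz (Fin.cons x u) = Sz u := by
  unfold Sz; rw [P_cons_of_mem h]

lemma Sz_cons_of_not_sb {m : ℕ} {u : Fin (m + 1) → V n} (hb : ¬ SbP u) (x : V n) :
    Sz (Fin.cons x u) = Sz u := by
  unfold Sz; rw [comap_inl_cons_of_not_sb hb]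

lemma Sz_cons_of_sb {m : ℕ} {u : Fin (m + 1) → V n} {y₀ x : V n}
    (hy₀ : (y₀, u 0) ∈ P u) (hx : (x, u 0) ∉ P u) :
    Sz (Fin.cons x u) = Sz u + 1 := by
  unfold Sz
  rw [comap_inl_cons_of_sb hy₀ x, finrank_span_sup _ (not_slice_witness hy₀ hx)]

lemma card_V : Fintype.card (V n) = 2 ^ n := by
  simp [ZMod.card]

lemma ncard_submodule {M : Type*} [AddCommGroup M] [Module F2 M] [Finite M]
    (Wm : Submodule F2 M) : Nat.card Wm = 2 ^ finrank F2 Wm := by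
  letI : Fintype Wm := Fintype.ofFinite _
  rw [Nat.card_eq_fintype_card, card_eq_pow_finrank (K := F2) (V := Wm), ZMod.card]

lemma card_mem_span {m : ℕ} (u : Fin (m + 1) → V n) :
    Nat.card {x : V n // x ∈ span F2 (Set.range u)} = 2 ^ Sc u :=
  ncard_submodule _

lemma card_slice {m : ℕ} {u : Fin (m + 1) → V n} {y₀ : V n}
    (hy₀ : (y₀, u 0) ∈ P u) :
    Nat.card {x : V n // (x, u 0) ∈ P u} = 2 ^ Sz u := by
  have e : {x : V n // (x, u 0) ∈ P u}
      ≃ {y : V n // y ∈ Submodule.comap (LinearMap.inl F2 (V n) (V n)) (P u)} := by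
    refine ⟨fun x => ⟨x.1 + y₀, ?_⟩, fun y => ⟨y.1 + y₀, ?_⟩, fun x => ?_, fun y => ?_⟩
    · show ((x.1 + y₀, (0 : V n)) : V n × V n) ∈ P u
      have := Submodule.add_mem _ x.2 hy₀
      rwa [Prod.mk_add_mk, add_self_f2] at this
    · have hyP : ((y.1, (0 : V n)) : V n × V n) ∈ P u := y.2
      have := Submodule.add_mem _ hyP hy₀
      rwa [Prod.mk_add_mk, zero_add] at this
    · apply Subtype.ext
      show x.1 + y₀ + y₀ = x.1
      rw [add_assoc, add_self_f2, add_zero]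
    · apply Subtype.ext
      show y.1 + y₀ + y₀ = y.1
      rw [add_assoc, add_self_f2, add_zero]
  rw [Nat.card_congr e, ncard_submodule]
  rfl

lemma sum_split3 {α : Type*} [Fintype α] (p q : α → Prop) [DecidablePred p]
    [DecidablePred q] (hpq : ∀ a, p a → q a)
    (A B C : ℤ) :
    ∑ a : α, (if p a then A else if q a then B else C)
      = (Nat.card {a // p a} : ℤ) * (A - B) + (Nat.card {a // q a} : ℤ) * (B - C)
        + (Fintype.card α : ℤ) * C := by
  have hpt : ∀ a, (if p a then A else if q a then B else C)
      = (if p a then A - B else 0) + ((if q a then B - C else 0) + C) := by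
    intro a
    by_cases hp : p a
    · simp only [hp, hpq a hp, if_true]; ring
    · by_cases hq : q a <;> simp [hp, hq]
  rw [Finset.sum_congr rfl (fun a _ => hpt a), Finset.sum_add_distrib,
    Finset.sum_add_distrib, Finset.sum_const, ← Finset.sum_filter, ← Finset.sum_filter,
    Finset.sum_const, Finset.sum_const]
  rw [Nat.card_eq_fintype_card, Nat.card_eq_fintype_card, Fintype.card_subtype,
    Fintype.card_subtype, Finset.card_univ]
  push_cast
  ring

lemma sum_split2 {α : Type*} [Fintype α] (q : α → Prop) [DecidablePred q] (B C : ℤ) :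
    ∑ a : α, (if q a then B else C)
      = (Nat.card {a // q a} : ℤ) * (B - C) + (Fintype.card α : ℤ) * C := by
  have := sum_split3 (fun _ : α => False) q (by simp) B B C
  simpa using this


lemma step {m : ℕ} (u : Fin (m + 1) → V n) (r : ℕ) :
    ∑ x : V n, W n r (Sc (Fin.cons x u)) (Sz (Fin.cons x u)) (Sb (Fin.cons x u))
      = W n (r + 1) (Sc u) (Sz u) (Sb u) := by
  classical
  by_cases hb : SbP u
  · obtain ⟨v, hvP, hv⟩ := (Sb_iff_mem_map_snd u).mp hb
    have hy₀ : (v.1, u 0) ∈ P u := by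
      have he : (v.1, u 0) = v := Prod.ext rfl hv.symm
      rw [he]; exact hvP
    have hSb : Sb u = true := (Sb_iff u).mpr hb
    have key : ∀ x : V n,
        W n r (Sc (Fin.cons x u)) (Sz (Fin.cons x u)) (Sb (Fin.cons x u))
          = if (x, u 0) ∈ P u then W n r (Sc u) (Sz u) true
            else if x ∈ span F2 (Set.range u) then W n r (Sc u) (Sz u + 1) true
            else W n r (Sc u + 1) (Sz u + 1) false := by
      intro x
      by_cases h1 : (x, u 0) ∈ P u
      · rw [if_pos h1, Sc_cons_of_mem (slice_mem_span u h1), Sz_cons_of_mem h1,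
          Sb_cons_true (slice_mem_span u h1)]
      · rw [if_neg h1]
        by_cases h2 : x ∈ span F2 (Set.range u)
        · rw [if_pos h2, Sc_cons_of_mem h2, Sz_cons_of_sb hy₀ h1, Sb_cons_true h2]
        · rw [if_neg h2, Sc_cons_of_not_mem h2, Sz_cons_of_sb hy₀ h1, Sb_cons_false h2]
    rw [Finset.sum_congr rfl fun x _ => key x,
      sum_split3 _ _ (fun x hx => slice_mem_span u hx) _ _ _,
      card_slice hy₀, card_mem_span u, card_V, hSb]
    show _ = W n (r + 1) (Sc u) (Sz u) true
    rw [W]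
    push_cast
    ring
  · have hSb : Sb u = false := by rw [← Bool.not_eq_true, Sb_iff]; exact hb
    have key : ∀ x : V n,
        W n r (Sc (Fin.cons x u)) (Sz (Fin.cons x u)) (Sb (Fin.cons x u))
          = if x ∈ span F2 (Set.range u) then W n r (Sc u) (Sz u) true
            else W n r (Sc u + 1) (Sz u) false := by
      intro x
      by_cases h2 : x ∈ span F2 (Set.range u)
      · rw [if_pos h2, Sc_cons_of_mem h2, Sz_cons_of_not_sb hb, Sb_cons_true h2]
      · rw [if_neg h2, Sc_cons_of_not_mem h2, Sz_cons_of_not_sb hb, Sb_cons_false h2]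
    rw [Finset.sum_congr rfl fun x _ => key x, sum_split2,
      card_mem_span u, card_V, hSb]
    show _ = W n (r + 1) (Sc u) (Sz u) false
    rw [W]
    push_cast
    ring


lemma finrank_P_eq {m : ℕ} (u : Fin (m + 1) → V n) :
    finrank F2 (P u)
      = finrank F2 (span F2 (Set.range fun i : Fin m => u i.succ)) + Sz u := by
  classical
  have h := LinearMap.finrank_range_add_finrank_ker
    ((LinearMap.snd F2 (V n) (V n)).comp (P u).subtype)
  rw [LinearMap.range_comp, Submodule.range_subtype, LinearMap.ker_comp] at h
  -- ker part
  have h1 : Submodule.comap (P u).subtype (LinearMap.ker (LinearMap.snd F2 (V n) (V n)))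
      = Submodule.comap (P u).subtype
          (LinearMap.ker (LinearMap.snd F2 (V n) (V n)) ⊓ P u) := by
    ext z
    simp [z.2]
  have h2 : finrank F2 ↥(Submodule.comap (P u).subtype
      (LinearMap.ker (LinearMap.snd F2 (V n) (V n)))) = Sz u := by
    rw [h1]
    rw [(Submodule.comapSubtypeEquivOfLe
      (inf_le_right : LinearMap.ker (LinearMap.snd F2 (V n) (V n)) ⊓ P u ≤ P u)).finrank_eq]
    rw [← LinearMap.range_inl F2 (V n) (V n), ← Submodule.map_comap_eq]
    rw [← (Submodule.equivMapOfInjective _ LinearMap.inl_injective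
      (Submodule.comap (LinearMap.inl F2 (V n) (V n)) (P u))).finrank_eq]
    rfl
  rw [h2, range_comp_snd] at h
  omega

lemma finrank_P {m : ℕ} (u : Fin (m + 1) → V n) :
    finrank F2 (P u) = (if Sb u then Sc u + Sz u else Sc u + Sz u - 1) := by
  have htail : Set.range u = insert (u 0) (Set.range fun i : Fin m => u i.succ) := by
    conv_lhs => rw [← Fin.cons_self_tail u]
    rw [Fin.range_cons]
    rfl
  by_cases hb : SbP u
  · have hSb : Sb u = true := (Sb_iff u).mpr hb
    rw [hSb, if_pos rfl, finrank_P_eq]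
    have : Sc u = finrank F2 (span F2 (Set.range fun i : Fin m => u i.succ)) := by
      unfold Sc
      rw [htail, span_insert_eq_span hb]
    omega
  · have hSb : Sb u = false := by rw [← Bool.not_eq_true, Sb_iff]; exact hb
    rw [hSb, if_neg (by simp), finrank_P_eq]
    have : Sc u = finrank F2 (span F2 (Set.range fun i : Fin m => u i.succ)) + 1 := by
      unfold Sc
      rw [htail, span_insert, finrank_span_sup _ hb]
    omega

lemma chain_step (t r : ℕ) :
    ∑ u : Fin (t + 1 + 1) → V n, W n r (Sc u) (Sz u) (Sb u)
      = ∑ u : Fin (t + 1) → V n, W n (r + 1) (Sc u) (Sz u) (Sb u) := by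
  rw [← Fintype.sum_equiv (Fin.consEquiv fun _ : Fin (t + 1 + 1) => V n)
    (fun p => W n r (Sc (Fin.cons p.1 p.2)) (Sz (Fin.cons p.1 p.2)) (Sb (Fin.cons p.1 p.2)))
    (fun u => W n r (Sc u) (Sz u) (Sb u)) (fun p => rfl)]
  rw [Fintype.sum_prod_type_right]
  exact Finset.sum_congr rfl fun v _ => step v r

lemma base_eval (r : ℕ) :
    ∑ u : Fin 1 → V n, W n r (Sc u) (Sz u) (Sb u)
      = W n r 0 0 true + ((2:ℤ) ^ n - 1) * W n r 1 0 false := by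
  classical
  have key : ∀ u : Fin 1 → V n,
      W n r (Sc u) (Sz u) (Sb u)
        = if u 0 = 0 then W n r 0 0 true else W n r 1 0 false := by
    intro u
    have hrange : Set.range u = {u 0} := by
      ext y; constructor
      · rintro ⟨i, rfl⟩; rw [Fin.fin_one_eq_zero i]; rfl
      · rintro rfl; exact ⟨0, rfl⟩
    have hP : P u = ⊥ := by
      unfold P
      rw [show Set.range (pr u) = ∅ from Set.range_eq_empty _, span_empty]
    have hz : Sz u = 0 := by
      unfold Sz
      rw [hP]
      have hc : Submodule.comap (LinearMap.inl F2 (V n) (V n))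
          (⊥ : Submodule F2 (V n × V n)) = ⊥ := by
        rw [Submodule.comap_bot]
        exact LinearMap.ker_eq_bot.mpr LinearMap.inl_injective
      rw [hc, finrank_bot]
    have hsb : SbP u ↔ u 0 = 0 := by
      unfold SbP
      rw [show Set.range (fun i : Fin 0 => u i.succ) = ∅ from Set.range_eq_empty _,
        span_empty, Submodule.mem_bot]
    by_cases h0 : u 0 = 0
    · have hc : Sc u = 0 := by
        unfold Sc
        rw [hrange, h0, span_zero_singleton, finrank_bot]
      rw [if_pos h0, hc, hz, (Sb_iff u).mpr (hsb.mpr h0)]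
    · have hc : Sc u = 1 := by
        unfold Sc
        rw [hrange, finrank_span_singleton h0]
      have hsbf : Sb u = false := by
        rw [← Bool.not_eq_true, Sb_iff]; exact fun h => h0 (hsb.mp h)
      rw [if_neg h0, hc, hz, hsbf]
  rw [Finset.sum_congr rfl fun u _ => key u, sum_split2]
  have hcard : Nat.card {u : Fin 1 → V n // u 0 = 0} = 1 := by
    rw [Nat.card_eq_one_iff_unique]
    constructor
    · constructor
      rintro ⟨u, hu⟩ ⟨v, hv⟩
      apply Subtype.ext
      funext i
      rw [Fin.fin_one_eq_zero i]
      show u 0 = v 0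
      rw [hu, hv]
    · exact ⟨⟨fun _ => 0, rfl⟩⟩
  rw [hcard]
  rw [show Fintype.card (Fin 1 → V n) = 2 ^ n by
    rw [Fintype.card_fun]
    simp [card_V]]
  push_cast
  ring


lemma count_eq_sum :
    (Nat.card {u : Fin 11 → V n // finrank F2 (P u) = 8} : ℤ)
      = ∑ u : Fin 11 → V n, W n 0 (Sc u) (Sz u) (Sb u) := by
  classical
  have key : ∀ u : Fin 11 → V n, W n 0 (Sc u) (Sz u) (Sb u)
      = if finrank F2 (P u) = 8 then 1 else 0 := by
    intro u
    rw [W, finrank_P u]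
  rw [Finset.sum_congr rfl fun u _ => key u, Nat.card_eq_fintype_card,
    Fintype.card_subtype, Finset.sum_boole]

lemma chain_full :
    ∑ u : Fin 11 → V n, W n 0 (Sc u) (Sz u) (Sb u)
      = W n 10 0 0 true + ((2:ℤ) ^ n - 1) * W n 10 1 0 false := by
  calc ∑ u : Fin 11 → V n, W n 0 (Sc u) (Sz u) (Sb u)
      = ∑ u : Fin 10 → V n, W n 1 (Sc u) (Sz u) (Sb u) := chain_step 9 0
    _ = ∑ u : Fin 9 → V n, W n 2 (Sc u) (Sz u) (Sb u) := chain_step 8 1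
    _ = ∑ u : Fin 8 → V n, W n 3 (Sc u) (Sz u) (Sb u) := chain_step 7 2
    _ = ∑ u : Fin 7 → V n, W n 4 (Sc u) (Sz u) (Sb u) := chain_step 6 3
    _ = ∑ u : Fin 6 → V n, W n 5 (Sc u) (Sz u) (Sb u) := chain_step 5 4
    _ = ∑ u : Fin 5 → V n, W n 6 (Sc u) (Sz u) (Sb u) := chain_step 4 5
    _ = ∑ u : Fin 4 → V n, W n 7 (Sc u) (Sz u) (Sb u) := chain_step 3 6
    _ = ∑ u : Fin 3 → V n, W n 8 (Sc u) (Sz u) (Sb u) := chain_step 2 7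
    _ = ∑ u : Fin 2 → V n, W n 9 (Sc u) (Sz u) (Sb u) := chain_step 1 8
    _ = ∑ u : Fin 1 → V n, W n 10 (Sc u) (Sz u) (Sb u) := chain_step 0 9
    _ = W n 10 0 0 true + ((2:ℤ) ^ n - 1) * W n 10 1 0 false := base_eval 10

def evenIdx (l : Fin n) : Fin (2 * n) := ⟨2 * l.val, by omega⟩
def oddIdx (l : Fin n) : Fin (2 * n) := ⟨2 * l.val + 1, by omega⟩

def Esplit : (Fin (2 * n) → F2) ≃ₗ[F2] (V n × V n) where
  toFun g := (fun l => g (evenIdx l), fun l => g (oddIdx l))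
  map_add' g h := rfl
  map_smul' c g := rfl
  invFun p := fun r => if r.val % 2 = 0
    then p.1 ⟨r.val / 2, by have := r.isLt; omega⟩
    else p.2 ⟨r.val / 2, by have := r.isLt; omega⟩
  left_inv g := by
    funext r
    by_cases h : r.val % 2 = 0
    · simp only [h, if_pos]
      congr 1
      apply Fin.ext
      show 2 * (r.val / 2) = r.val
      omega
    · simp only [h, if_neg, if_false]
      congr 1
      apply Fin.ext
      show 2 * (r.val / 2) + 1 = r.val
      omega
  right_inv p := by
    apply Prod.ext
    · funext l
      show (if (2 * l.val) % 2 = 0 then _ else _) = p.1 l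
      rw [if_pos (by omega)]
      exact congrArg p.1 (Fin.ext (show (evenIdx l).val / 2 = l.val by
        simp only [evenIdx]; omega))
    · funext l
      show (if (2 * l.val + 1) % 2 = 0 then _ else _) = p.2 l
      rw [if_neg (by omega)]
      exact congrArg p.2 (Fin.ext (show (oddIdx l).val / 2 = l.val by
        simp only [oddIdx]; omega))


variable {n : ℕ}

lemma rank_eq (α : Fin n → (Fin 11 → F2)) :
    (persymMatrix n 10 α).rank
      = finrank F2 (P (fun (j : Fin 11) (l : Fin n) => α l j)) := by
  rw [Matrix.rank_eq_finrank_span_cols]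
  rw [← LinearEquiv.finrank_map_eq (Esplit (n := n))]
  rw [Submodule.map_span]
  have happ : ∀ (a c : Fin n) (b d : Fin 11), c = a → d = b → α c d = α a b := by
    rintro a c b d rfl rfl; rfl
  have hfun : ⇑(Esplit (n := n)) ∘ ((persymMatrix n 10 α).transpose)
      = pr (fun (j : Fin 11) (l : Fin n) => α l j) := by
    funext j
    apply Prod.ext
    · funext l
      exact happ l _ j.castSucc _
        (Fin.ext (show (2 * l.val) / 2 = l.val by omega))
        (Fin.ext (show j.val + (2 * l.val) % 2 = j.val by omega))
    · funext l
      exact happ l _ j.succ _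
        (Fin.ext (show (2 * l.val + 1) / 2 = l.val by omega))
        (Fin.ext (show j.val + (2 * l.val + 1) % 2 = j.val + 1 by omega))
  have h2 : ⇑((Esplit (n := n)) :
      (Fin (2 * n) → F2) →ₗ[F2] (V n × V n)) ∘ (persymMatrix n 10 α).col
      = pr (fun (j : Fin 11) (l : Fin n) => α l j) := hfun
  rw [← Set.range_comp, h2]
  rfl



lemma WE_0_0_0_t (n : ℕ) : W n 0 0 0 true = 0 := rfl
lemma WE_0_0_1_t (n : ℕ) : W n 0 0 1 true = 0 := rfl
lemma WE_0_0_2_t (n : ℕ) : W n 0 0 2 true = 0 := rfl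
lemma WE_0_0_3_t (n : ℕ) : W n 0 0 3 true = 0 := rfl
lemma WE_0_0_4_t (n : ℕ) : W n 0 0 4 true = 0 := rfl
lemma WE_0_0_5_t (n : ℕ) : W n 0 0 5 true = 0 := rfl
lemma WE_0_0_6_t (n : ℕ) : W n 0 0 6 true = 0 := rfl
lemma WE_0_0_7_t (n : ℕ) : W n 0 0 7 true = 0 := rfl
lemma WE_0_0_8_t (n : ℕ) : W n 0 0 8 true = (1) := rfl
lemma WE_0_0_9_t (n : ℕ) : W n 0 0 9 true = 0 := rfl
lemma WE_0_0_10_t (n : ℕ) : W n 0 0 10 true = 0 := rfl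
lemma WE_0_1_0_t (n : ℕ) : W n 0 1 0 true = 0 := rfl
lemma WE_0_1_1_f (n : ℕ) : W n 0 1 1 false = 0 := rfl
lemma WE_0_1_1_t (n : ℕ) : W n 0 1 1 true = 0 := rfl
lemma WE_0_1_2_f (n : ℕ) : W n 0 1 2 false = 0 := rfl
lemma WE_0_1_2_t (n : ℕ) : W n 0 1 2 true = 0 := rfl
lemma WE_0_1_3_f (n : ℕ) : W n 0 1 3 false = 0 := rfl
lemma WE_0_1_3_t (n : ℕ) : W n 0 1 3 true = 0 := rfl
lemma WE_0_1_4_f (n : ℕ) : W n 0 1 4 false = 0 := rfl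
lemma WE_0_1_4_t (n : ℕ) : W n 0 1 4 true = 0 := rfl
lemma WE_0_1_5_f (n : ℕ) : W n 0 1 5 false = 0 := rfl
lemma WE_0_1_5_t (n : ℕ) : W n 0 1 5 true = 0 := rfl
lemma WE_0_1_6_f (n : ℕ) : W n 0 1 6 false = 0 := rfl
lemma WE_0_1_6_t (n : ℕ) : W n 0 1 6 true = 0 := rfl
lemma WE_0_1_7_f (n : ℕ) : W n 0 1 7 false = 0 := rfl
lemma WE_0_1_7_t (n : ℕ) : W n 0 1 7 true = (1) := rfl
lemma WE_0_1_8_f (n : ℕ) : W n 0 1 8 false = (1) := rfl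
lemma WE_0_1_8_t (n : ℕ) : W n 0 1 8 true = 0 := rfl
lemma WE_0_1_9_f (n : ℕ) : W n 0 1 9 false = 0 := rfl
lemma WE_0_1_9_t (n : ℕ) : W n 0 1 9 true = 0 := rfl
lemma WE_0_1_10_f (n : ℕ) : W n 0 1 10 false = 0 := rfl
lemma WE_0_2_0_t (n : ℕ) : W n 0 2 0 true = 0 := rfl
lemma WE_0_2_1_f (n : ℕ) : W n 0 2 1 false = 0 := rfl
lemma WE_0_2_1_t (n : ℕ) : W n 0 2 1 true = 0 := rfl
lemma WE_0_2_2_f (n : ℕ) : W n 0 2 2 false = 0 := rfl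
lemma WE_0_2_2_t (n : ℕ) : W n 0 2 2 true = 0 := rfl
lemma WE_0_2_3_f (n : ℕ) : W n 0 2 3 false = 0 := rfl
lemma WE_0_2_3_t (n : ℕ) : W n 0 2 3 true = 0 := rfl
lemma WE_0_2_4_f (n : ℕ) : W n 0 2 4 false = 0 := rfl
lemma WE_0_2_4_t (n : ℕ) : W n 0 2 4 true = 0 := rfl
lemma WE_0_2_5_f (n : ℕ) : W n 0 2 5 false = 0 := rfl
lemma WE_0_2_5_t (n : ℕ) : W n 0 2 5 true = 0 := rfl
lemma WE_0_2_6_f (n : ℕ) : W n 0 2 6 false = 0 := rfl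
lemma WE_0_2_6_t (n : ℕ) : W n 0 2 6 true = (1) := rfl
lemma WE_0_2_7_f (n : ℕ) : W n 0 2 7 false = (1) := rfl
lemma WE_0_2_7_t (n : ℕ) : W n 0 2 7 true = 0 := rfl
lemma WE_0_2_8_f (n : ℕ) : W n 0 2 8 false = 0 := rfl
lemma WE_0_2_8_t (n : ℕ) : W n 0 2 8 true = 0 := rfl
lemma WE_0_2_9_f (n : ℕ) : W n 0 2 9 false = 0 := rfl
lemma WE_0_3_0_t (n : ℕ) : W n 0 3 0 true = 0 := rfl
lemma WE_0_3_1_f (n : ℕ) : W n 0 3 1 false = 0 := rfl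
lemma WE_0_3_1_t (n : ℕ) : W n 0 3 1 true = 0 := rfl
lemma WE_0_3_2_f (n : ℕ) : W n 0 3 2 false = 0 := rfl
lemma WE_0_3_2_t (n : ℕ) : W n 0 3 2 true = 0 := rfl
lemma WE_0_3_3_f (n : ℕ) : W n 0 3 3 false = 0 := rfl
lemma WE_0_3_3_t (n : ℕ) : W n 0 3 3 true = 0 := rfl
lemma WE_0_3_4_f (n : ℕ) : W n 0 3 4 false = 0 := rfl
lemma WE_0_3_4_t (n : ℕ) : W n 0 3 4 true = 0 := rfl
lemma WE_0_3_5_f (n : ℕ) : W n 0 3 5 false = 0 := rfl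
lemma WE_0_3_5_t (n : ℕ) : W n 0 3 5 true = (1) := rfl
lemma WE_0_3_6_f (n : ℕ) : W n 0 3 6 false = (1) := rfl
lemma WE_0_3_6_t (n : ℕ) : W n 0 3 6 true = 0 := rfl
lemma WE_0_3_7_f (n : ℕ) : W n 0 3 7 false = 0 := rfl
lemma WE_0_3_7_t (n : ℕ) : W n 0 3 7 true = 0 := rfl
lemma WE_0_3_8_f (n : ℕ) : W n 0 3 8 false = 0 := rfl
lemma WE_0_4_0_t (n : ℕ) : W n 0 4 0 true = 0 := rfl
lemma WE_0_4_1_f (n : ℕ) : W n 0 4 1 false = 0 := rfl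
lemma WE_0_4_1_t (n : ℕ) : W n 0 4 1 true = 0 := rfl
lemma WE_0_4_2_f (n : ℕ) : W n 0 4 2 false = 0 := rfl
lemma WE_0_4_2_t (n : ℕ) : W n 0 4 2 true = 0 := rfl
lemma WE_0_4_3_f (n : ℕ) : W n 0 4 3 false = 0 := rfl
lemma WE_0_4_3_t (n : ℕ) : W n 0 4 3 true = 0 := rfl
lemma WE_0_4_4_f (n : ℕ) : W n 0 4 4 false = 0 := rfl
lemma WE_0_4_4_t (n : ℕ) : W n 0 4 4 true = (1) := rfl
lemma WE_0_4_5_f (n : ℕ) : W n 0 4 5 false = (1) := rfl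
lemma WE_0_4_5_t (n : ℕ) : W n 0 4 5 true = 0 := rfl
lemma WE_0_4_6_f (n : ℕ) : W n 0 4 6 false = 0 := rfl
lemma WE_0_4_6_t (n : ℕ) : W n 0 4 6 true = 0 := rfl
lemma WE_0_4_7_f (n : ℕ) : W n 0 4 7 false = 0 := rfl
lemma WE_0_5_0_t (n : ℕ) : W n 0 5 0 true = 0 := rfl
lemma WE_0_5_1_f (n : ℕ) : W n 0 5 1 false = 0 := rfl
lemma WE_0_5_1_t (n : ℕ) : W n 0 5 1 true = 0 := rfl
lemma WE_0_5_2_f (n : ℕ) : W n 0 5 2 false = 0 := rfl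
lemma WE_0_5_2_t (n : ℕ) : W n 0 5 2 true = 0 := rfl
lemma WE_0_5_3_f (n : ℕ) : W n 0 5 3 false = 0 := rfl
lemma WE_0_5_3_t (n : ℕ) : W n 0 5 3 true = (1) := rfl
lemma WE_0_5_4_f (n : ℕ) : W n 0 5 4 false = (1) := rfl
lemma WE_0_5_4_t (n : ℕ) : W n 0 5 4 true = 0 := rfl
lemma WE_0_5_5_f (n : ℕ) : W n 0 5 5 false = 0 := rfl
lemma WE_0_5_5_t (n : ℕ) : W n 0 5 5 true = 0 := rfl
lemma WE_0_5_6_f (n : ℕ) : W n 0 5 6 false = 0 := rfl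
lemma WE_0_6_0_t (n : ℕ) : W n 0 6 0 true = 0 := rfl
lemma WE_0_6_1_f (n : ℕ) : W n 0 6 1 false = 0 := rfl
lemma WE_0_6_1_t (n : ℕ) : W n 0 6 1 true = 0 := rfl
lemma WE_0_6_2_f (n : ℕ) : W n 0 6 2 false = 0 := rfl
lemma WE_0_6_2_t (n : ℕ) : W n 0 6 2 true = (1) := rfl
lemma WE_0_6_3_f (n : ℕ) : W n 0 6 3 false = (1) := rfl
lemma WE_0_6_3_t (n : ℕ) : W n 0 6 3 true = 0 := rfl
lemma WE_0_6_4_f (n : ℕ) : W n 0 6 4 false = 0 := rfl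
lemma WE_0_6_4_t (n : ℕ) : W n 0 6 4 true = 0 := rfl
lemma WE_0_6_5_f (n : ℕ) : W n 0 6 5 false = 0 := rfl
lemma WE_0_7_0_t (n : ℕ) : W n 0 7 0 true = 0 := rfl
lemma WE_0_7_1_f (n : ℕ) : W n 0 7 1 false = 0 := rfl
lemma WE_0_7_1_t (n : ℕ) : W n 0 7 1 true = (1) := rfl
lemma WE_0_7_2_f (n : ℕ) : W n 0 7 2 false = (1) := rfl
lemma WE_0_7_2_t (n : ℕ) : W n 0 7 2 true = 0 := rfl
lemma WE_0_7_3_f (n : ℕ) : W n 0 7 3 false = 0 := rfl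
lemma WE_0_7_3_t (n : ℕ) : W n 0 7 3 true = 0 := rfl
lemma WE_0_7_4_f (n : ℕ) : W n 0 7 4 false = 0 := rfl
lemma WE_0_8_0_t (n : ℕ) : W n 0 8 0 true = (1) := rfl
lemma WE_0_8_1_f (n : ℕ) : W n 0 8 1 false = (1) := rfl
lemma WE_0_8_1_t (n : ℕ) : W n 0 8 1 true = 0 := rfl
lemma WE_0_8_2_f (n : ℕ) : W n 0 8 2 false = 0 := rfl
lemma WE_0_8_2_t (n : ℕ) : W n 0 8 2 true = 0 := rfl
lemma WE_0_8_3_f (n : ℕ) : W n 0 8 3 false = 0 := rfl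
lemma WE_0_9_0_t (n : ℕ) : W n 0 9 0 true = 0 := rfl
lemma WE_0_9_1_f (n : ℕ) : W n 0 9 1 false = 0 := rfl
lemma WE_0_9_1_t (n : ℕ) : W n 0 9 1 true = 0 := rfl
lemma WE_0_9_2_f (n : ℕ) : W n 0 9 2 false = 0 := rfl
lemma WE_0_10_0_t (n : ℕ) : W n 0 10 0 true = 0 := rfl
lemma WE_0_10_1_f (n : ℕ) : W n 0 10 1 false = 0 := rfl
lemma WE_0_11_0_f (n : ℕ) : W n 0 11 0 false = 0 := rfl
lemma WE_1_0_0_t (n : ℕ) : W n 1 0 0 true = 0 := by rw [W, WE_0_0_0_t, WE_0_0_1_t, WE_0_1_1_f]; ring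
lemma WE_1_0_1_t (n : ℕ) : W n 1 0 1 true = 0 := by rw [W, WE_0_0_1_t, WE_0_0_2_t, WE_0_1_2_f]; ring
lemma WE_1_0_2_t (n : ℕ) : W n 1 0 2 true = 0 := by rw [W, WE_0_0_2_t, WE_0_0_3_t, WE_0_1_3_f]; ring
lemma WE_1_0_3_t (n : ℕ) : W n 1 0 3 true = 0 := by rw [W, WE_0_0_3_t, WE_0_0_4_t, WE_0_1_4_f]; ring
lemma WE_1_0_4_t (n : ℕ) : W n 1 0 4 true = 0 := by rw [W, WE_0_0_4_t, WE_0_0_5_t, WE_0_1_5_f]; ring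
lemma WE_1_0_5_t (n : ℕ) : W n 1 0 5 true = 0 := by rw [W, WE_0_0_5_t, WE_0_0_6_t, WE_0_1_6_f]; ring
lemma WE_1_0_6_t (n : ℕ) : W n 1 0 6 true = 0 := by rw [W, WE_0_0_6_t, WE_0_0_7_t, WE_0_1_7_f]; ring
lemma WE_1_0_7_t (n : ℕ) : W n 1 0 7 true = (1) * ((2:ℤ) ^ n) + (-128) := by rw [W, WE_0_0_7_t, WE_0_0_8_t, WE_0_1_8_f]; ring
lemma WE_1_0_8_t (n : ℕ) : W n 1 0 8 true = (256) := by rw [W, WE_0_0_8_t, WE_0_0_9_t, WE_0_1_9_f]; ring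
lemma WE_1_0_9_t (n : ℕ) : W n 1 0 9 true = 0 := by rw [W, WE_0_0_9_t, WE_0_0_10_t, WE_0_1_10_f]; ring
lemma WE_1_1_0_t (n : ℕ) : W n 1 1 0 true = 0 := by rw [W, WE_0_1_0_t, WE_0_1_1_t, WE_0_2_1_f]; ring
lemma WE_1_1_1_f (n : ℕ) : W n 1 1 1 false = 0 := by rw [W, WE_0_1_1_t, WE_0_2_1_f]; ring
lemma WE_1_1_1_t (n : ℕ) : W n 1 1 1 true = 0 := by rw [W, WE_0_1_1_t, WE_0_1_2_t, WE_0_2_2_f]; ring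
lemma WE_1_1_2_f (n : ℕ) : W n 1 1 2 false = 0 := by rw [W, WE_0_1_2_t, WE_0_2_2_f]; ring
lemma WE_1_1_2_t (n : ℕ) : W n 1 1 2 true = 0 := by rw [W, WE_0_1_2_t, WE_0_1_3_t, WE_0_2_3_f]; ring
lemma WE_1_1_3_f (n : ℕ) : W n 1 1 3 false = 0 := by rw [W, WE_0_1_3_t, WE_0_2_3_f]; ring
lemma WE_1_1_3_t (n : ℕ) : W n 1 1 3 true = 0 := by rw [W, WE_0_1_3_t, WE_0_1_4_t, WE_0_2_4_f]; ring
lemma WE_1_1_4_f (n : ℕ) : W n 1 1 4 false = 0 := by rw [W, WE_0_1_4_t, WE_0_2_4_f]; ring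
lemma WE_1_1_4_t (n : ℕ) : W n 1 1 4 true = 0 := by rw [W, WE_0_1_4_t, WE_0_1_5_t, WE_0_2_5_f]; ring
lemma WE_1_1_5_f (n : ℕ) : W n 1 1 5 false = 0 := by rw [W, WE_0_1_5_t, WE_0_2_5_f]; ring
lemma WE_1_1_5_t (n : ℕ) : W n 1 1 5 true = 0 := by rw [W, WE_0_1_5_t, WE_0_1_6_t, WE_0_2_6_f]; ring
lemma WE_1_1_6_f (n : ℕ) : W n 1 1 6 false = 0 := by rw [W, WE_0_1_6_t, WE_0_2_6_f]; ring
lemma WE_1_1_6_t (n : ℕ) : W n 1 1 6 true = (1) * ((2:ℤ) ^ n) + (-64) := by rw [W, WE_0_1_6_t, WE_0_1_7_t, WE_0_2_7_f]; ring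
lemma WE_1_1_7_f (n : ℕ) : W n 1 1 7 false = (1) * ((2:ℤ) ^ n) := by rw [W, WE_0_1_7_t, WE_0_2_7_f]; ring
lemma WE_1_1_7_t (n : ℕ) : W n 1 1 7 true = (128) := by rw [W, WE_0_1_7_t, WE_0_1_8_t, WE_0_2_8_f]; ring
lemma WE_1_1_8_f (n : ℕ) : W n 1 1 8 false = 0 := by rw [W, WE_0_1_8_t, WE_0_2_8_f]; ring
lemma WE_1_1_8_t (n : ℕ) : W n 1 1 8 true = 0 := by rw [W, WE_0_1_8_t, WE_0_1_9_t, WE_0_2_9_f]; ring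
lemma WE_1_1_9_f (n : ℕ) : W n 1 1 9 false = 0 := by rw [W, WE_0_1_9_t, WE_0_2_9_f]; ring
lemma WE_1_2_0_t (n : ℕ) : W n 1 2 0 true = 0 := by rw [W, WE_0_2_0_t, WE_0_2_1_t, WE_0_3_1_f]; ring
lemma WE_1_2_1_f (n : ℕ) : W n 1 2 1 false = 0 := by rw [W, WE_0_2_1_t, WE_0_3_1_f]; ring
lemma WE_1_2_1_t (n : ℕ) : W n 1 2 1 true = 0 := by rw [W, WE_0_2_1_t, WE_0_2_2_t, WE_0_3_2_f]; ring
lemma WE_1_2_2_f (n : ℕ) : W n 1 2 2 false = 0 := by rw [W, WE_0_2_2_t, WE_0_3_2_f]; ring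
lemma WE_1_2_2_t (n : ℕ) : W n 1 2 2 true = 0 := by rw [W, WE_0_2_2_t, WE_0_2_3_t, WE_0_3_3_f]; ring
lemma WE_1_2_3_f (n : ℕ) : W n 1 2 3 false = 0 := by rw [W, WE_0_2_3_t, WE_0_3_3_f]; ring
lemma WE_1_2_3_t (n : ℕ) : W n 1 2 3 true = 0 := by rw [W, WE_0_2_3_t, WE_0_2_4_t, WE_0_3_4_f]; ring
lemma WE_1_2_4_f (n : ℕ) : W n 1 2 4 false = 0 := by rw [W, WE_0_2_4_t, WE_0_3_4_f]; ring
lemma WE_1_2_4_t (n : ℕ) : W n 1 2 4 true = 0 := by rw [W, WE_0_2_4_t, WE_0_2_5_t, WE_0_3_5_f]; ring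
lemma WE_1_2_5_f (n : ℕ) : W n 1 2 5 false = 0 := by rw [W, WE_0_2_5_t, WE_0_3_5_f]; ring
lemma WE_1_2_5_t (n : ℕ) : W n 1 2 5 true = (1) * ((2:ℤ) ^ n) + (-32) := by rw [W, WE_0_2_5_t, WE_0_2_6_t, WE_0_3_6_f]; ring
lemma WE_1_2_6_f (n : ℕ) : W n 1 2 6 false = (1) * ((2:ℤ) ^ n) := by rw [W, WE_0_2_6_t, WE_0_3_6_f]; ring
lemma WE_1_2_6_t (n : ℕ) : W n 1 2 6 true = (64) := by rw [W, WE_0_2_6_t, WE_0_2_7_t, WE_0_3_7_f]; ring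
lemma WE_1_2_7_f (n : ℕ) : W n 1 2 7 false = 0 := by rw [W, WE_0_2_7_t, WE_0_3_7_f]; ring
lemma WE_1_2_7_t (n : ℕ) : W n 1 2 7 true = 0 := by rw [W, WE_0_2_7_t, WE_0_2_8_t, WE_0_3_8_f]; ring
lemma WE_1_2_8_f (n : ℕ) : W n 1 2 8 false = 0 := by rw [W, WE_0_2_8_t, WE_0_3_8_f]; ring
lemma WE_1_3_0_t (n : ℕ) : W n 1 3 0 true = 0 := by rw [W, WE_0_3_0_t, WE_0_3_1_t, WE_0_4_1_f]; ring
lemma WE_1_3_1_f (n : ℕ) : W n 1 3 1 false = 0 := by rw [W, WE_0_3_1_t, WE_0_4_1_f]; ring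
lemma WE_1_3_1_t (n : ℕ) : W n 1 3 1 true = 0 := by rw [W, WE_0_3_1_t, WE_0_3_2_t, WE_0_4_2_f]; ring
lemma WE_1_3_2_f (n : ℕ) : W n 1 3 2 false = 0 := by rw [W, WE_0_3_2_t, WE_0_4_2_f]; ring
lemma WE_1_3_2_t (n : ℕ) : W n 1 3 2 true = 0 := by rw [W, WE_0_3_2_t, WE_0_3_3_t, WE_0_4_3_f]; ring
lemma WE_1_3_3_f (n : ℕ) : W n 1 3 3 false = 0 := by rw [W, WE_0_3_3_t, WE_0_4_3_f]; ring
lemma WE_1_3_3_t (n : ℕ) : W n 1 3 3 true = 0 := by rw [W, WE_0_3_3_t, WE_0_3_4_t, WE_0_4_4_f]; ring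
lemma WE_1_3_4_f (n : ℕ) : W n 1 3 4 false = 0 := by rw [W, WE_0_3_4_t, WE_0_4_4_f]; ring
lemma WE_1_3_4_t (n : ℕ) : W n 1 3 4 true = (1) * ((2:ℤ) ^ n) + (-16) := by rw [W, WE_0_3_4_t, WE_0_3_5_t, WE_0_4_5_f]; ring
lemma WE_1_3_5_f (n : ℕ) : W n 1 3 5 false = (1) * ((2:ℤ) ^ n) := by rw [W, WE_0_3_5_t, WE_0_4_5_f]; ring
lemma WE_1_3_5_t (n : ℕ) : W n 1 3 5 true = (32) := by rw [W, WE_0_3_5_t, WE_0_3_6_t, WE_0_4_6_f]; ring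
lemma WE_1_3_6_f (n : ℕ) : W n 1 3 6 false = 0 := by rw [W, WE_0_3_6_t, WE_0_4_6_f]; ring
lemma WE_1_3_6_t (n : ℕ) : W n 1 3 6 true = 0 := by rw [W, WE_0_3_6_t, WE_0_3_7_t, WE_0_4_7_f]; ring
lemma WE_1_3_7_f (n : ℕ) : W n 1 3 7 false = 0 := by rw [W, WE_0_3_7_t, WE_0_4_7_f]; ring
lemma WE_1_4_0_t (n : ℕ) : W n 1 4 0 true = 0 := by rw [W, WE_0_4_0_t, WE_0_4_1_t, WE_0_5_1_f]; ring
lemma WE_1_4_1_f (n : ℕ) : W n 1 4 1 false = 0 := by rw [W, WE_0_4_1_t, WE_0_5_1_f]; ring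
lemma WE_1_4_1_t (n : ℕ) : W n 1 4 1 true = 0 := by rw [W, WE_0_4_1_t, WE_0_4_2_t, WE_0_5_2_f]; ring
lemma WE_1_4_2_f (n : ℕ) : W n 1 4 2 false = 0 := by rw [W, WE_0_4_2_t, WE_0_5_2_f]; ring
lemma WE_1_4_2_t (n : ℕ) : W n 1 4 2 true = 0 := by rw [W, WE_0_4_2_t, WE_0_4_3_t, WE_0_5_3_f]; ring
lemma WE_1_4_3_f (n : ℕ) : W n 1 4 3 false = 0 := by rw [W, WE_0_4_3_t, WE_0_5_3_f]; ring
lemma WE_1_4_3_t (n : ℕ) : W n 1 4 3 true = (1) * ((2:ℤ) ^ n) + (-8) := by rw [W, WE_0_4_3_t, WE_0_4_4_t, WE_0_5_4_f]; ring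
lemma WE_1_4_4_f (n : ℕ) : W n 1 4 4 false = (1) * ((2:ℤ) ^ n) := by rw [W, WE_0_4_4_t, WE_0_5_4_f]; ring
lemma WE_1_4_4_t (n : ℕ) : W n 1 4 4 true = (16) := by rw [W, WE_0_4_4_t, WE_0_4_5_t, WE_0_5_5_f]; ring
lemma WE_1_4_5_f (n : ℕ) : W n 1 4 5 false = 0 := by rw [W, WE_0_4_5_t, WE_0_5_5_f]; ring
lemma WE_1_4_5_t (n : ℕ) : W n 1 4 5 true = 0 := by rw [W, WE_0_4_5_t, WE_0_4_6_t, WE_0_5_6_f]; ring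
lemma WE_1_4_6_f (n : ℕ) : W n 1 4 6 false = 0 := by rw [W, WE_0_4_6_t, WE_0_5_6_f]; ring
lemma WE_1_5_0_t (n : ℕ) : W n 1 5 0 true = 0 := by rw [W, WE_0_5_0_t, WE_0_5_1_t, WE_0_6_1_f]; ring
lemma WE_1_5_1_f (n : ℕ) : W n 1 5 1 false = 0 := by rw [W, WE_0_5_1_t, WE_0_6_1_f]; ring
lemma WE_1_5_1_t (n : ℕ) : W n 1 5 1 true = 0 := by rw [W, WE_0_5_1_t, WE_0_5_2_t, WE_0_6_2_f]; ring
lemma WE_1_5_2_f (n : ℕ) : W n 1 5 2 false = 0 := by rw [W, WE_0_5_2_t, WE_0_6_2_f]; ring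
lemma WE_1_5_2_t (n : ℕ) : W n 1 5 2 true = (1) * ((2:ℤ) ^ n) + (-4) := by rw [W, WE_0_5_2_t, WE_0_5_3_t, WE_0_6_3_f]; ring
lemma WE_1_5_3_f (n : ℕ) : W n 1 5 3 false = (1) * ((2:ℤ) ^ n) := by rw [W, WE_0_5_3_t, WE_0_6_3_f]; ring
lemma WE_1_5_3_t (n : ℕ) : W n 1 5 3 true = (8) := by rw [W, WE_0_5_3_t, WE_0_5_4_t, WE_0_6_4_f]; ring
lemma WE_1_5_4_f (n : ℕ) : W n 1 5 4 false = 0 := by rw [W, WE_0_5_4_t, WE_0_6_4_f]; ring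
lemma WE_1_5_4_t (n : ℕ) : W n 1 5 4 true = 0 := by rw [W, WE_0_5_4_t, WE_0_5_5_t, WE_0_6_5_f]; ring
lemma WE_1_5_5_f (n : ℕ) : W n 1 5 5 false = 0 := by rw [W, WE_0_5_5_t, WE_0_6_5_f]; ring
lemma WE_1_6_0_t (n : ℕ) : W n 1 6 0 true = 0 := by rw [W, WE_0_6_0_t, WE_0_6_1_t, WE_0_7_1_f]; ring
lemma WE_1_6_1_f (n : ℕ) : W n 1 6 1 false = 0 := by rw [W, WE_0_6_1_t, WE_0_7_1_f]; ring
lemma WE_1_6_1_t (n : ℕ) : W n 1 6 1 true = (1) * ((2:ℤ) ^ n) + (-2) := by rw [W, WE_0_6_1_t, WE_0_6_2_t, WE_0_7_2_f]; ring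
lemma WE_1_6_2_f (n : ℕ) : W n 1 6 2 false = (1) * ((2:ℤ) ^ n) := by rw [W, WE_0_6_2_t, WE_0_7_2_f]; ring
lemma WE_1_6_2_t (n : ℕ) : W n 1 6 2 true = (4) := by rw [W, WE_0_6_2_t, WE_0_6_3_t, WE_0_7_3_f]; ring
lemma WE_1_6_3_f (n : ℕ) : W n 1 6 3 false = 0 := by rw [W, WE_0_6_3_t, WE_0_7_3_f]; ring
lemma WE_1_6_3_t (n : ℕ) : W n 1 6 3 true = 0 := by rw [W, WE_0_6_3_t, WE_0_6_4_t, WE_0_7_4_f]; ring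
lemma WE_1_6_4_f (n : ℕ) : W n 1 6 4 false = 0 := by rw [W, WE_0_6_4_t, WE_0_7_4_f]; ring
lemma WE_1_7_0_t (n : ℕ) : W n 1 7 0 true = (1) * ((2:ℤ) ^ n) + (-1) := by rw [W, WE_0_7_0_t, WE_0_7_1_t, WE_0_8_1_f]; ring
lemma WE_1_7_1_f (n : ℕ) : W n 1 7 1 false = (1) * ((2:ℤ) ^ n) := by rw [W, WE_0_7_1_t, WE_0_8_1_f]; ring
lemma WE_1_7_1_t (n : ℕ) : W n 1 7 1 true = (2) := by rw [W, WE_0_7_1_t, WE_0_7_2_t, WE_0_8_2_f]; ring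
lemma WE_1_7_2_f (n : ℕ) : W n 1 7 2 false = 0 := by rw [W, WE_0_7_2_t, WE_0_8_2_f]; ring
lemma WE_1_7_2_t (n : ℕ) : W n 1 7 2 true = 0 := by rw [W, WE_0_7_2_t, WE_0_7_3_t, WE_0_8_3_f]; ring
lemma WE_1_7_3_f (n : ℕ) : W n 1 7 3 false = 0 := by rw [W, WE_0_7_3_t, WE_0_8_3_f]; ring
lemma WE_1_8_0_t (n : ℕ) : W n 1 8 0 true = (1) := by rw [W, WE_0_8_0_t, WE_0_8_1_t, WE_0_9_1_f]; ring
lemma WE_1_8_1_f (n : ℕ) : W n 1 8 1 false = 0 := by rw [W, WE_0_8_1_t, WE_0_9_1_f]; ring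
lemma WE_1_8_1_t (n : ℕ) : W n 1 8 1 true = 0 := by rw [W, WE_0_8_1_t, WE_0_8_2_t, WE_0_9_2_f]; ring
lemma WE_1_8_2_f (n : ℕ) : W n 1 8 2 false = 0 := by rw [W, WE_0_8_2_t, WE_0_9_2_f]; ring
lemma WE_1_9_0_t (n : ℕ) : W n 1 9 0 true = 0 := by rw [W, WE_0_9_0_t, WE_0_9_1_t, WE_0_10_1_f]; ring
lemma WE_1_9_1_f (n : ℕ) : W n 1 9 1 false = 0 := by rw [W, WE_0_9_1_t, WE_0_10_1_f]; ring
lemma WE_1_10_0_f (n : ℕ) : W n 1 10 0 false = 0 := by rw [W, WE_0_10_0_t, WE_0_11_0_f]; ring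
lemma WE_2_0_0_t (n : ℕ) : W n 2 0 0 true = 0 := by rw [W, WE_1_0_0_t, WE_1_0_1_t, WE_1_1_1_f]; ring
lemma WE_2_0_1_t (n : ℕ) : W n 2 0 1 true = 0 := by rw [W, WE_1_0_1_t, WE_1_0_2_t, WE_1_1_2_f]; ring
lemma WE_2_0_2_t (n : ℕ) : W n 2 0 2 true = 0 := by rw [W, WE_1_0_2_t, WE_1_0_3_t, WE_1_1_3_f]; ring
lemma WE_2_0_3_t (n : ℕ) : W n 2 0 3 true = 0 := by rw [W, WE_1_0_3_t, WE_1_0_4_t, WE_1_1_4_f]; ring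
lemma WE_2_0_4_t (n : ℕ) : W n 2 0 4 true = 0 := by rw [W, WE_1_0_4_t, WE_1_0_5_t, WE_1_1_5_f]; ring
lemma WE_2_0_5_t (n : ℕ) : W n 2 0 5 true = 0 := by rw [W, WE_1_0_5_t, WE_1_0_6_t, WE_1_1_6_f]; ring
lemma WE_2_0_6_t (n : ℕ) : W n 2 0 6 true = (1) * ((2:ℤ) ^ n) ^ 2 + (-64) * ((2:ℤ) ^ n) + (8064) := by rw [W, WE_1_0_6_t, WE_1_0_7_t, WE_1_1_7_f]; ring
lemma WE_2_0_7_t (n : ℕ) : W n 2 0 7 true = (128) * ((2:ℤ) ^ n) + (-48896) := by rw [W, WE_1_0_7_t, WE_1_0_8_t, WE_1_1_8_f]; ring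
lemma WE_2_0_8_t (n : ℕ) : W n 2 0 8 true = (65536) := by rw [W, WE_1_0_8_t, WE_1_0_9_t, WE_1_1_9_f]; ring
lemma WE_2_1_0_t (n : ℕ) : W n 2 1 0 true = 0 := by rw [W, WE_1_1_0_t, WE_1_1_1_t, WE_1_2_1_f]; ring
lemma WE_2_1_1_f (n : ℕ) : W n 2 1 1 false = 0 := by rw [W, WE_1_1_1_t, WE_1_2_1_f]; ring
lemma WE_2_1_1_t (n : ℕ) : W n 2 1 1 true = 0 := by rw [W, WE_1_1_1_t, WE_1_1_2_t, WE_1_2_2_f]; ring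
lemma WE_2_1_2_f (n : ℕ) : W n 2 1 2 false = 0 := by rw [W, WE_1_1_2_t, WE_1_2_2_f]; ring
lemma WE_2_1_2_t (n : ℕ) : W n 2 1 2 true = 0 := by rw [W, WE_1_1_2_t, WE_1_1_3_t, WE_1_2_3_f]; ring
lemma WE_2_1_3_f (n : ℕ) : W n 2 1 3 false = 0 := by rw [W, WE_1_1_3_t, WE_1_2_3_f]; ring
lemma WE_2_1_3_t (n : ℕ) : W n 2 1 3 true = 0 := by rw [W, WE_1_1_3_t, WE_1_1_4_t, WE_1_2_4_f]; ring
lemma WE_2_1_4_f (n : ℕ) : W n 2 1 4 false = 0 := by rw [W, WE_1_1_4_t, WE_1_2_4_f]; ring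
lemma WE_2_1_4_t (n : ℕ) : W n 2 1 4 true = 0 := by rw [W, WE_1_1_4_t, WE_1_1_5_t, WE_1_2_5_f]; ring
lemma WE_2_1_5_f (n : ℕ) : W n 2 1 5 false = 0 := by rw [W, WE_1_1_5_t, WE_1_2_5_f]; ring
lemma WE_2_1_5_t (n : ℕ) : W n 2 1 5 true = (1) * ((2:ℤ) ^ n) ^ 2 + (-32) * ((2:ℤ) ^ n) + (1920) := by rw [W, WE_1_1_5_t, WE_1_1_6_t, WE_1_2_6_f]; ring
lemma WE_2_1_6_f (n : ℕ) : W n 2 1 6 false = (1) * ((2:ℤ) ^ n) ^ 2 + (-128) := by rw [W, WE_1_1_6_t, WE_1_2_6_f]; ring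
lemma WE_2_1_6_t (n : ℕ) : W n 2 1 6 true = (64) * ((2:ℤ) ^ n) + (-12032) := by rw [W, WE_1_1_6_t, WE_1_1_7_t, WE_1_2_7_f]; ring
lemma WE_2_1_7_f (n : ℕ) : W n 2 1 7 false = (256) := by rw [W, WE_1_1_7_t, WE_1_2_7_f]; ring
lemma WE_2_1_7_t (n : ℕ) : W n 2 1 7 true = (16384) := by rw [W, WE_1_1_7_t, WE_1_1_8_t, WE_1_2_8_f]; ring
lemma WE_2_1_8_f (n : ℕ) : W n 2 1 8 false = 0 := by rw [W, WE_1_1_8_t, WE_1_2_8_f]; ring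
lemma WE_2_2_0_t (n : ℕ) : W n 2 2 0 true = 0 := by rw [W, WE_1_2_0_t, WE_1_2_1_t, WE_1_3_1_f]; ring
lemma WE_2_2_1_f (n : ℕ) : W n 2 2 1 false = 0 := by rw [W, WE_1_2_1_t, WE_1_3_1_f]; ring
lemma WE_2_2_1_t (n : ℕ) : W n 2 2 1 true = 0 := by rw [W, WE_1_2_1_t, WE_1_2_2_t, WE_1_3_2_f]; ring
lemma WE_2_2_2_f (n : ℕ) : W n 2 2 2 false = 0 := by rw [W, WE_1_2_2_t, WE_1_3_2_f]; ring
lemma WE_2_2_2_t (n : ℕ) : W n 2 2 2 true = 0 := by rw [W, WE_1_2_2_t, WE_1_2_3_t, WE_1_3_3_f]; ring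
lemma WE_2_2_3_f (n : ℕ) : W n 2 2 3 false = 0 := by rw [W, WE_1_2_3_t, WE_1_3_3_f]; ring
lemma WE_2_2_3_t (n : ℕ) : W n 2 2 3 true = 0 := by rw [W, WE_1_2_3_t, WE_1_2_4_t, WE_1_3_4_f]; ring
lemma WE_2_2_4_f (n : ℕ) : W n 2 2 4 false = 0 := by rw [W, WE_1_2_4_t, WE_1_3_4_f]; ring
lemma WE_2_2_4_t (n : ℕ) : W n 2 2 4 true = (1) * ((2:ℤ) ^ n) ^ 2 + (-16) * ((2:ℤ) ^ n) + (384) := by rw [W, WE_1_2_4_t, WE_1_2_5_t, WE_1_3_5_f]; ring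
lemma WE_2_2_5_f (n : ℕ) : W n 2 2 5 false = (1) * ((2:ℤ) ^ n) ^ 2 + (-128) := by rw [W, WE_1_2_5_t, WE_1_3_5_f]; ring
lemma WE_2_2_5_t (n : ℕ) : W n 2 2 5 true = (32) * ((2:ℤ) ^ n) + (-2816) := by rw [W, WE_1_2_5_t, WE_1_2_6_t, WE_1_3_6_f]; ring
lemma WE_2_2_6_f (n : ℕ) : W n 2 2 6 false = (256) := by rw [W, WE_1_2_6_t, WE_1_3_6_f]; ring
lemma WE_2_2_6_t (n : ℕ) : W n 2 2 6 true = (4096) := by rw [W, WE_1_2_6_t, WE_1_2_7_t, WE_1_3_7_f]; ring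
lemma WE_2_2_7_f (n : ℕ) : W n 2 2 7 false = 0 := by rw [W, WE_1_2_7_t, WE_1_3_7_f]; ring
lemma WE_2_3_0_t (n : ℕ) : W n 2 3 0 true = 0 := by rw [W, WE_1_3_0_t, WE_1_3_1_t, WE_1_4_1_f]; ring
lemma WE_2_3_1_f (n : ℕ) : W n 2 3 1 false = 0 := by rw [W, WE_1_3_1_t, WE_1_4_1_f]; ring
lemma WE_2_3_1_t (n : ℕ) : W n 2 3 1 true = 0 := by rw [W, WE_1_3_1_t, WE_1_3_2_t, WE_1_4_2_f]; ring
lemma WE_2_3_2_f (n : ℕ) : W n 2 3 2 false = 0 := by rw [W, WE_1_3_2_t, WE_1_4_2_f]; ring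
lemma WE_2_3_2_t (n : ℕ) : W n 2 3 2 true = 0 := by rw [W, WE_1_3_2_t, WE_1_3_3_t, WE_1_4_3_f]; ring
lemma WE_2_3_3_f (n : ℕ) : W n 2 3 3 false = 0 := by rw [W, WE_1_3_3_t, WE_1_4_3_f]; ring
lemma WE_2_3_3_t (n : ℕ) : W n 2 3 3 true = (1) * ((2:ℤ) ^ n) ^ 2 + (-8) * ((2:ℤ) ^ n) := by rw [W, WE_1_3_3_t, WE_1_3_4_t, WE_1_4_4_f]; ring
lemma WE_2_3_4_f (n : ℕ) : W n 2 3 4 false = (1) * ((2:ℤ) ^ n) ^ 2 + (-128) := by rw [W, WE_1_3_4_t, WE_1_4_4_f]; ring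
lemma WE_2_3_4_t (n : ℕ) : W n 2 3 4 true = (16) * ((2:ℤ) ^ n) + (-512) := by rw [W, WE_1_3_4_t, WE_1_3_5_t, WE_1_4_5_f]; ring
lemma WE_2_3_5_f (n : ℕ) : W n 2 3 5 false = (256) := by rw [W, WE_1_3_5_t, WE_1_4_5_f]; ring
lemma WE_2_3_5_t (n : ℕ) : W n 2 3 5 true = (1024) := by rw [W, WE_1_3_5_t, WE_1_3_6_t, WE_1_4_6_f]; ring
lemma WE_2_3_6_f (n : ℕ) : W n 2 3 6 false = 0 := by rw [W, WE_1_3_6_t, WE_1_4_6_f]; ring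
lemma WE_2_4_0_t (n : ℕ) : W n 2 4 0 true = 0 := by rw [W, WE_1_4_0_t, WE_1_4_1_t, WE_1_5_1_f]; ring
lemma WE_2_4_1_f (n : ℕ) : W n 2 4 1 false = 0 := by rw [W, WE_1_4_1_t, WE_1_5_1_f]; ring
lemma WE_2_4_1_t (n : ℕ) : W n 2 4 1 true = 0 := by rw [W, WE_1_4_1_t, WE_1_4_2_t, WE_1_5_2_f]; ring
lemma WE_2_4_2_f (n : ℕ) : W n 2 4 2 false = 0 := by rw [W, WE_1_4_2_t, WE_1_5_2_f]; ring
lemma WE_2_4_2_t (n : ℕ) : W n 2 4 2 true = (1) * ((2:ℤ) ^ n) ^ 2 + (-4) * ((2:ℤ) ^ n) + (-96) := by rw [W, WE_1_4_2_t, WE_1_4_3_t, WE_1_5_3_f]; ring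
lemma WE_2_4_3_f (n : ℕ) : W n 2 4 3 false = (1) * ((2:ℤ) ^ n) ^ 2 + (-128) := by rw [W, WE_1_4_3_t, WE_1_5_3_f]; ring
lemma WE_2_4_3_t (n : ℕ) : W n 2 4 3 true = (8) * ((2:ℤ) ^ n) + (64) := by rw [W, WE_1_4_3_t, WE_1_4_4_t, WE_1_5_4_f]; ring
lemma WE_2_4_4_f (n : ℕ) : W n 2 4 4 false = (256) := by rw [W, WE_1_4_4_t, WE_1_5_4_f]; ring
lemma WE_2_4_4_t (n : ℕ) : W n 2 4 4 true = (256) := by rw [W, WE_1_4_4_t, WE_1_4_5_t, WE_1_5_5_f]; ring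
lemma WE_2_4_5_f (n : ℕ) : W n 2 4 5 false = 0 := by rw [W, WE_1_4_5_t, WE_1_5_5_f]; ring
lemma WE_2_5_0_t (n : ℕ) : W n 2 5 0 true = 0 := by rw [W, WE_1_5_0_t, WE_1_5_1_t, WE_1_6_1_f]; ring
lemma WE_2_5_1_f (n : ℕ) : W n 2 5 1 false = 0 := by rw [W, WE_1_5_1_t, WE_1_6_1_f]; ring
lemma WE_2_5_1_t (n : ℕ) : W n 2 5 1 true = (1) * ((2:ℤ) ^ n) ^ 2 + (-2) * ((2:ℤ) ^ n) + (-120) := by rw [W, WE_1_5_1_t, WE_1_5_2_t, WE_1_6_2_f]; ring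
lemma WE_2_5_2_f (n : ℕ) : W n 2 5 2 false = (1) * ((2:ℤ) ^ n) ^ 2 + (-128) := by rw [W, WE_1_5_2_t, WE_1_6_2_f]; ring
lemma WE_2_5_2_t (n : ℕ) : W n 2 5 2 true = (4) * ((2:ℤ) ^ n) + (208) := by rw [W, WE_1_5_2_t, WE_1_5_3_t, WE_1_6_3_f]; ring
lemma WE_2_5_3_f (n : ℕ) : W n 2 5 3 false = (256) := by rw [W, WE_1_5_3_t, WE_1_6_3_f]; ring
lemma WE_2_5_3_t (n : ℕ) : W n 2 5 3 true = (64) := by rw [W, WE_1_5_3_t, WE_1_5_4_t, WE_1_6_4_f]; ring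
lemma WE_2_5_4_f (n : ℕ) : W n 2 5 4 false = 0 := by rw [W, WE_1_5_4_t, WE_1_6_4_f]; ring
lemma WE_2_6_0_t (n : ℕ) : W n 2 6 0 true = (1) * ((2:ℤ) ^ n) ^ 2 + (-1) * ((2:ℤ) ^ n) + (-126) := by rw [W, WE_1_6_0_t, WE_1_6_1_t, WE_1_7_1_f]; ring
lemma WE_2_6_1_f (n : ℕ) : W n 2 6 1 false = (1) * ((2:ℤ) ^ n) ^ 2 + (-128) := by rw [W, WE_1_6_1_t, WE_1_7_1_f]; ring
lemma WE_2_6_1_t (n : ℕ) : W n 2 6 1 true = (2) * ((2:ℤ) ^ n) + (244) := by rw [W, WE_1_6_1_t, WE_1_6_2_t, WE_1_7_2_f]; ring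
lemma WE_2_6_2_f (n : ℕ) : W n 2 6 2 false = (256) := by rw [W, WE_1_6_2_t, WE_1_7_2_f]; ring
lemma WE_2_6_2_t (n : ℕ) : W n 2 6 2 true = (16) := by rw [W, WE_1_6_2_t, WE_1_6_3_t, WE_1_7_3_f]; ring
lemma WE_2_6_3_f (n : ℕ) : W n 2 6 3 false = 0 := by rw [W, WE_1_6_3_t, WE_1_7_3_f]; ring
lemma WE_2_7_0_t (n : ℕ) : W n 2 7 0 true = (1) * ((2:ℤ) ^ n) + (253) := by rw [W, WE_1_7_0_t, WE_1_7_1_t, WE_1_8_1_f]; ring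
lemma WE_2_7_1_f (n : ℕ) : W n 2 7 1 false = (256) := by rw [W, WE_1_7_1_t, WE_1_8_1_f]; ring
lemma WE_2_7_1_t (n : ℕ) : W n 2 7 1 true = (4) := by rw [W, WE_1_7_1_t, WE_1_7_2_t, WE_1_8_2_f]; ring
lemma WE_2_7_2_f (n : ℕ) : W n 2 7 2 false = 0 := by rw [W, WE_1_7_2_t, WE_1_8_2_f]; ring
lemma WE_2_8_0_t (n : ℕ) : W n 2 8 0 true = (1) := by rw [W, WE_1_8_0_t, WE_1_8_1_t, WE_1_9_1_f]; ring
lemma WE_2_8_1_f (n : ℕ) : W n 2 8 1 false = 0 := by rw [W, WE_1_8_1_t, WE_1_9_1_f]; ring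
lemma WE_2_9_0_f (n : ℕ) : W n 2 9 0 false = 0 := by rw [W, WE_1_9_0_t, WE_1_10_0_f]; ring
lemma WE_3_0_0_t (n : ℕ) : W n 3 0 0 true = 0 := by rw [W, WE_2_0_0_t, WE_2_0_1_t, WE_2_1_1_f]; ring
lemma WE_3_0_1_t (n : ℕ) : W n 3 0 1 true = 0 := by rw [W, WE_2_0_1_t, WE_2_0_2_t, WE_2_1_2_f]; ring
lemma WE_3_0_2_t (n : ℕ) : W n 3 0 2 true = 0 := by rw [W, WE_2_0_2_t, WE_2_0_3_t, WE_2_1_3_f]; ring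
lemma WE_3_0_3_t (n : ℕ) : W n 3 0 3 true = 0 := by rw [W, WE_2_0_3_t, WE_2_0_4_t, WE_2_1_4_f]; ring
lemma WE_3_0_4_t (n : ℕ) : W n 3 0 4 true = 0 := by rw [W, WE_2_0_4_t, WE_2_0_5_t, WE_2_1_5_f]; ring
lemma WE_3_0_5_t (n : ℕ) : W n 3 0 5 true = (1) * ((2:ℤ) ^ n) ^ 3 + (-32) * ((2:ℤ) ^ n) ^ 2 + (1856) * ((2:ℤ) ^ n) + (-249856) := by rw [W, WE_2_0_5_t, WE_2_0_6_t, WE_2_1_6_f]; ring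
lemma WE_3_0_6_t (n : ℕ) : W n 3 0 6 true = (64) * ((2:ℤ) ^ n) ^ 2 + (-11904) * ((2:ℤ) ^ n) + (3596288) := by rw [W, WE_2_0_6_t, WE_2_0_7_t, WE_2_1_7_f]; ring
lemma WE_3_0_7_t (n : ℕ) : W n 3 0 7 true = (16384) * ((2:ℤ) ^ n) + (-14581760) := by rw [W, WE_2_0_7_t, WE_2_0_8_t, WE_2_1_8_f]; ring
lemma WE_3_1_0_t (n : ℕ) : W n 3 1 0 true = 0 := by rw [W, WE_2_1_0_t, WE_2_1_1_t, WE_2_2_1_f]; ring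
lemma WE_3_1_1_f (n : ℕ) : W n 3 1 1 false = 0 := by rw [W, WE_2_1_1_t, WE_2_2_1_f]; ring
lemma WE_3_1_1_t (n : ℕ) : W n 3 1 1 true = 0 := by rw [W, WE_2_1_1_t, WE_2_1_2_t, WE_2_2_2_f]; ring
lemma WE_3_1_2_f (n : ℕ) : W n 3 1 2 false = 0 := by rw [W, WE_2_1_2_t, WE_2_2_2_f]; ring
lemma WE_3_1_2_t (n : ℕ) : W n 3 1 2 true = 0 := by rw [W, WE_2_1_2_t, WE_2_1_3_t, WE_2_2_3_f]; ring
lemma WE_3_1_3_f (n : ℕ) : W n 3 1 3 false = 0 := by rw [W, WE_2_1_3_t, WE_2_2_3_f]; ring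
lemma WE_3_1_3_t (n : ℕ) : W n 3 1 3 true = 0 := by rw [W, WE_2_1_3_t, WE_2_1_4_t, WE_2_2_4_f]; ring
lemma WE_3_1_4_f (n : ℕ) : W n 3 1 4 false = 0 := by rw [W, WE_2_1_4_t, WE_2_2_4_f]; ring
lemma WE_3_1_4_t (n : ℕ) : W n 3 1 4 true = (1) * ((2:ℤ) ^ n) ^ 3 + (-16) * ((2:ℤ) ^ n) ^ 2 + (320) * ((2:ℤ) ^ n) + (-26624) := by rw [W, WE_2_1_4_t, WE_2_1_5_t, WE_2_2_5_f]; ring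
lemma WE_3_1_5_f (n : ℕ) : W n 3 1 5 false = (1) * ((2:ℤ) ^ n) ^ 3 + (-192) * ((2:ℤ) ^ n) + (4096) := by rw [W, WE_2_1_5_t, WE_2_2_5_f]; ring
lemma WE_3_1_5_t (n : ℕ) : W n 3 1 5 true = (32) * ((2:ℤ) ^ n) ^ 2 + (-2688) * ((2:ℤ) ^ n) + (421888) := by rw [W, WE_2_1_5_t, WE_2_1_6_t, WE_2_2_6_f]; ring
lemma WE_3_1_6_f (n : ℕ) : W n 3 1 6 false = (384) * ((2:ℤ) ^ n) + (-24576) := by rw [W, WE_2_1_6_t, WE_2_2_6_f]; ring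
lemma WE_3_1_6_t (n : ℕ) : W n 3 1 6 true = (4096) * ((2:ℤ) ^ n) + (-1785856) := by rw [W, WE_2_1_6_t, WE_2_1_7_t, WE_2_2_7_f]; ring
lemma WE_3_1_7_f (n : ℕ) : W n 3 1 7 false = (32768) := by rw [W, WE_2_1_7_t, WE_2_2_7_f]; ring
lemma WE_3_2_0_t (n : ℕ) : W n 3 2 0 true = 0 := by rw [W, WE_2_2_0_t, WE_2_2_1_t, WE_2_3_1_f]; ring
lemma WE_3_2_1_f (n : ℕ) : W n 3 2 1 false = 0 := by rw [W, WE_2_2_1_t, WE_2_3_1_f]; ring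
lemma WE_3_2_1_t (n : ℕ) : W n 3 2 1 true = 0 := by rw [W, WE_2_2_1_t, WE_2_2_2_t, WE_2_3_2_f]; ring
lemma WE_3_2_2_f (n : ℕ) : W n 3 2 2 false = 0 := by rw [W, WE_2_2_2_t, WE_2_3_2_f]; ring
lemma WE_3_2_2_t (n : ℕ) : W n 3 2 2 true = 0 := by rw [W, WE_2_2_2_t, WE_2_2_3_t, WE_2_3_3_f]; ring
lemma WE_3_2_3_f (n : ℕ) : W n 3 2 3 false = 0 := by rw [W, WE_2_2_3_t, WE_2_3_3_f]; ring
lemma WE_3_2_3_t (n : ℕ) : W n 3 2 3 true = (1) * ((2:ℤ) ^ n) ^ 3 + (-8) * ((2:ℤ) ^ n) ^ 2 + (-64) * ((2:ℤ) ^ n) + (-1024) := by rw [W, WE_2_2_3_t, WE_2_2_4_t, WE_2_3_4_f]; ring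
lemma WE_3_2_4_f (n : ℕ) : W n 3 2 4 false = (1) * ((2:ℤ) ^ n) ^ 3 + (-192) * ((2:ℤ) ^ n) + (2048) := by rw [W, WE_2_2_4_t, WE_2_3_4_f]; ring
lemma WE_3_2_4_t (n : ℕ) : W n 3 2 4 true = (16) * ((2:ℤ) ^ n) ^ 2 + (-384) * ((2:ℤ) ^ n) + (38912) := by rw [W, WE_2_2_4_t, WE_2_2_5_t, WE_2_3_5_f]; ring
lemma WE_3_2_5_f (n : ℕ) : W n 3 2 5 false = (384) * ((2:ℤ) ^ n) + (-12288) := by rw [W, WE_2_2_5_t, WE_2_3_5_f]; ring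
lemma WE_3_2_5_t (n : ℕ) : W n 3 2 5 true = (1024) * ((2:ℤ) ^ n) + (-204800) := by rw [W, WE_2_2_5_t, WE_2_2_6_t, WE_2_3_6_f]; ring
lemma WE_3_2_6_f (n : ℕ) : W n 3 2 6 false = (16384) := by rw [W, WE_2_2_6_t, WE_2_3_6_f]; ring
lemma WE_3_3_0_t (n : ℕ) : W n 3 3 0 true = 0 := by rw [W, WE_2_3_0_t, WE_2_3_1_t, WE_2_4_1_f]; ring
lemma WE_3_3_1_f (n : ℕ) : W n 3 3 1 false = 0 := by rw [W, WE_2_3_1_t, WE_2_4_1_f]; ring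
lemma WE_3_3_1_t (n : ℕ) : W n 3 3 1 true = 0 := by rw [W, WE_2_3_1_t, WE_2_3_2_t, WE_2_4_2_f]; ring
lemma WE_3_3_2_f (n : ℕ) : W n 3 3 2 false = 0 := by rw [W, WE_2_3_2_t, WE_2_4_2_f]; ring
lemma WE_3_3_2_t (n : ℕ) : W n 3 3 2 true = (1) * ((2:ℤ) ^ n) ^ 3 + (-4) * ((2:ℤ) ^ n) ^ 2 + (-160) * ((2:ℤ) ^ n) + (1024) := by rw [W, WE_2_3_2_t, WE_2_3_3_t, WE_2_4_3_f]; ring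
lemma WE_3_3_3_f (n : ℕ) : W n 3 3 3 false = (1) * ((2:ℤ) ^ n) ^ 3 + (-192) * ((2:ℤ) ^ n) + (1024) := by rw [W, WE_2_3_3_t, WE_2_4_3_f]; ring
lemma WE_3_3_3_t (n : ℕ) : W n 3 3 3 true = (8) * ((2:ℤ) ^ n) ^ 2 + (192) * ((2:ℤ) ^ n) + (-2048) := by rw [W, WE_2_3_3_t, WE_2_3_4_t, WE_2_4_4_f]; ring
lemma WE_3_3_4_f (n : ℕ) : W n 3 3 4 false = (384) * ((2:ℤ) ^ n) + (-6144) := by rw [W, WE_2_3_4_t, WE_2_4_4_f]; ring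
lemma WE_3_3_4_t (n : ℕ) : W n 3 3 4 true = (256) * ((2:ℤ) ^ n) + (-16384) := by rw [W, WE_2_3_4_t, WE_2_3_5_t, WE_2_4_5_f]; ring
lemma WE_3_3_5_f (n : ℕ) : W n 3 3 5 false = (8192) := by rw [W, WE_2_3_5_t, WE_2_4_5_f]; ring
lemma WE_3_4_0_t (n : ℕ) : W n 3 4 0 true = 0 := by rw [W, WE_2_4_0_t, WE_2_4_1_t, WE_2_5_1_f]; ring
lemma WE_3_4_1_f (n : ℕ) : W n 3 4 1 false = 0 := by rw [W, WE_2_4_1_t, WE_2_5_1_f]; ring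
lemma WE_3_4_1_t (n : ℕ) : W n 3 4 1 true = (1) * ((2:ℤ) ^ n) ^ 3 + (-2) * ((2:ℤ) ^ n) ^ 2 + (-184) * ((2:ℤ) ^ n) + (704) := by rw [W, WE_2_4_1_t, WE_2_4_2_t, WE_2_5_2_f]; ring
lemma WE_3_4_2_f (n : ℕ) : W n 3 4 2 false = (1) * ((2:ℤ) ^ n) ^ 3 + (-192) * ((2:ℤ) ^ n) + (512) := by rw [W, WE_2_4_2_t, WE_2_5_2_f]; ring
lemma WE_3_4_2_t (n : ℕ) : W n 3 4 2 true = (4) * ((2:ℤ) ^ n) ^ 2 + (336) * ((2:ℤ) ^ n) + (-3712) := by rw [W, WE_2_4_2_t, WE_2_4_3_t, WE_2_5_3_f]; ring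
lemma WE_3_4_3_f (n : ℕ) : W n 3 4 3 false = (384) * ((2:ℤ) ^ n) + (-3072) := by rw [W, WE_2_4_3_t, WE_2_5_3_f]; ring
lemma WE_3_4_3_t (n : ℕ) : W n 3 4 3 true = (64) * ((2:ℤ) ^ n) + (2560) := by rw [W, WE_2_4_3_t, WE_2_4_4_t, WE_2_5_4_f]; ring
lemma WE_3_4_4_f (n : ℕ) : W n 3 4 4 false = (4096) := by rw [W, WE_2_4_4_t, WE_2_5_4_f]; ring
lemma WE_3_5_0_t (n : ℕ) : W n 3 5 0 true = (1) * ((2:ℤ) ^ n) ^ 3 + (-1) * ((2:ℤ) ^ n) ^ 2 + (-190) * ((2:ℤ) ^ n) + (376) := by rw [W, WE_2_5_0_t, WE_2_5_1_t, WE_2_6_1_f]; ring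
lemma WE_3_5_1_f (n : ℕ) : W n 3 5 1 false = (1) * ((2:ℤ) ^ n) ^ 3 + (-192) * ((2:ℤ) ^ n) + (256) := by rw [W, WE_2_5_1_t, WE_2_6_1_f]; ring
lemma WE_3_5_1_t (n : ℕ) : W n 3 5 1 true = (2) * ((2:ℤ) ^ n) ^ 2 + (372) * ((2:ℤ) ^ n) + (-2192) := by rw [W, WE_2_5_1_t, WE_2_5_2_t, WE_2_6_2_f]; ring
lemma WE_3_5_2_f (n : ℕ) : W n 3 5 2 false = (384) * ((2:ℤ) ^ n) + (-1536) := by rw [W, WE_2_5_2_t, WE_2_6_2_f]; ring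
lemma WE_3_5_2_t (n : ℕ) : W n 3 5 2 true = (16) * ((2:ℤ) ^ n) + (2624) := by rw [W, WE_2_5_2_t, WE_2_5_3_t, WE_2_6_3_f]; ring
lemma WE_3_5_3_f (n : ℕ) : W n 3 5 3 false = (2048) := by rw [W, WE_2_5_3_t, WE_2_6_3_f]; ring
lemma WE_3_6_0_t (n : ℕ) : W n 3 6 0 true = (1) * ((2:ℤ) ^ n) ^ 2 + (381) * ((2:ℤ) ^ n) + (-1138) := by rw [W, WE_2_6_0_t, WE_2_6_1_t, WE_2_7_1_f]; ring
lemma WE_3_6_1_f (n : ℕ) : W n 3 6 1 false = (384) * ((2:ℤ) ^ n) + (-768) := by rw [W, WE_2_6_1_t, WE_2_7_1_f]; ring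
lemma WE_3_6_1_t (n : ℕ) : W n 3 6 1 true = (4) * ((2:ℤ) ^ n) + (1480) := by rw [W, WE_2_6_1_t, WE_2_6_2_t, WE_2_7_2_f]; ring
lemma WE_3_6_2_f (n : ℕ) : W n 3 6 2 false = (1024) := by rw [W, WE_2_6_2_t, WE_2_7_2_f]; ring
lemma WE_3_7_0_t (n : ℕ) : W n 3 7 0 true = (1) * ((2:ℤ) ^ n) + (761) := by rw [W, WE_2_7_0_t, WE_2_7_1_t, WE_2_8_1_f]; ring
lemma WE_3_7_1_f (n : ℕ) : W n 3 7 1 false = (512) := by rw [W, WE_2_7_1_t, WE_2_8_1_f]; ring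
lemma WE_3_8_0_f (n : ℕ) : W n 3 8 0 false = (256) := by rw [W, WE_2_8_0_t, WE_2_9_0_f]; ring
lemma WE_4_0_0_t (n : ℕ) : W n 4 0 0 true = 0 := by rw [W, WE_3_0_0_t, WE_3_0_1_t, WE_3_1_1_f]; ring
lemma WE_4_0_1_t (n : ℕ) : W n 4 0 1 true = 0 := by rw [W, WE_3_0_1_t, WE_3_0_2_t, WE_3_1_2_f]; ring
lemma WE_4_0_2_t (n : ℕ) : W n 4 0 2 true = 0 := by rw [W, WE_3_0_2_t, WE_3_0_3_t, WE_3_1_3_f]; ring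
lemma WE_4_0_3_t (n : ℕ) : W n 4 0 3 true = 0 := by rw [W, WE_3_0_3_t, WE_3_0_4_t, WE_3_1_4_f]; ring
lemma WE_4_0_4_t (n : ℕ) : W n 4 0 4 true = (1) * ((2:ℤ) ^ n) ^ 4 + (-16) * ((2:ℤ) ^ n) ^ 3 + (288) * ((2:ℤ) ^ n) ^ 2 + (-23552) * ((2:ℤ) ^ n) + (3743744) := by rw [W, WE_3_0_4_t, WE_3_0_5_t, WE_3_1_5_f]; ring
lemma WE_4_0_5_t (n : ℕ) : W n 4 0 5 true = (32) * ((2:ℤ) ^ n) ^ 3 + (-2624) * ((2:ℤ) ^ n) ^ 2 + (403456) * ((2:ℤ) ^ n) + (-119455744) := by rw [W, WE_3_0_5_t, WE_3_0_6_t, WE_3_1_6_f]; ring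
lemma WE_4_0_6_t (n : ℕ) : W n 4 0 6 true = (4096) * ((2:ℤ) ^ n) ^ 2 + (-1761280) * ((2:ℤ) ^ n) + (1148780544) := by rw [W, WE_3_0_6_t, WE_3_0_7_t, WE_3_1_7_f]; ring
lemma WE_4_1_0_t (n : ℕ) : W n 4 1 0 true = 0 := by rw [W, WE_3_1_0_t, WE_3_1_1_t, WE_3_2_1_f]; ring
lemma WE_4_1_1_f (n : ℕ) : W n 4 1 1 false = 0 := by rw [W, WE_3_1_1_t, WE_3_2_1_f]; ring
lemma WE_4_1_1_t (n : ℕ) : W n 4 1 1 true = 0 := by rw [W, WE_3_1_1_t, WE_3_1_2_t, WE_3_2_2_f]; ring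
lemma WE_4_1_2_f (n : ℕ) : W n 4 1 2 false = 0 := by rw [W, WE_3_1_2_t, WE_3_2_2_f]; ring
lemma WE_4_1_2_t (n : ℕ) : W n 4 1 2 true = 0 := by rw [W, WE_3_1_2_t, WE_3_1_3_t, WE_3_2_3_f]; ring
lemma WE_4_1_3_f (n : ℕ) : W n 4 1 3 false = 0 := by rw [W, WE_3_1_3_t, WE_3_2_3_f]; ring
lemma WE_4_1_3_t (n : ℕ) : W n 4 1 3 true = (1) * ((2:ℤ) ^ n) ^ 4 + (-8) * ((2:ℤ) ^ n) ^ 3 + (-96) * ((2:ℤ) ^ n) ^ 2 + (512) * ((2:ℤ) ^ n) + (155648) := by rw [W, WE_3_1_3_t, WE_3_1_4_t, WE_3_2_4_f]; ring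
lemma WE_4_1_4_f (n : ℕ) : W n 4 1 4 false = (1) * ((2:ℤ) ^ n) ^ 4 + (-224) * ((2:ℤ) ^ n) ^ 2 + (3072) * ((2:ℤ) ^ n) + (-57344) := by rw [W, WE_3_1_4_t, WE_3_2_4_f]; ring
lemma WE_4_1_4_t (n : ℕ) : W n 4 1 4 true = (16) * ((2:ℤ) ^ n) ^ 3 + (-320) * ((2:ℤ) ^ n) ^ 2 + (29696) * ((2:ℤ) ^ n) + (-6307840) := by rw [W, WE_3_1_4_t, WE_3_1_5_t, WE_3_2_5_f]; ring
lemma WE_4_1_5_f (n : ℕ) : W n 4 1 5 false = (448) * ((2:ℤ) ^ n) ^ 2 + (-18432) * ((2:ℤ) ^ n) + (868352) := by rw [W, WE_3_1_5_t, WE_3_2_5_f]; ring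
lemma WE_4_1_5_t (n : ℕ) : W n 4 1 5 true = (1024) * ((2:ℤ) ^ n) ^ 2 + (-192512) * ((2:ℤ) ^ n) + (67043328) := by rw [W, WE_3_1_5_t, WE_3_1_6_t, WE_3_2_6_f]; ring
lemma WE_4_1_6_f (n : ℕ) : W n 4 1 6 false = (24576) * ((2:ℤ) ^ n) + (-3604480) := by rw [W, WE_3_1_6_t, WE_3_2_6_f]; ring
lemma WE_4_2_0_t (n : ℕ) : W n 4 2 0 true = 0 := by rw [W, WE_3_2_0_t, WE_3_2_1_t, WE_3_3_1_f]; ring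
lemma WE_4_2_1_f (n : ℕ) : W n 4 2 1 false = 0 := by rw [W, WE_3_2_1_t, WE_3_3_1_f]; ring
lemma WE_4_2_1_t (n : ℕ) : W n 4 2 1 true = 0 := by rw [W, WE_3_2_1_t, WE_3_2_2_t, WE_3_3_2_f]; ring
lemma WE_4_2_2_f (n : ℕ) : W n 4 2 2 false = 0 := by rw [W, WE_3_2_2_t, WE_3_3_2_f]; ring
lemma WE_4_2_2_t (n : ℕ) : W n 4 2 2 true = (1) * ((2:ℤ) ^ n) ^ 4 + (-4) * ((2:ℤ) ^ n) ^ 3 + (-192) * ((2:ℤ) ^ n) ^ 2 + (1792) * ((2:ℤ) ^ n) + (-4096) := by rw [W, WE_3_2_2_t, WE_3_2_3_t, WE_3_3_3_f]; ring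
lemma WE_4_2_3_f (n : ℕ) : W n 4 2 3 false = (1) * ((2:ℤ) ^ n) ^ 4 + (-224) * ((2:ℤ) ^ n) ^ 2 + (1536) * ((2:ℤ) ^ n) + (-8192) := by rw [W, WE_3_2_3_t, WE_3_3_3_f]; ring
lemma WE_4_2_3_t (n : ℕ) : W n 4 2 3 true = (8) * ((2:ℤ) ^ n) ^ 3 + (256) * ((2:ℤ) ^ n) ^ 2 + (-6656) * ((2:ℤ) ^ n) + (-139264) := by rw [W, WE_3_2_3_t, WE_3_2_4_t, WE_3_3_4_f]; ring
lemma WE_4_2_4_f (n : ℕ) : W n 4 2 4 false = (448) * ((2:ℤ) ^ n) ^ 2 + (-9216) * ((2:ℤ) ^ n) + (180224) := by rw [W, WE_3_2_4_t, WE_3_3_4_f]; ring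
lemma WE_4_2_4_t (n : ℕ) : W n 4 2 4 true = (256) * ((2:ℤ) ^ n) ^ 2 + (-10240) * ((2:ℤ) ^ n) + (3047424) := by rw [W, WE_3_2_4_t, WE_3_2_5_t, WE_3_3_5_f]; ring
lemma WE_4_2_5_f (n : ℕ) : W n 4 2 5 false = (12288) * ((2:ℤ) ^ n) + (-851968) := by rw [W, WE_3_2_5_t, WE_3_3_5_f]; ring
lemma WE_4_3_0_t (n : ℕ) : W n 4 3 0 true = 0 := by rw [W, WE_3_3_0_t, WE_3_3_1_t, WE_3_4_1_f]; ring
lemma WE_4_3_1_f (n : ℕ) : W n 4 3 1 false = 0 := by rw [W, WE_3_3_1_t, WE_3_4_1_f]; ring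
lemma WE_4_3_1_t (n : ℕ) : W n 4 3 1 true = (1) * ((2:ℤ) ^ n) ^ 4 + (-2) * ((2:ℤ) ^ n) ^ 3 + (-216) * ((2:ℤ) ^ n) ^ 2 + (1088) * ((2:ℤ) ^ n) + (2048) := by rw [W, WE_3_3_1_t, WE_3_3_2_t, WE_3_4_2_f]; ring
lemma WE_4_3_2_f (n : ℕ) : W n 4 3 2 false = (1) * ((2:ℤ) ^ n) ^ 4 + (-224) * ((2:ℤ) ^ n) ^ 2 + (768) * ((2:ℤ) ^ n) + (4096) := by rw [W, WE_3_3_2_t, WE_3_4_2_f]; ring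
lemma WE_4_3_2_t (n : ℕ) : W n 4 3 2 true = (4) * ((2:ℤ) ^ n) ^ 3 + (400) * ((2:ℤ) ^ n) ^ 2 + (-6016) * ((2:ℤ) ^ n) + (20480) := by rw [W, WE_3_3_2_t, WE_3_3_3_t, WE_3_4_3_f]; ring
lemma WE_4_3_3_f (n : ℕ) : W n 4 3 3 false = (448) * ((2:ℤ) ^ n) ^ 2 + (-4608) * ((2:ℤ) ^ n) + (8192) := by rw [W, WE_3_3_3_t, WE_3_4_3_f]; ring
lemma WE_4_3_3_t (n : ℕ) : W n 4 3 3 true = (64) * ((2:ℤ) ^ n) ^ 2 + (5632) * ((2:ℤ) ^ n) + (-49152) := by rw [W, WE_3_3_3_t, WE_3_3_4_t, WE_3_4_4_f]; ring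
lemma WE_4_3_4_f (n : ℕ) : W n 4 3 4 false = (6144) * ((2:ℤ) ^ n) + (-163840) := by rw [W, WE_3_3_4_t, WE_3_4_4_f]; ring
lemma WE_4_4_0_t (n : ℕ) : W n 4 4 0 true = (1) * ((2:ℤ) ^ n) ^ 4 + (-1) * ((2:ℤ) ^ n) ^ 3 + (-222) * ((2:ℤ) ^ n) ^ 2 + (568) * ((2:ℤ) ^ n) + (6464) := by rw [W, WE_3_4_0_t, WE_3_4_1_t, WE_3_5_1_f]; ring
lemma WE_4_4_1_f (n : ℕ) : W n 4 4 1 false = (1) * ((2:ℤ) ^ n) ^ 4 + (-224) * ((2:ℤ) ^ n) ^ 2 + (384) * ((2:ℤ) ^ n) + (7168) := by rw [W, WE_3_4_1_t, WE_3_5_1_f]; ring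
lemma WE_4_4_1_t (n : ℕ) : W n 4 4 1 true = (2) * ((2:ℤ) ^ n) ^ 3 + (436) * ((2:ℤ) ^ n) ^ 2 + (-3344) * ((2:ℤ) ^ n) + (-25984) := by rw [W, WE_3_4_1_t, WE_3_4_2_t, WE_3_5_2_f]; ring
lemma WE_4_4_2_f (n : ℕ) : W n 4 4 2 false = (448) * ((2:ℤ) ^ n) ^ 2 + (-2304) * ((2:ℤ) ^ n) + (-34816) := by rw [W, WE_3_4_2_t, WE_3_5_2_f]; ring
lemma WE_4_4_2_t (n : ℕ) : W n 4 4 2 true = (16) * ((2:ℤ) ^ n) ^ 2 + (4160) * ((2:ℤ) ^ n) + (-16896) := by rw [W, WE_3_4_2_t, WE_3_4_3_t, WE_3_5_3_f]; ring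
lemma WE_4_4_3_f (n : ℕ) : W n 4 4 3 false = (3072) * ((2:ℤ) ^ n) + (8192) := by rw [W, WE_3_4_3_t, WE_3_5_3_f]; ring
lemma WE_4_5_0_t (n : ℕ) : W n 4 5 0 true = (1) * ((2:ℤ) ^ n) ^ 3 + (445) * ((2:ℤ) ^ n) ^ 2 + (-1714) * ((2:ℤ) ^ n) + (-43000) := by rw [W, WE_3_5_0_t, WE_3_5_1_t, WE_3_6_1_f]; ring
lemma WE_4_5_1_f (n : ℕ) : W n 4 5 1 false = (448) * ((2:ℤ) ^ n) ^ 2 + (-1152) * ((2:ℤ) ^ n) + (-45568) := by rw [W, WE_3_5_1_t, WE_3_6_1_f]; ring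
lemma WE_4_5_1_t (n : ℕ) : W n 4 5 1 true = (4) * ((2:ℤ) ^ n) ^ 2 + (2248) * ((2:ℤ) ^ n) + (41568) := by rw [W, WE_3_5_1_t, WE_3_5_2_t, WE_3_6_2_f]; ring
lemma WE_4_5_2_f (n : ℕ) : W n 4 5 2 false = (1536) * ((2:ℤ) ^ n) + (51200) := by rw [W, WE_3_5_2_t, WE_3_6_2_f]; ring
lemma WE_4_6_0_t (n : ℕ) : W n 4 6 0 true = (1) * ((2:ℤ) ^ n) ^ 2 + (1145) * ((2:ℤ) ^ n) + (59334) := by rw [W, WE_3_6_0_t, WE_3_6_1_t, WE_3_7_1_f]; ring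
lemma WE_4_6_1_f (n : ℕ) : W n 4 6 1 false = (768) * ((2:ℤ) ^ n) + (61952) := by rw [W, WE_3_6_1_t, WE_3_7_1_f]; ring
lemma WE_4_7_0_f (n : ℕ) : W n 4 7 0 false = (384) * ((2:ℤ) ^ n) + (64640) := by rw [W, WE_3_7_0_t, WE_3_8_0_f]; ring
lemma WE_5_0_0_t (n : ℕ) : W n 5 0 0 true = 0 := by rw [W, WE_4_0_0_t, WE_4_0_1_t, WE_4_1_1_f]; ring
lemma WE_5_0_1_t (n : ℕ) : W n 5 0 1 true = 0 := by rw [W, WE_4_0_1_t, WE_4_0_2_t, WE_4_1_2_f]; ring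
lemma WE_5_0_2_t (n : ℕ) : W n 5 0 2 true = 0 := by rw [W, WE_4_0_2_t, WE_4_0_3_t, WE_4_1_3_f]; ring
lemma WE_5_0_3_t (n : ℕ) : W n 5 0 3 true = (1) * ((2:ℤ) ^ n) ^ 5 + (-8) * ((2:ℤ) ^ n) ^ 4 + (-112) * ((2:ℤ) ^ n) ^ 3 + (1280) * ((2:ℤ) ^ n) ^ 2 + (104448) * ((2:ℤ) ^ n) + (-26148864) := by rw [W, WE_4_0_3_t, WE_4_0_4_t, WE_4_1_4_f]; ring
lemma WE_5_0_4_t (n : ℕ) : W n 5 0 4 true = (16) * ((2:ℤ) ^ n) ^ 4 + (-288) * ((2:ℤ) ^ n) ^ 3 + (25088) * ((2:ℤ) ^ n) ^ 2 + (-5541888) * ((2:ℤ) ^ n) + (1850867712) := by rw [W, WE_4_0_4_t, WE_4_0_5_t, WE_4_1_5_f]; ring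
lemma WE_5_0_5_t (n : ℕ) : W n 5 0 5 true = (1024) * ((2:ℤ) ^ n) ^ 3 + (-186368) * ((2:ℤ) ^ n) ^ 2 + (63881216) * ((2:ℤ) ^ n) + (-39431176192) := by rw [W, WE_4_0_5_t, WE_4_0_6_t, WE_4_1_6_f]; ring
lemma WE_5_1_0_t (n : ℕ) : W n 5 1 0 true = 0 := by rw [W, WE_4_1_0_t, WE_4_1_1_t, WE_4_2_1_f]; ring
lemma WE_5_1_1_f (n : ℕ) : W n 5 1 1 false = 0 := by rw [W, WE_4_1_1_t, WE_4_2_1_f]; ring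
lemma WE_5_1_1_t (n : ℕ) : W n 5 1 1 true = 0 := by rw [W, WE_4_1_1_t, WE_4_1_2_t, WE_4_2_2_f]; ring
lemma WE_5_1_2_f (n : ℕ) : W n 5 1 2 false = 0 := by rw [W, WE_4_1_2_t, WE_4_2_2_f]; ring
lemma WE_5_1_2_t (n : ℕ) : W n 5 1 2 true = (1) * ((2:ℤ) ^ n) ^ 5 + (-4) * ((2:ℤ) ^ n) ^ 4 + (-208) * ((2:ℤ) ^ n) ^ 3 + (2176) * ((2:ℤ) ^ n) ^ 2 + (-12288) * ((2:ℤ) ^ n) + (-294912) := by rw [W, WE_4_1_2_t, WE_4_1_3_t, WE_4_2_3_f]; ring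
lemma WE_5_1_3_f (n : ℕ) : W n 5 1 3 false = (1) * ((2:ℤ) ^ n) ^ 5 + (-240) * ((2:ℤ) ^ n) ^ 3 + (1792) * ((2:ℤ) ^ n) ^ 2 + (-10240) * ((2:ℤ) ^ n) + (327680) := by rw [W, WE_4_1_3_t, WE_4_2_3_f]; ring
lemma WE_5_1_3_t (n : ℕ) : W n 5 1 3 true = (8) * ((2:ℤ) ^ n) ^ 4 + (288) * ((2:ℤ) ^ n) ^ 3 + (-8960) * ((2:ℤ) ^ n) ^ 2 + (24576) * ((2:ℤ) ^ n) + (38731776) := by rw [W, WE_4_1_3_t, WE_4_1_4_t, WE_4_2_4_f]; ring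
lemma WE_5_1_4_f (n : ℕ) : W n 5 1 4 false = (480) * ((2:ℤ) ^ n) ^ 3 + (-10752) * ((2:ℤ) ^ n) ^ 2 + (258048) * ((2:ℤ) ^ n) + (-12976128) := by rw [W, WE_4_1_4_t, WE_4_2_4_f]; ring
lemma WE_5_1_4_t (n : ℕ) : W n 5 1 4 true = (256) * ((2:ℤ) ^ n) ^ 3 + (-7168) * ((2:ℤ) ^ n) ^ 2 + (2293760) * ((2:ℤ) ^ n) + (-1037828096) := by rw [W, WE_4_1_4_t, WE_4_1_5_t, WE_4_2_5_f]; ring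
lemma WE_5_1_5_f (n : ℕ) : W n 5 1 5 false = (14336) * ((2:ℤ) ^ n) ^ 2 + (-1261568) * ((2:ℤ) ^ n) + (135790592) := by rw [W, WE_4_1_5_t, WE_4_2_5_f]; ring
lemma WE_5_2_0_t (n : ℕ) : W n 5 2 0 true = 0 := by rw [W, WE_4_2_0_t, WE_4_2_1_t, WE_4_3_1_f]; ring
lemma WE_5_2_1_f (n : ℕ) : W n 5 2 1 false = 0 := by rw [W, WE_4_2_1_t, WE_4_3_1_f]; ring
lemma WE_5_2_1_t (n : ℕ) : W n 5 2 1 true = (1) * ((2:ℤ) ^ n) ^ 5 + (-2) * ((2:ℤ) ^ n) ^ 4 + (-232) * ((2:ℤ) ^ n) ^ 3 + (1280) * ((2:ℤ) ^ n) ^ 2 + (4608) * ((2:ℤ) ^ n) + (-24576) := by rw [W, WE_4_2_1_t, WE_4_2_2_t, WE_4_3_2_f]; ring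
lemma WE_5_2_2_f (n : ℕ) : W n 5 2 2 false = (1) * ((2:ℤ) ^ n) ^ 5 + (-240) * ((2:ℤ) ^ n) ^ 3 + (896) * ((2:ℤ) ^ n) ^ 2 + (8192) * ((2:ℤ) ^ n) + (-32768) := by rw [W, WE_4_2_2_t, WE_4_3_2_f]; ring
lemma WE_5_2_2_t (n : ℕ) : W n 5 2 2 true = (4) * ((2:ℤ) ^ n) ^ 4 + (432) * ((2:ℤ) ^ n) ^ 3 + (-7168) * ((2:ℤ) ^ n) ^ 2 + (33792) * ((2:ℤ) ^ n) + (-49152) := by rw [W, WE_4_2_2_t, WE_4_2_3_t, WE_4_3_3_f]; ring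
lemma WE_5_2_3_f (n : ℕ) : W n 5 2 3 false = (480) * ((2:ℤ) ^ n) ^ 3 + (-5376) * ((2:ℤ) ^ n) ^ 2 + (-589824) := by rw [W, WE_4_2_3_t, WE_4_3_3_f]; ring
lemma WE_5_2_3_t (n : ℕ) : W n 5 2 3 true = (64) * ((2:ℤ) ^ n) ^ 3 + (7168) * ((2:ℤ) ^ n) ^ 2 + (-200704) * ((2:ℤ) ^ n) + (-12648448) := by rw [W, WE_4_2_3_t, WE_4_2_4_t, WE_4_3_4_f]; ring
lemma WE_5_2_4_f (n : ℕ) : W n 5 2 4 false = (7168) * ((2:ℤ) ^ n) ^ 2 + (-229376) * ((2:ℤ) ^ n) + (12845056) := by rw [W, WE_4_2_4_t, WE_4_3_4_f]; ring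
lemma WE_5_3_0_t (n : ℕ) : W n 5 3 0 true = (1) * ((2:ℤ) ^ n) ^ 5 + (-1) * ((2:ℤ) ^ n) ^ 4 + (-238) * ((2:ℤ) ^ n) ^ 3 + (664) * ((2:ℤ) ^ n) ^ 2 + (11712) * ((2:ℤ) ^ n) + (-43008) := by rw [W, WE_4_3_0_t, WE_4_3_1_t, WE_4_4_1_f]; ring
lemma WE_5_3_1_f (n : ℕ) : W n 5 3 1 false = (1) * ((2:ℤ) ^ n) ^ 5 + (-240) * ((2:ℤ) ^ n) ^ 3 + (448) * ((2:ℤ) ^ n) ^ 2 + (12800) * ((2:ℤ) ^ n) + (-40960) := by rw [W, WE_4_3_1_t, WE_4_4_1_f]; ring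
lemma WE_5_3_1_t (n : ℕ) : W n 5 3 1 true = (2) * ((2:ℤ) ^ n) ^ 4 + (468) * ((2:ℤ) ^ n) ^ 3 + (-3920) * ((2:ℤ) ^ n) ^ 2 + (-50304) * ((2:ℤ) ^ n) + (405504) := by rw [W, WE_4_3_1_t, WE_4_3_2_t, WE_4_4_2_f]; ring
lemma WE_5_3_2_f (n : ℕ) : W n 5 3 2 false = (480) * ((2:ℤ) ^ n) ^ 3 + (-2688) * ((2:ℤ) ^ n) ^ 2 + (-64512) * ((2:ℤ) ^ n) + (442368) := by rw [W, WE_4_3_2_t, WE_4_4_2_f]; ring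
lemma WE_5_3_2_t (n : ℕ) : W n 5 3 2 true = (16) * ((2:ℤ) ^ n) ^ 3 + (4928) * ((2:ℤ) ^ n) ^ 2 + (-17920) * ((2:ℤ) ^ n) + (-180224) := by rw [W, WE_4_3_2_t, WE_4_3_3_t, WE_4_4_3_f]; ring
lemma WE_5_3_3_f (n : ℕ) : W n 5 3 3 false = (3584) * ((2:ℤ) ^ n) ^ 2 + (28672) * ((2:ℤ) ^ n) + (-458752) := by rw [W, WE_4_3_3_t, WE_4_4_3_f]; ring
lemma WE_5_4_0_t (n : ℕ) : W n 5 4 0 true = (1) * ((2:ℤ) ^ n) ^ 4 + (477) * ((2:ℤ) ^ n) ^ 3 + (-2002) * ((2:ℤ) ^ n) ^ 2 + (-76728) * ((2:ℤ) ^ n) + (345792) := by rw [W, WE_4_4_0_t, WE_4_4_1_t, WE_4_5_1_f]; ring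
lemma WE_5_4_1_f (n : ℕ) : W n 5 4 1 false = (480) * ((2:ℤ) ^ n) ^ 3 + (-1344) * ((2:ℤ) ^ n) ^ 2 + (-80640) * ((2:ℤ) ^ n) + (313344) := by rw [W, WE_4_4_1_t, WE_4_5_1_f]; ring
lemma WE_5_4_1_t (n : ℕ) : W n 5 4 1 true = (4) * ((2:ℤ) ^ n) ^ 3 + (2632) * ((2:ℤ) ^ n) ^ 2 + (78176) * ((2:ℤ) ^ n) + (-1107712) := by rw [W, WE_4_4_1_t, WE_4_4_2_t, WE_4_5_2_f]; ring
lemma WE_5_4_2_f (n : ℕ) : W n 5 4 2 false = (1792) * ((2:ℤ) ^ n) ^ 2 + (93184) * ((2:ℤ) ^ n) + (-1089536) := by rw [W, WE_4_4_2_t, WE_4_5_2_f]; ring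
lemma WE_5_5_0_t (n : ℕ) : W n 5 5 0 true = (1) * ((2:ℤ) ^ n) ^ 3 + (1337) * ((2:ℤ) ^ n) ^ 2 + (105350) * ((2:ℤ) ^ n) + (-736856) := by rw [W, WE_4_5_0_t, WE_4_5_1_t, WE_4_6_1_f]; ring
lemma WE_5_5_1_f (n : ℕ) : W n 5 5 1 false = (896) * ((2:ℤ) ^ n) ^ 2 + (109312) * ((2:ℤ) ^ n) + (-652288) := by rw [W, WE_4_5_1_t, WE_4_6_1_f]; ring
lemma WE_5_6_0_f (n : ℕ) : W n 5 6 0 false = (448) * ((2:ℤ) ^ n) ^ 2 + (113344) * ((2:ℤ) ^ n) + (-339584) := by rw [W, WE_4_6_0_t, WE_4_7_0_f]; ring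
lemma WE_6_0_0_t (n : ℕ) : W n 6 0 0 true = 0 := by rw [W, WE_5_0_0_t, WE_5_0_1_t, WE_5_1_1_f]; ring
lemma WE_6_0_1_t (n : ℕ) : W n 6 0 1 true = 0 := by rw [W, WE_5_0_1_t, WE_5_0_2_t, WE_5_1_2_f]; ring
lemma WE_6_0_2_t (n : ℕ) : W n 6 0 2 true = (1) * ((2:ℤ) ^ n) ^ 6 + (-4) * ((2:ℤ) ^ n) ^ 5 + (-216) * ((2:ℤ) ^ n) ^ 4 + (2368) * ((2:ℤ) ^ n) ^ 3 + (-15872) * ((2:ℤ) ^ n) ^ 2 + (24576) * ((2:ℤ) ^ n) + (78118912) := by rw [W, WE_5_0_2_t, WE_5_0_3_t, WE_5_1_3_f]; ring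
lemma WE_6_0_3_t (n : ℕ) : W n 6 0 3 true = (8) * ((2:ℤ) ^ n) ^ 5 + (304) * ((2:ℤ) ^ n) ^ 4 + (-10112) * ((2:ℤ) ^ n) ^ 3 + (103424) * ((2:ℤ) ^ n) ^ 2 + (26394624) * ((2:ℤ) ^ n) + (-13152288768) := by rw [W, WE_5_0_3_t, WE_5_0_4_t, WE_5_1_4_f]; ring
lemma WE_6_0_4_t (n : ℕ) : W n 6 0 4 true = (256) * ((2:ℤ) ^ n) ^ 4 + (-5632) * ((2:ℤ) ^ n) ^ 3 + (1921024) * ((2:ℤ) ^ n) ^ 2 + (-909836288) * ((2:ℤ) ^ n) + (620945735680) := by rw [W, WE_5_0_4_t, WE_5_0_5_t, WE_5_1_5_f]; ring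
lemma WE_6_1_0_t (n : ℕ) : W n 6 1 0 true = 0 := by rw [W, WE_5_1_0_t, WE_5_1_1_t, WE_5_2_1_f]; ring
lemma WE_6_1_1_f (n : ℕ) : W n 6 1 1 false = 0 := by rw [W, WE_5_1_1_t, WE_5_2_1_f]; ring
lemma WE_6_1_1_t (n : ℕ) : W n 6 1 1 true = (1) * ((2:ℤ) ^ n) ^ 6 + (-2) * ((2:ℤ) ^ n) ^ 5 + (-240) * ((2:ℤ) ^ n) ^ 4 + (1376) * ((2:ℤ) ^ n) ^ 3 + (6400) * ((2:ℤ) ^ n) ^ 2 + (-49152) * ((2:ℤ) ^ n) + (65536) := by rw [W, WE_5_1_1_t, WE_5_1_2_t, WE_5_2_2_f]; ring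
lemma WE_6_1_2_f (n : ℕ) : W n 6 1 2 false = (1) * ((2:ℤ) ^ n) ^ 6 + (-248) * ((2:ℤ) ^ n) ^ 4 + (960) * ((2:ℤ) ^ n) ^ 3 + (10752) * ((2:ℤ) ^ n) ^ 2 + (-73728) * ((2:ℤ) ^ n) + (-524288) := by rw [W, WE_5_1_2_t, WE_5_2_2_f]; ring
lemma WE_6_1_2_t (n : ℕ) : W n 6 1 2 true = (4) * ((2:ℤ) ^ n) ^ 5 + (448) * ((2:ℤ) ^ n) ^ 4 + (-7744) * ((2:ℤ) ^ n) ^ 3 + (37376) * ((2:ℤ) ^ n) ^ 2 + (-688128) * ((2:ℤ) ^ n) + (-77463552) := by rw [W, WE_5_1_2_t, WE_5_1_3_t, WE_5_2_3_f]; ring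
lemma WE_6_1_3_f (n : ℕ) : W n 6 1 3 false = (496) * ((2:ℤ) ^ n) ^ 4 + (-5760) * ((2:ℤ) ^ n) ^ 3 + (-7168) * ((2:ℤ) ^ n) ^ 2 + (-540672) * ((2:ℤ) ^ n) + (78643200) := by rw [W, WE_5_1_3_t, WE_5_2_3_f]; ring
lemma WE_6_1_3_t (n : ℕ) : W n 6 1 3 true = (64) * ((2:ℤ) ^ n) ^ 4 + (7936) * ((2:ℤ) ^ n) ^ 3 + (-272384) * ((2:ℤ) ^ n) ^ 2 + (-262144) * ((2:ℤ) ^ n) + (6511132672) := by rw [W, WE_5_1_3_t, WE_5_1_4_t, WE_5_2_4_f]; ring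
lemma WE_6_1_4_f (n : ℕ) : W n 6 1 4 false = (7680) * ((2:ℤ) ^ n) ^ 3 + (-258048) * ((2:ℤ) ^ n) ^ 2 + (17891328) * ((2:ℤ) ^ n) + (-2101346304) := by rw [W, WE_5_1_4_t, WE_5_2_4_f]; ring
lemma WE_6_2_0_t (n : ℕ) : W n 6 2 0 true = (1) * ((2:ℤ) ^ n) ^ 6 + (-1) * ((2:ℤ) ^ n) ^ 5 + (-246) * ((2:ℤ) ^ n) ^ 4 + (712) * ((2:ℤ) ^ n) ^ 3 + (14848) * ((2:ℤ) ^ n) ^ 2 + (-78336) * ((2:ℤ) ^ n) + (90112) := by rw [W, WE_5_2_0_t, WE_5_2_1_t, WE_5_3_1_f]; ring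
lemma WE_6_2_1_f (n : ℕ) : W n 6 2 1 false = (1) * ((2:ℤ) ^ n) ^ 6 + (-248) * ((2:ℤ) ^ n) ^ 4 + (480) * ((2:ℤ) ^ n) ^ 3 + (16128) * ((2:ℤ) ^ n) ^ 2 + (-73728) * ((2:ℤ) ^ n) + (65536) := by rw [W, WE_5_2_1_t, WE_5_3_1_f]; ring
lemma WE_6_2_1_t (n : ℕ) : W n 6 2 1 true = (2) * ((2:ℤ) ^ n) ^ 5 + (484) * ((2:ℤ) ^ n) ^ 4 + (-4208) * ((2:ℤ) ^ n) ^ 3 + (-65536) * ((2:ℤ) ^ n) ^ 2 + (777216) * ((2:ℤ) ^ n) + (-1916928) := by rw [W, WE_5_2_1_t, WE_5_2_2_t, WE_5_3_2_f]; ring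
lemma WE_6_2_2_f (n : ℕ) : W n 6 2 2 false = (496) * ((2:ℤ) ^ n) ^ 4 + (-2880) * ((2:ℤ) ^ n) ^ 3 + (-82432) * ((2:ℤ) ^ n) ^ 2 + (835584) * ((2:ℤ) ^ n) + (-1966080) := by rw [W, WE_5_2_2_t, WE_5_3_2_f]; ring
lemma WE_6_2_2_t (n : ℕ) : W n 6 2 2 true = (16) * ((2:ℤ) ^ n) ^ 4 + (5312) * ((2:ℤ) ^ n) ^ 3 + (-14336) * ((2:ℤ) ^ n) ^ 2 + (-438272) * ((2:ℤ) ^ n) + (1638400) := by rw [W, WE_5_2_2_t, WE_5_2_3_t, WE_5_3_3_f]; ring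
lemma WE_6_2_3_f (n : ℕ) : W n 6 2 3 false = (3840) * ((2:ℤ) ^ n) ^ 3 + (43008) * ((2:ℤ) ^ n) ^ 2 + (-1376256) * ((2:ℤ) ^ n) + (-48758784) := by rw [W, WE_5_2_3_t, WE_5_3_3_f]; ring
lemma WE_6_3_0_t (n : ℕ) : W n 6 3 0 true = (1) * ((2:ℤ) ^ n) ^ 5 + (493) * ((2:ℤ) ^ n) ^ 4 + (-2146) * ((2:ℤ) ^ n) ^ 3 + (-96664) * ((2:ℤ) ^ n) ^ 2 + (618048) * ((2:ℤ) ^ n) + (288768) := by rw [W, WE_5_3_0_t, WE_5_3_1_t, WE_5_4_1_f]; ring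
lemma WE_6_3_1_f (n : ℕ) : W n 6 3 1 false = (496) * ((2:ℤ) ^ n) ^ 4 + (-1440) * ((2:ℤ) ^ n) ^ 3 + (-101248) * ((2:ℤ) ^ n) ^ 2 + (556032) * ((2:ℤ) ^ n) + (737280) := by rw [W, WE_5_3_1_t, WE_5_4_1_f]; ring
lemma WE_6_3_1_t (n : ℕ) : W n 6 3 1 true = (4) * ((2:ℤ) ^ n) ^ 4 + (2824) * ((2:ℤ) ^ n) ^ 3 + (100576) * ((2:ℤ) ^ n) ^ 2 + (-2043136) * ((2:ℤ) ^ n) + (8445952) := by rw [W, WE_5_3_1_t, WE_5_3_2_t, WE_5_4_2_f]; ring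
lemma WE_6_3_2_f (n : ℕ) : W n 6 3 2 false = (1920) * ((2:ℤ) ^ n) ^ 3 + (118272) * ((2:ℤ) ^ n) ^ 2 + (-1978368) * ((2:ℤ) ^ n) + (7274496) := by rw [W, WE_5_3_2_t, WE_5_4_2_f]; ring
lemma WE_6_4_0_t (n : ℕ) : W n 6 4 0 true = (1) * ((2:ℤ) ^ n) ^ 4 + (1433) * ((2:ℤ) ^ n) ^ 3 + (132454) * ((2:ℤ) ^ n) ^ 2 + (-1305368) * ((2:ℤ) ^ n) + (-5833280) := by rw [W, WE_5_4_0_t, WE_5_4_1_t, WE_5_5_1_f]; ring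
lemma WE_6_4_1_f (n : ℕ) : W n 6 4 1 false = (960) * ((2:ℤ) ^ n) ^ 3 + (137088) * ((2:ℤ) ^ n) ^ 2 + (-1150464) * ((2:ℤ) ^ n) + (-7286784) := by rw [W, WE_5_4_1_t, WE_5_5_1_f]; ring
lemma WE_6_5_0_f (n : ℕ) : W n 6 5 0 false = (480) * ((2:ℤ) ^ n) ^ 3 + (141792) * ((2:ℤ) ^ n) ^ 2 + (-595392) * ((2:ℤ) ^ n) + (-12712704) := by rw [W, WE_5_5_0_t, WE_5_6_0_f]; ring
lemma WE_7_0_0_t (n : ℕ) : W n 7 0 0 true = 0 := by rw [W, WE_6_0_0_t, WE_6_0_1_t, WE_6_1_1_f]; ring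
lemma WE_7_0_1_t (n : ℕ) : W n 7 0 1 true = (1) * ((2:ℤ) ^ n) ^ 7 + (-2) * ((2:ℤ) ^ n) ^ 6 + (-244) * ((2:ℤ) ^ n) ^ 5 + (1424) * ((2:ℤ) ^ n) ^ 4 + (7424) * ((2:ℤ) ^ n) ^ 3 + (-68608) * ((2:ℤ) ^ n) ^ 2 + (-475136) * ((2:ℤ) ^ n) + (-77594624) := by rw [W, WE_6_0_1_t, WE_6_0_2_t, WE_6_1_2_f]; ring
lemma WE_7_0_2_t (n : ℕ) : W n 7 0 2 true = (4) * ((2:ℤ) ^ n) ^ 6 + (456) * ((2:ℤ) ^ n) ^ 5 + (-8032) * ((2:ℤ) ^ n) ^ 4 + (38400) * ((2:ℤ) ^ n) ^ 3 + (-907264) * ((2:ℤ) ^ n) ^ 2 + (98304) * ((2:ℤ) ^ n) + (39690698752) := by rw [W, WE_6_0_2_t, WE_6_0_3_t, WE_6_1_3_f]; ring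
lemma WE_7_0_3_t (n : ℕ) : W n 7 0 3 true = (64) * ((2:ℤ) ^ n) ^ 5 + (8320) * ((2:ℤ) ^ n) ^ 4 + (-307200) * ((2:ℤ) ^ n) ^ 3 + (5529600) * ((2:ℤ) ^ n) ^ 2 + (4460773376) * ((2:ℤ) ^ n) + (-4449737113600) := by rw [W, WE_6_0_3_t, WE_6_0_4_t, WE_6_1_4_f]; ring
lemma WE_7_1_0_t (n : ℕ) : W n 7 1 0 true = (1) * ((2:ℤ) ^ n) ^ 7 + (-1) * ((2:ℤ) ^ n) ^ 6 + (-250) * ((2:ℤ) ^ n) ^ 5 + (736) * ((2:ℤ) ^ n) ^ 4 + (16544) * ((2:ℤ) ^ n) ^ 3 + (-99584) * ((2:ℤ) ^ n) ^ 2 + (163840) * ((2:ℤ) ^ n) + (-65536) := by rw [W, WE_6_1_0_t, WE_6_1_1_t, WE_6_2_1_f]; ring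
lemma WE_7_1_1_f (n : ℕ) : W n 7 1 1 false = (1) * ((2:ℤ) ^ n) ^ 7 + (-252) * ((2:ℤ) ^ n) ^ 5 + (496) * ((2:ℤ) ^ n) ^ 4 + (17920) * ((2:ℤ) ^ n) ^ 3 + (-93184) * ((2:ℤ) ^ n) ^ 2 + (114688) * ((2:ℤ) ^ n) := by rw [W, WE_6_1_1_t, WE_6_2_1_f]; ring
lemma WE_7_1_1_t (n : ℕ) : W n 7 1 1 true = (2) * ((2:ℤ) ^ n) ^ 6 + (492) * ((2:ℤ) ^ n) ^ 5 + (-4352) * ((2:ℤ) ^ n) ^ 4 + (-73920) * ((2:ℤ) ^ n) ^ 3 + (1013248) * ((2:ℤ) ^ n) ^ 2 + (-3735552) * ((2:ℤ) ^ n) + (4063232) := by rw [W, WE_6_1_1_t, WE_6_1_2_t, WE_6_2_2_f]; ring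
lemma WE_7_1_2_f (n : ℕ) : W n 7 1 2 false = (504) * ((2:ℤ) ^ n) ^ 5 + (-2976) * ((2:ℤ) ^ n) ^ 4 + (-92160) * ((2:ℤ) ^ n) ^ 3 + (1075200) * ((2:ℤ) ^ n) ^ 2 + (-5013504) * ((2:ℤ) ^ n) + (-150994944) := by rw [W, WE_6_1_2_t, WE_6_2_2_f]; ring
lemma WE_7_1_2_t (n : ℕ) : W n 7 1 2 true = (16) * ((2:ℤ) ^ n) ^ 5 + (5504) * ((2:ℤ) ^ n) ^ 4 + (-11520) * ((2:ℤ) ^ n) ^ 3 + (-768000) * ((2:ℤ) ^ n) ^ 2 + (-48234496) * ((2:ℤ) ^ n) + (-13234601984) := by rw [W, WE_6_1_2_t, WE_6_1_3_t, WE_6_2_3_f]; ring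
lemma WE_7_1_3_f (n : ℕ) : W n 7 1 3 false = (3968) * ((2:ℤ) ^ n) ^ 4 + (51200) * ((2:ℤ) ^ n) ^ 3 + (-2007040) * ((2:ℤ) ^ n) ^ 2 + (-46530560) * ((2:ℤ) ^ n) + (13119782912) := by rw [W, WE_6_1_3_t, WE_6_2_3_f]; ring
lemma WE_7_2_0_t (n : ℕ) : W n 7 2 0 true = (1) * ((2:ℤ) ^ n) ^ 6 + (501) * ((2:ℤ) ^ n) ^ 5 + (-2218) * ((2:ℤ) ^ n) ^ 4 + (-107400) * ((2:ℤ) ^ n) ^ 3 + (779264) * ((2:ℤ) ^ n) ^ 2 + (766464) * ((2:ℤ) ^ n) + (-8609792) := by rw [W, WE_6_2_0_t, WE_6_2_1_t, WE_6_3_1_f]; ring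
lemma WE_7_2_1_f (n : ℕ) : W n 7 2 1 false = (504) * ((2:ℤ) ^ n) ^ 5 + (-1488) * ((2:ℤ) ^ n) ^ 4 + (-112320) * ((2:ℤ) ^ n) ^ 3 + (698880) * ((2:ℤ) ^ n) ^ 2 + (1622016) * ((2:ℤ) ^ n) + (-10616832) := by rw [W, WE_6_2_1_t, WE_6_3_1_f]; ring
lemma WE_7_2_1_t (n : ℕ) : W n 7 2 1 true = (4) * ((2:ℤ) ^ n) ^ 5 + (2920) * ((2:ℤ) ^ n) ^ 4 + (112800) * ((2:ℤ) ^ n) ^ 3 + (-2611200) * ((2:ℤ) ^ n) ^ 2 + (15865856) * ((2:ℤ) ^ n) + (-29655040) := by rw [W, WE_6_2_1_t, WE_6_2_2_t, WE_6_3_2_f]; ring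
lemma WE_7_2_2_f (n : ℕ) : W n 7 2 2 false = (1984) * ((2:ℤ) ^ n) ^ 4 + (131840) * ((2:ℤ) ^ n) ^ 3 + (-2508800) * ((2:ℤ) ^ n) ^ 2 + (13434880) * ((2:ℤ) ^ n) + (-22544384) := by rw [W, WE_6_2_2_t, WE_6_3_2_f]; ring
lemma WE_7_3_0_t (n : ℕ) : W n 7 3 0 true = (1) * ((2:ℤ) ^ n) ^ 5 + (1481) * ((2:ℤ) ^ n) ^ 4 + (147030) * ((2:ℤ) ^ n) ^ 3 + (-1639800) * ((2:ℤ) ^ n) ^ 2 + (-11766976) * ((2:ℤ) ^ n) + (117704704) := by rw [W, WE_6_3_0_t, WE_6_3_1_t, WE_6_4_1_f]; ring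
lemma WE_7_3_1_f (n : ℕ) : W n 7 3 1 false = (992) * ((2:ℤ) ^ n) ^ 4 + (152000) * ((2:ℤ) ^ n) ^ 3 + (-1442560) * ((2:ℤ) ^ n) ^ 2 + (-14428160) * ((2:ℤ) ^ n) + (125861888) := by rw [W, WE_6_3_1_t, WE_6_4_1_f]; ring
lemma WE_7_4_0_f (n : ℕ) : W n 7 4 0 false = (496) * ((2:ℤ) ^ n) ^ 4 + (157040) * ((2:ℤ) ^ n) ^ 3 + (-744800) * ((2:ℤ) ^ n) ^ 2 + (-24072320) * ((2:ℤ) ^ n) + (110070784) := by rw [W, WE_6_4_0_t, WE_6_5_0_f]; ring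
lemma WE_8_0_0_t (n : ℕ) : W n 8 0 0 true = (1) * ((2:ℤ) ^ n) ^ 8 + (-1) * ((2:ℤ) ^ n) ^ 7 + (-252) * ((2:ℤ) ^ n) ^ 6 + (748) * ((2:ℤ) ^ n) ^ 5 + (17424) * ((2:ℤ) ^ n) ^ 4 + (-111104) * ((2:ℤ) ^ n) ^ 3 + (207872) * ((2:ℤ) ^ n) ^ 2 + (-114688) * ((2:ℤ) ^ n) := by rw [W, WE_7_0_0_t, WE_7_0_1_t, WE_7_1_1_f]; ring
lemma WE_8_0_1_t (n : ℕ) : W n 8 0 1 true = (2) * ((2:ℤ) ^ n) ^ 7 + (496) * ((2:ℤ) ^ n) ^ 6 + (-4424) * ((2:ℤ) ^ n) ^ 5 + (-78304) * ((2:ℤ) ^ n) ^ 4 + (1143808) * ((2:ℤ) ^ n) ^ 3 + (-5318656) * ((2:ℤ) ^ n) ^ 2 + (-147030016) * ((2:ℤ) ^ n) + (-39694893056) := by rw [W, WE_7_0_1_t, WE_7_0_2_t, WE_7_1_2_f]; ring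
lemma WE_8_0_2_t (n : ℕ) : W n 8 0 2 true = (16) * ((2:ℤ) ^ n) ^ 6 + (5600) * ((2:ℤ) ^ n) ^ 5 + (-9856) * ((2:ℤ) ^ n) ^ 4 + (-983040) * ((2:ℤ) ^ n) ^ 3 + (-64741376) * ((2:ℤ) ^ n) ^ 2 + (-215613440) * ((2:ℤ) ^ n) + (13494854352896) := by rw [W, WE_7_0_2_t, WE_7_0_3_t, WE_7_1_3_f]; ring
lemma WE_8_1_0_t (n : ℕ) : W n 8 1 0 true = (1) * ((2:ℤ) ^ n) ^ 7 + (505) * ((2:ℤ) ^ n) ^ 6 + (-2254) * ((2:ℤ) ^ n) ^ 5 + (-112960) * ((2:ℤ) ^ n) ^ 4 + (866144) * ((2:ℤ) ^ n) ^ 3 + (1137920) * ((2:ℤ) ^ n) ^ 2 + (-17432576) * ((2:ℤ) ^ n) + (25231360) := by rw [W, WE_7_1_0_t, WE_7_1_1_t, WE_7_2_1_f]; ring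
lemma WE_8_1_1_f (n : ℕ) : W n 8 1 1 false = (508) * ((2:ℤ) ^ n) ^ 6 + (-1512) * ((2:ℤ) ^ n) ^ 5 + (-118048) * ((2:ℤ) ^ n) ^ 4 + (775680) * ((2:ℤ) ^ n) ^ 3 + (2250752) * ((2:ℤ) ^ n) ^ 2 + (-21331968) * ((2:ℤ) ^ n) + (29360128) := by rw [W, WE_7_1_1_t, WE_7_2_1_f]; ring
lemma WE_8_1_1_t (n : ℕ) : W n 8 1 1 true = (4) * ((2:ℤ) ^ n) ^ 6 + (2968) * ((2:ℤ) ^ n) ^ 5 + (119168) * ((2:ℤ) ^ n) ^ 4 + (-2920320) * ((2:ℤ) ^ n) ^ 3 + (20478976) * ((2:ℤ) ^ n) ^ 2 + (-56885248) * ((2:ℤ) ^ n) + (53215232) := by rw [W, WE_7_1_1_t, WE_7_1_2_t, WE_7_2_2_f]; ring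
lemma WE_8_1_2_f (n : ℕ) : W n 8 1 2 false = (2016) * ((2:ℤ) ^ n) ^ 5 + (138880) * ((2:ℤ) ^ n) ^ 4 + (-2795520) * ((2:ℤ) ^ n) ^ 3 + (16916480) * ((2:ℤ) ^ n) ^ 2 + (-145883136) * ((2:ℤ) ^ n) + (-26424115200) := by rw [W, WE_7_1_2_t, WE_7_2_2_f]; ring
lemma WE_8_2_0_t (n : ℕ) : W n 8 2 0 true = (1) * ((2:ℤ) ^ n) ^ 6 + (1505) * ((2:ℤ) ^ n) ^ 5 + (154574) * ((2:ℤ) ^ n) ^ 4 + (-1819560) * ((2:ℤ) ^ n) ^ 3 + (-15712256) * ((2:ℤ) ^ n) ^ 2 + (231938560) * ((2:ℤ) ^ n) + (-601022464) := by rw [W, WE_7_2_0_t, WE_7_2_1_t, WE_7_3_1_f]; ring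
lemma WE_8_2_1_f (n : ℕ) : W n 8 2 1 false = (1008) * ((2:ℤ) ^ n) ^ 5 + (159712) * ((2:ℤ) ^ n) ^ 4 + (-1599360) * ((2:ℤ) ^ n) ^ 3 + (-19102720) * ((2:ℤ) ^ n) ^ 2 + (247037952) * ((2:ℤ) ^ n) + (-622067712) := by rw [W, WE_7_2_1_t, WE_7_3_1_f]; ring
lemma WE_8_3_0_f (n : ℕ) : W n 8 3 0 false = (504) * ((2:ℤ) ^ n) ^ 5 + (164920) * ((2:ℤ) ^ n) ^ 4 + (-824880) * ((2:ℤ) ^ n) ^ 3 + (-31232320) * ((2:ℤ) ^ n) ^ 2 + (208513536) * ((2:ℤ) ^ n) + (61071360) := by rw [W, WE_7_3_0_t, WE_7_4_0_f]; ring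
lemma WE_9_0_0_t (n : ℕ) : W n 9 0 0 true = (1) * ((2:ℤ) ^ n) ^ 8 + (507) * ((2:ℤ) ^ n) ^ 7 + (-2272) * ((2:ℤ) ^ n) ^ 6 + (-115788) * ((2:ℤ) ^ n) ^ 5 + (911152) * ((2:ℤ) ^ n) ^ 4 + (1363968) * ((2:ℤ) ^ n) ^ 3 + (-23374848) * ((2:ℤ) ^ n) ^ 2 + (50577408) * ((2:ℤ) ^ n) + (-29360128) := by rw [W, WE_8_0_0_t, WE_8_0_1_t, WE_8_1_1_f]; ring
lemma WE_9_0_1_t (n : ℕ) : W n 9 0 1 true = (4) * ((2:ℤ) ^ n) ^ 7 + (2992) * ((2:ℤ) ^ n) ^ 6 + (122416) * ((2:ℤ) ^ n) ^ 5 + (-3081152) * ((2:ℤ) ^ n) ^ 4 + (22982656) * ((2:ℤ) ^ n) ^ 3 + (-108695552) * ((2:ℤ) ^ n) ^ 2 + (-26356678656) * ((2:ℤ) ^ n) + (-13547820023808) := by rw [W, WE_8_0_1_t, WE_8_0_2_t, WE_8_1_2_f]; ring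
lemma WE_9_1_0_t (n : ℕ) : W n 9 1 0 true = (1) * ((2:ℤ) ^ n) ^ 7 + (1517) * ((2:ℤ) ^ n) ^ 6 + (158410) * ((2:ℤ) ^ n) ^ 5 + (-1912576) * ((2:ℤ) ^ n) ^ 4 + (-17958176) * ((2:ℤ) ^ n) ^ 3 + (306860288) * ((2:ℤ) ^ n) ^ 2 + (-1190461440) * ((2:ℤ) ^ n) + (1322582016) := by rw [W, WE_8_1_0_t, WE_8_1_1_t, WE_8_2_1_f]; ring
lemma WE_9_1_1_f (n : ℕ) : W n 9 1 1 false = (1016) * ((2:ℤ) ^ n) ^ 6 + (163632) * ((2:ℤ) ^ n) ^ 5 + (-1680448) * ((2:ℤ) ^ n) ^ 4 + (-21744640) * ((2:ℤ) ^ n) ^ 3 + (326201344) * ((2:ℤ) ^ n) ^ 2 + (-1229914112) * ((2:ℤ) ^ n) + (1350565888) := by rw [W, WE_8_1_1_t, WE_8_2_1_f]; ring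
lemma WE_9_2_0_f (n : ℕ) : W n 9 2 0 false = (508) * ((2:ℤ) ^ n) ^ 6 + (168924) * ((2:ℤ) ^ n) ^ 5 + (-866264) * ((2:ℤ) ^ n) ^ 4 + (-35211040) * ((2:ℤ) ^ n) ^ 3 + (270593792) * ((2:ℤ) ^ n) ^ 2 + (154771456) * ((2:ℤ) ^ n) + (-2648375296) := by rw [W, WE_8_2_0_t, WE_8_3_0_f]; ring
lemma WE_10_0_0_t (n : ℕ) : W n 10 0 0 true = (1) * ((2:ℤ) ^ n) ^ 8 + (1523) * ((2:ℤ) ^ n) ^ 7 + (160344) * ((2:ℤ) ^ n) ^ 6 + (-1959868) * ((2:ℤ) ^ n) ^ 5 + (-19153040) * ((2:ℤ) ^ n) ^ 4 + (349309952) * ((2:ℤ) ^ n) ^ 3 + (-1579490304) * ((2:ℤ) ^ n) ^ 2 + (2631057408) * ((2:ℤ) ^ n) + (-1379926016) := by rw [W, WE_9_0_0_t, WE_9_0_1_t, WE_9_1_1_f]; ring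
lemma WE_10_1_0_f (n : ℕ) : W n 10 1 0 false = (510) * ((2:ℤ) ^ n) ^ 7 + (170942) * ((2:ℤ) ^ n) ^ 6 + (-887292) * ((2:ℤ) ^ n) ^ 5 + (-37303664) * ((2:ℤ) ^ n) ^ 4 + (305099520) * ((2:ℤ) ^ n) ^ 3 + (227304448) * ((2:ℤ) ^ n) ^ 2 + (-5338841088) * ((2:ℤ) ^ n) + (7941914624) := by rw [W, WE_9_1_0_t, WE_9_2_0_f]; ring


lemma gamma_eq (n : ℕ) :
    Gamma n 10 8 = Nat.card {u : Fin 11 → V n // finrank F2 (P u) = 8} := by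
  unfold Gamma
  apply Nat.card_congr
  refine Equiv.subtypeEquiv (Equiv.piComm fun (_ : Fin n) (_ : Fin 11) => F2) ?_
  intro α
  rw [rank_eq α]
  rfl

end Pers

theorem stmt15 (n : ℕ) (hn : 4 ≤ n) :
    (Gamma n 10 8 : ℤ) =
      511 * 2 ^ (8 * n) + 171955 * 2 ^ (7 * n) - 897890 * 2 ^ (6 * n)
        - 38376240 * 2 ^ (5 * n) + 323250144 * 2 ^ (4 * n) + 271514880 * 2 ^ (3 * n)
        - 436135 * 2 ^ 14 * 2 ^ (2 * n) + 242795 * 2 ^ 16 * 2 ^ n - 4445 * 2 ^ 21 := by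
  rw [Pers.gamma_eq n, Pers.count_eq_sum, Pers.chain_full,
    Pers.WE_10_0_0_t, Pers.WE_10_1_0_f]
  ring
end
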